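/- arXiv:2401.13384 — 9 statements merged into one kernel-verified Lean document; each statement's English description precedes it below -/
import Mathlib

section
/- Let H > 1 and let x : [1,H] → ℝ be non-decreasing and p : [1,H] → ℝ be Lebesgue integrable on [1,H]. Then the following two conditions are equivalent: (i) for all s, t with 1 ≤ s ≤ t ≤ H, p(t) − p(s) = t·x(t) − s·x(s) − ∫_s^t x(z) dz; (ii) for all s, t with 1 ≤ s ≤ t ≤ H, x(t) = p(t)/t + ∫_s^t p(z)/z² dz + x(s) − p(s)/s. -/
open MeasureTheory intervalIntegral



noncomputable def inv1 : ℝ → ℝ := fun z => (max z 1)⁻¹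
noncomputable def inv2 : ℝ → ℝ := fun z => ((max z 1) ^ 2)⁻¹

lemma max_pos' (z : ℝ) : (0:ℝ) < max z 1 := lt_of_lt_of_le one_pos (le_max_right _ _)

lemma cont1 : Continuous inv1 :=
  (continuous_id.max continuous_const).inv₀ fun z => (max_pos' z).ne'

lemma cont2 : Continuous inv2 :=
  ((continuous_id.max continuous_const).pow 2).inv₀ fun z => (pow_pos (max_pos' z) 2).ne'

lemma bnd1 : ∀ z : ℝ, ‖inv1 z‖ ≤ 1 := by
  intro z
  have h1 : (1:ℝ) ≤ max z 1 := le_max_right _ _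
  rw [inv1, Real.norm_eq_abs, abs_of_nonneg (inv_nonneg.2 (max_pos' z).le)]
  exact inv_le_one_of_one_le₀ h1

lemma bnd2 : ∀ z : ℝ, ‖inv2 z‖ ≤ 1 := by
  intro z
  have h1 : (1:ℝ) ≤ max z 1 := le_max_right _ _
  rw [inv2, Real.norm_eq_abs, abs_of_nonneg (inv_nonneg.2 (pow_pos (max_pos' z) 2).le)]
  refine inv_le_one_of_one_le₀ (by nlinarith)

lemma eq1 {z : ℝ} (hz : 1 ≤ z) : inv1 z = z⁻¹ := by
  simp [inv1, max_eq_left hz]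

lemma eq2 {z : ℝ} (hz : 1 ≤ z) : inv2 z = (z ^ 2)⁻¹ := by
  simp [inv2, max_eq_left hz]

theorem swap_tri (a b : ℝ) (f g : ℝ → ℝ) (hf : IntegrableOn f (Set.Ioc a b))
    (hg : Continuous g) (C : ℝ) (hgb : ∀ z, ‖g z‖ ≤ C) :
    ∫ z in Set.Ioc a b, (∫ u in Set.Ioc a z, f u) * g z
      = ∫ u in Set.Ioc a b, f u * ∫ z in Set.Ioc u b, g z := by
  set μ := (volume : Measure ℝ).restrict (Set.Ioc a b) with hμ
  have hC0 : 0 ≤ C := le_trans (norm_nonneg _) (hgb 0)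
  set h : ℝ × ℝ → ℝ := fun q => if q.2 ≤ q.1 then f q.2 * g q.1 else 0 with hh
  have hfm : AEStronglyMeasurable f μ := hf.aestronglyMeasurable
  have hmeas : AEStronglyMeasurable h (μ.prod μ) := by
    have heq : h = Set.indicator {q : ℝ × ℝ | q.2 ≤ q.1} (fun q => f q.2 * g q.1) := by
      funext q; simp [hh, Set.indicator_apply, Set.mem_setOf_eq]
    rw [heq]
    exact (hfm.comp_snd.mul ((hg.comp continuous_fst).aestronglyMeasurable)).indicator
      (measurableSet_le measurable_snd measurable_fst)
  have hslice : ∀ z : ℝ, Integrable (fun u => h (z, u)) μ := by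
    intro z
    have heq : (fun u => h (z, u)) = fun u => (Set.Iic z).indicator f u * g z := by
      funext u; simp [hh, Set.indicator_apply, Set.mem_Iic]
    rw [heq]
    exact (hf.indicator measurableSet_Iic).mul_const _
  have hint : Integrable h (μ.prod μ) := by
    rw [integrable_prod_iff hmeas]
    refine ⟨Filter.Eventually.of_forall hslice, ?_⟩
    have hb : ∀ z, ∫ u, ‖h (z, u)‖ ∂μ ≤ C * ∫ u, ‖f u‖ ∂μ := by
      intro z
      rw [← MeasureTheory.integral_const_mul]
      refine integral_mono (hslice z).norm (hf.norm.const_mul C) ?_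
      intro u
      simp only [hh]
      by_cases hu : u ≤ z
      · simp only [hu, if_true, norm_mul]
        calc ‖f u‖ * ‖g z‖ ≤ ‖f u‖ * C := by gcongr; exact hgb z
          _ = C * ‖f u‖ := mul_comm _ _
      · simp only [hu, if_false, norm_zero]
        positivity
    have hcint : Integrable (fun _ : ℝ => C * ∫ u, ‖f u‖ ∂μ) μ :=
      (integrableOn_const measure_Ioc_lt_top.ne : IntegrableOn _ _ _)
    refine Integrable.mono' hcint hmeas.norm.integral_prod_right'
      (Filter.Eventually.of_forall fun z => ?_)
    rw [Real.norm_of_nonneg (integral_nonneg fun u => norm_nonneg _)]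
    exact hb z
  have hswap : ∫ z, (∫ u, h (z, u) ∂μ) ∂μ = ∫ u, (∫ z, h (z, u) ∂μ) ∂μ :=
    integral_integral_swap hint
  calc ∫ z in Set.Ioc a b, (∫ u in Set.Ioc a z, f u) * g z
      = ∫ z, (∫ u, h (z, u) ∂μ) ∂μ := by
        refine (setIntegral_congr_fun measurableSet_Ioc fun z hz => ?_).symm
        have heq : (fun u => h (z, u)) = fun u => (Set.Iic z).indicator f u * g z := by
          funext u; simp [hh, Set.indicator_apply, Set.mem_Iic]
        rw [heq, MeasureTheory.integral_mul_const, hμ, MeasureTheory.integral_indicator measurableSet_Iic,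
          Measure.restrict_restrict measurableSet_Iic]
        have hset : Set.Iic z ∩ Set.Ioc a b = Set.Ioc a z := by
          ext w
          simp only [Set.mem_inter_iff, Set.mem_Iic, Set.mem_Ioc]
          exact ⟨fun ⟨h1, h2, _⟩ => ⟨h2, h1⟩, fun ⟨h1, h2⟩ => ⟨h2, h1, h2.trans hz.2⟩⟩
        rw [hset]
    _ = ∫ u, (∫ z, h (z, u) ∂μ) ∂μ := hswap
    _ = ∫ u in Set.Ioc a b, f u * ∫ z in Set.Ioc u b, g z := by
        refine setIntegral_congr_fun measurableSet_Ioc fun u hu => ?_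
        have heq : (fun z => h (z, u)) = fun z => (Set.Ici u).indicator (fun z => f u * g z) z := by
          funext z; simp [hh, Set.indicator_apply, Set.mem_Ici]
        rw [heq, hμ, MeasureTheory.integral_indicator measurableSet_Ici,
          Measure.restrict_restrict measurableSet_Ici]
        have hset : Set.Ici u ∩ Set.Ioc a b = Set.Icc u b := by
          ext w
          simp only [Set.mem_inter_iff, Set.mem_Ici, Set.mem_Ioc, Set.mem_Icc]
          exact ⟨fun ⟨h1, _, h3⟩ => ⟨h1, h3⟩, fun ⟨h1, h2⟩ => ⟨h1, lt_of_lt_of_le hu.1 h1, h2⟩⟩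
        rw [hset, integral_Icc_eq_integral_Ioc, MeasureTheory.integral_const_mul]


lemma int_inv2 (u t : ℝ) (hu : 1 ≤ u) (hut : u ≤ t) :
    ∫ z in Set.Ioc u t, inv2 z = u⁻¹ - t⁻¹ := by
  rw [← intervalIntegral.integral_of_le hut]
  have huIcc : Set.uIcc u t = Set.Icc u t := Set.uIcc_of_le hut
  have hco : Set.EqOn inv2 (fun z => (z ^ 2)⁻¹) (Set.uIcc u t) := by
    intro z hz
    rw [huIcc] at hz
    exact eq2 (hu.trans hz.1)
  rw [intervalIntegral.integral_congr hco]
  have hpos : ∀ z ∈ Set.uIcc u t, z ≠ 0 := by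
    intro z hz
    rw [huIcc] at hz
    exact (lt_of_lt_of_le one_pos (hu.trans hz.1)).ne'
  have hderiv : ∀ z ∈ Set.uIcc u t, HasDerivAt (fun y : ℝ => -y⁻¹) ((z ^ 2)⁻¹) z := by
    intro z hz
    simpa [Pi.neg_def] using (hasDerivAt_inv (hpos z hz)).neg
  have hci : IntervalIntegrable (fun z : ℝ => (z ^ 2)⁻¹) volume u t := by
    refine (ContinuousOn.inv₀ (continuous_pow 2).continuousOn ?_).intervalIntegrable
    exact fun z hz => pow_ne_zero _ (hpos z hz)
  rw [intervalIntegral.integral_eq_sub_of_hasDerivAt hderiv hci]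
  ring

lemma int_one (u t : ℝ) (hut : u ≤ t) : ∫ _ in Set.Ioc u t, (1:ℝ) = t - u := by
  simp [Real.volume_Ioc, ENNReal.toReal_ofReal (sub_nonneg.2 hut), hut]

/-- Equivalence of Myerson's payment identity and its alternative form
(Lemma 2 of the paper), for a non-decreasing allocation rule `x` and an
integrable payment rule `p` on `[1, H]`. -/
theorem myerson_alternative (H : ℝ) (hH : 1 < H) (x p : ℝ → ℝ)
    (hx : MonotoneOn x (Set.Icc 1 H))
    (hp : IntegrableOn p (Set.Icc 1 H)) :
    (∀ s t : ℝ, 1 ≤ s → s ≤ t → t ≤ H →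
      p t - p s = t * x t - s * x s - ∫ z in s..t, x z) ↔
    (∀ s t : ℝ, 1 ≤ s → s ≤ t → t ≤ H →
      x t = p t / t + (∫ z in s..t, p z / z ^ 2) + x s - p s / s) := by
  have hxint : IntegrableOn x (Set.Icc 1 H) := hx.integrableOn_isCompact isCompact_Icc
  constructor
  · intro hi s t hs hst htH
    have ht1 : (1:ℝ) ≤ t := hs.trans hst
    have hs0 : (0:ℝ) < s := lt_of_lt_of_le one_pos hs
    have ht0 : (0:ℝ) < t := lt_of_lt_of_le one_pos ht1
    have hsub : Set.Ioc s t ⊆ Set.Icc 1 H := fun z hz => ⟨hs.trans hz.1.le, hz.2.trans htH⟩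
    have hsubIcc : Set.Icc s t ⊆ Set.Icc 1 H := fun z hz => ⟨hs.trans hz.1, hz.2.trans htH⟩
    have hxi : IntegrableOn x (Set.Ioc s t) := hxint.mono_set hsub
    set F : ℝ → ℝ := fun z => ∫ u in Set.Ioc s z, x u with hF
    have hFc : ContinuousOn F (Set.Icc s t) := continuousOn_primitive (hxint.mono_set hsubIcc)
    set c : ℝ := s * x s - p s with hc
    have hpz : ∀ z, s ≤ z → z ≤ t → p z = z * x z - c - F z := by
      intro z h1 h2
      have h3 := hi s z hs h1 (h2.trans htH)
      rw [intervalIntegral.integral_of_le h1] at h3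
      have h4 : p z - p s = z * x z - s * x s - F z := h3
      rw [hc]
      linarith
    have hxinv1 : Integrable (fun z => inv1 z * x z) (volume.restrict (Set.Ioc s t)) :=
      Integrable.bdd_mul hxi cont1.aestronglyMeasurable (Filter.Eventually.of_forall bnd1)
    have hcinv2 : Integrable (fun z => c * inv2 z) (volume.restrict (Set.Ioc s t)) :=
      (continuous_const.mul cont2).integrableOn_Ioc
    have hFinv2 : Integrable (fun z => inv2 z * F z) (volume.restrict (Set.Ioc s t)) := by
      have hco : ContinuousOn (fun z => inv2 z * F z) (Set.Icc s t) :=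
        cont2.continuousOn.mul hFc
      exact hco.integrableOn_Icc.mono_set Set.Ioc_subset_Icc_self
    have hFt : F t = ∫ u in Set.Ioc s t, x u := rfl
    have key : ∫ z in s..t, p z / z ^ 2 = c * (t⁻¹ - s⁻¹) + t⁻¹ * F t := by
      rw [intervalIntegral.integral_of_le hst]
      have e1 : Set.EqOn (fun z => p z / z ^ 2)
          (fun z => (inv1 z * x z - c * inv2 z) - inv2 z * F z) (Set.Ioc s t) := by
        intro z hz
        have hz1 : (1:ℝ) ≤ z := hs.trans hz.1.le
        have hz0 : z ≠ 0 := (lt_of_lt_of_le one_pos hz1).ne'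
        dsimp only
        rw [hpz z hz.1.le hz.2, eq1 hz1, eq2 hz1]
        field_simp
      have hsub1 : Integrable (fun z => inv1 z * x z - c * inv2 z)
          (volume.restrict (Set.Ioc s t)) := hxinv1.sub hcinv2
      rw [setIntegral_congr_fun measurableSet_Ioc e1,
        integral_sub hsub1 hFinv2, integral_sub hxinv1 hcinv2]
      have e2 : ∫ z in Set.Ioc s t, c * inv2 z = c * (s⁻¹ - t⁻¹) := by
        rw [MeasureTheory.integral_const_mul, int_inv2 s t hs hst]
      have e3 : ∫ z in Set.Ioc s t, inv2 z * F z
          = (∫ z in Set.Ioc s t, inv1 z * x z) - t⁻¹ * F t := by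
        have h1 : Set.EqOn (fun z => inv2 z * F z)
            (fun z => (∫ u in Set.Ioc s z, x u) * inv2 z) (Set.Ioc s t) :=
          fun z _ => mul_comm _ _
        rw [setIntegral_congr_fun measurableSet_Ioc h1,
          swap_tri s t x inv2 hxi cont2 1 bnd2]
        have h2 : Set.EqOn (fun u => x u * ∫ z in Set.Ioc u t, inv2 z)
            (fun u => inv1 u * x u - t⁻¹ * x u) (Set.Ioc s t) := by
          intro u hu
          have hu1 : (1:ℝ) ≤ u := hs.trans hu.1.le
          dsimp only
          rw [int_inv2 u t hu1 hu.2, eq1 hu1]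
          ring
        rw [setIntegral_congr_fun measurableSet_Ioc h2,
          integral_sub hxinv1 (hxi.const_mul t⁻¹), MeasureTheory.integral_const_mul, hFt]
      rw [e2, e3]
      ring
    rw [key]
    have hpt : p t = t * x t - c - F t := hpz t hst le_rfl
    rw [hpt, hc]
    field_simp
    ring
  · intro hii s t hs hst htH
    have ht1 : (1:ℝ) ≤ t := hs.trans hst
    have hs0 : (0:ℝ) < s := lt_of_lt_of_le one_pos hs
    have ht0 : (0:ℝ) < t := lt_of_lt_of_le one_pos ht1
    have hsub : Set.Ioc s t ⊆ Set.Icc 1 H := fun z hz => ⟨hs.trans hz.1.le, hz.2.trans htH⟩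
    have hsubIcc : Set.Icc s t ⊆ Set.Icc 1 H := fun z hz => ⟨hs.trans hz.1, hz.2.trans htH⟩
    set q : ℝ → ℝ := fun u => inv2 u * p u with hq
    have hqi : IntegrableOn q (Set.Ioc s t) :=
      Integrable.bdd_mul (hp.mono_set hsub) cont2.aestronglyMeasurable (Filter.Eventually.of_forall bnd2)
    have hqIcc : IntegrableOn q (Set.Icc s t) :=
      Integrable.bdd_mul (hp.mono_set hsubIcc) cont2.aestronglyMeasurable (Filter.Eventually.of_forall bnd2)
    set G : ℝ → ℝ := fun z => ∫ u in Set.Ioc s z, q u with hG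
    have hGc : ContinuousOn G (Set.Icc s t) := continuousOn_primitive hqIcc
    have hGi : Integrable G (volume.restrict (Set.Ioc s t)) :=
      hGc.integrableOn_Icc.mono_set Set.Ioc_subset_Icc_self
    set D : ℝ := x s - p s / s with hD
    have hpinv1 : Integrable (fun z => inv1 z * p z) (volume.restrict (Set.Ioc s t)) :=
      Integrable.bdd_mul (hp.mono_set hsub) cont1.aestronglyMeasurable (Filter.Eventually.of_forall bnd1)
    have hxe : ∀ z, s ≤ z → z ≤ t → x z = inv1 z * p z + G z + D := by
      intro z h1 h2
      have h3 := hii s z hs h1 (h2.trans htH)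
      have h4 : ∫ u in s..z, p u / u ^ 2 = G z := by
        rw [intervalIntegral.integral_of_le h1]
        refine setIntegral_congr_fun measurableSet_Ioc fun u hu => ?_
        have hu1 : (1:ℝ) ≤ u := hs.trans hu.1.le
        show p u / u ^ 2 = inv2 u * p u
        rw [eq2 hu1]
        ring
      rw [h4] at h3
      rw [h3, eq1 (hs.trans h1), hD]
      ring
    have keyK : ∫ z in s..t, x z = t * G t + D * (t - s) := by
      rw [intervalIntegral.integral_of_le hst]
      have e0 : Set.EqOn x (fun z => inv1 z * p z + G z + D) (Set.Ioc s t) :=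
        fun z hz => hxe z hz.1.le hz.2
      rw [setIntegral_congr_fun measurableSet_Ioc e0]
      have hDi : Integrable (fun _ : ℝ => D) (volume.restrict (Set.Ioc s t)) :=
        (integrableOn_const measure_Ioc_lt_top.ne : IntegrableOn _ _ _)
      have hadd1 : Integrable (fun z => inv1 z * p z + G z)
          (volume.restrict (Set.Ioc s t)) := hpinv1.add hGi
      rw [integral_add hadd1 hDi, integral_add hpinv1 hGi]
      have eG : ∫ z in Set.Ioc s t, G z
          = t * G t - ∫ z in Set.Ioc s t, inv1 z * p z := by
        have h1 : Set.EqOn G (fun z => (∫ u in Set.Ioc s z, q u) * 1) (Set.Ioc s t) :=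
          fun z _ => (mul_one _).symm
        rw [setIntegral_congr_fun measurableSet_Ioc h1,
          swap_tri s t q (fun _ => 1) hqi continuous_const 1 (fun z => by simp)]
        have h2 : Set.EqOn (fun u => q u * ∫ z in Set.Ioc u t, (1:ℝ))
            (fun u => t * q u - inv1 u * p u) (Set.Ioc s t) := by
          intro u hu
          have hu1 : (1:ℝ) ≤ u := hs.trans hu.1.le
          have hu0 : u ≠ 0 := (lt_of_lt_of_le one_pos hu1).ne'
          show q u * ∫ z in Set.Ioc u t, (1:ℝ) = t * q u - inv1 u * p u
          rw [int_one u t hu.2, eq1 hu1, hq]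
          dsimp only
          rw [eq2 hu1]
          field_simp
        rw [setIntegral_congr_fun measurableSet_Ioc h2,
          integral_sub (hqi.const_mul t) hpinv1, MeasureTheory.integral_const_mul]
      rw [eG, setIntegral_const, Real.volume_real_Ioc_of_le hst,
        smul_eq_mul]
      ring
    rw [keyK, hxe t hst le_rfl, eq1 ht1, hD]
    field_simp
    ring
end

section
/- Let H > 1, let γ, ρ be real numbers with 0 ≤ ρ ≤ γ ≤ 1 and γ > 0, and let û ∈ [1,H]. There exists a feasible DSIC single-bidder auction (x,p) on [1,H] that is γ-consistent and ρ-robust with respect to the prediction û if and only if γ + ρ·ln(max{û, H·ρ/γ}) ≤ 1. -/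
open MeasureTheory intervalIntegral

open Filter Real Topology in
-- limit lemma
lemma aux_lim (a : ℝ) :
    Tendsto (fun n : ℕ => (n:ℝ) * (1 - Real.exp (-a / n))) atTop (𝓝 a) := by
  have hd : HasDerivAt (fun h : ℝ => 1 - Real.exp (-a * h)) a 0 := by
    have h1 : HasDerivAt (fun h : ℝ => -a * h) (-a) 0 := by
      simpa using (hasDerivAt_id (0 : ℝ)).const_mul (-a)
    have h2 := h1.exp
    have h3 := h2.const_sub 1
    simpa using h3
  have hs := hasDerivAt_iff_tendsto_slope.1 hd
  have hn : Tendsto (fun n : ℕ => ((n : ℝ))⁻¹) atTop (𝓝[≠] (0:ℝ)) := by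
    apply tendsto_nhdsWithin_of_tendsto_nhds_of_eventually_within
    · exact tendsto_inv_atTop_zero.comp tendsto_natCast_atTop_atTop
    · filter_upwards [eventually_ge_atTop 1] with n hn
      have : (0:ℝ) < (n:ℝ) := by positivity
      simp [Set.mem_compl_iff, inv_eq_zero, this.ne']
  have := hs.comp hn
  refine this.congr' ?_
  filter_upwards [eventually_ge_atTop 1] with n hn
  have hn0 : ((n:ℝ)) ≠ 0 := by positivity
  simp only [Function.comp, slope_def_field]
  field_simp
  ring_nf
  rw [Real.exp_zero]
  ring

open Filter Real Topology in
lemma gronwall_aux {H ρ : ℝ} {x : ℝ → ℝ} (hρ : 0 ≤ ρ)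
    (hmono : MonotoneOn x (Set.Icc 1 H))
    (hkey : ∀ u ∈ Set.Icc 1 H, ρ + (∫ z in (1:ℝ)..u, x z) / u ≤ x u)
    {s t : ℝ} (hs : s ∈ Set.Icc 1 H) (ht : t ∈ Set.Icc 1 H) (hst : s ≤ t) :
    (∫ z in (1:ℝ)..s, x z) / s + ρ * Real.log (t / s) ≤ (∫ z in (1:ℝ)..t, x z) / t := by
  set F : ℝ → ℝ := fun u => ∫ z in (1:ℝ)..u, x z with hF
  have hs1 : (1:ℝ) ≤ s := hs.1
  have hsH : s ≤ H := hs.2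
  have ht1 : (1:ℝ) ≤ t := ht.1
  have htH : t ≤ H := ht.2
  have hs0 : (0:ℝ) < s := lt_of_lt_of_le one_pos hs1
  have ht0 : (0:ℝ) < t := lt_of_lt_of_le one_pos ht1
  have hint : ∀ a b : ℝ, a ∈ Set.Icc 1 H → b ∈ Set.Icc 1 H →
      IntervalIntegrable x volume a b := by
    intro a b ha hb
    refine (hmono.mono ?_).intervalIntegrable
    exact Set.uIcc_subset_Icc ha hb
  have hadd : ∀ a b : ℝ, a ∈ Set.Icc 1 H → b ∈ Set.Icc 1 H →
      F b - F a = ∫ z in a..b, x z := by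
    intro a b ha hb
    have := integral_add_adjacent_intervals (hint 1 a (Set.left_mem_Icc.2 (le_trans ha.1 ha.2)) ha)
      (hint a b ha hb)
    simp only [hF] at *
    linarith
  set a : ℝ := Real.log (t / s) with ha
  have ha0 : 0 ≤ a := Real.log_nonneg (by rw [le_div_iff₀ hs0]; linarith)
  have main : ∀ n : ℕ, 1 ≤ n →
      F s / s + ρ * ((n:ℝ) * (1 - Real.exp (-a / n))) ≤ F t / t := by
    intro n hn
    have hn0 : (0:ℝ) < (n:ℝ) := by exact_mod_cast hn
    set T : ℕ → ℝ := fun i => s * Real.exp (a * i / n) with hT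
    have hTn : T n = t := by
      simp only [hT]
      rw [mul_div_assoc, div_self hn0.ne', mul_one, ha, Real.exp_log (by positivity)]
      field_simp
    have hTmono : ∀ i j : ℕ, i ≤ j → T i ≤ T j := by
      intro i j hij
      simp only [hT]
      have : a * i / n ≤ a * j / n := by gcongr
      have := Real.exp_le_exp.2 this
      nlinarith [Real.exp_pos (a * i / n)]
    have hTmem : ∀ i : ℕ, i ≤ n → T i ∈ Set.Icc 1 H := by
      intro i hi
      have h1 : s ≤ T i := by simpa [hT] using hTmono 0 i (Nat.zero_le i)
      have h2 : T i ≤ t := by rw [← hTn]; exact hTmono i n hi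
      exact ⟨le_trans hs1 h1, le_trans h2 htH⟩
    have hTpos : ∀ i : ℕ, 0 < T i := by
      intro i
      simp only [hT]
      positivity
    have hratio : ∀ i : ℕ, T i / T (i+1) = Real.exp (-a / n) := by
      intro i
      simp only [hT]
      rw [mul_div_mul_left _ _ hs0.ne', ← Real.exp_sub]
      congr 1
      push_cast
      field_simp
      ring
    -- induction
    have step : ∀ i : ℕ, i + 1 ≤ n →
        F (T i) / T i + ρ * (1 - Real.exp (-a / n)) ≤ F (T (i+1)) / T (i+1) := by
      intro i hi
      have hui : T i ∈ Set.Icc 1 H := hTmem i (by omega)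
      have hvi : T (i+1) ∈ Set.Icc 1 H := hTmem (i+1) hi
      have huv : T i ≤ T (i+1) := hTmono i (i+1) (by omega)
      have hu0 : 0 < T i := hTpos i
      have hv0 : 0 < T (i+1) := hTpos (i+1)
      have hlow : (T (i+1) - T i) * x (T i) ≤ F (T (i+1)) - F (T i) := by
        rw [hadd _ _ hui hvi]
        have hcint : IntervalIntegrable (fun _ : ℝ => x (T i)) volume (T i) (T (i+1)) :=
          intervalIntegrable_const
        have := integral_mono_on huv hcint (hint _ _ hui hvi)
          (fun z hz => hmono hui ⟨le_trans hui.1 hz.1, le_trans hz.2 hvi.2⟩ hz.1)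
        simpa [mul_comm] using this
      have hxu : ρ + F (T i) / T i ≤ x (T i) := hkey _ hui
      have h1 : F (T i) + (T (i+1) - T i) * (ρ + F (T i) / T i) ≤ F (T (i+1)) := by nlinarith
      have h1' : F (T i) * (T (i+1) / T i) + ρ * (T (i+1) - T i) ≤ F (T (i+1)) := by
        have e : F (T i) * (T (i+1) / T i) + ρ * (T (i+1) - T i)
            = F (T i) + (T (i+1) - T i) * (ρ + F (T i) / T i) := by
          field_simp
          ring
        rw [e]; exact h1
      have h2 : F (T i) / T i + ρ * (1 - T i / T (i+1)) ≤ F (T (i+1)) / T (i+1) := by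
        calc F (T i) / T i + ρ * (1 - T i / T (i+1))
            = (F (T i) * (T (i+1) / T i) + ρ * (T (i+1) - T i)) / T (i+1) := by
              field_simp
          _ ≤ F (T (i+1)) / T (i+1) := by
              exact div_le_div_of_nonneg_right h1' hv0.le |>.trans_eq rfl
      rwa [hratio i] at h2
    have ind : ∀ i : ℕ, i ≤ n →
        F s / s + ρ * ((i:ℝ) * (1 - Real.exp (-a / n))) ≤ F (T i) / T i := by
      intro i
      induction i with
      | zero => intro _; simp [hT]
      | succ k ihk =>
        intro hk
        have h1 := ihk (by omega)
        have h2 := step k hk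
        push_cast
        nlinarith
    have := ind n le_rfl
    rwa [hTn] at this
  -- pass to the limit
  have hlim : Tendsto (fun n : ℕ => F s / s + ρ * ((n:ℝ) * (1 - Real.exp (-a / n))))
      atTop (𝓝 (F s / s + ρ * a)) :=
    (tendsto_const_nhds.add ((aux_lim a).const_mul ρ))
  have := le_of_tendsto hlim (by filter_upwards [eventually_ge_atTop 1] with n hn using main n hn)
  linarith

noncomputable def cxa (γ ρ uhat : ℝ) (t : ℝ) : ℝ :=
  if t < uhat then ρ * (1 + Real.log t) else γ + ρ * Real.log (max uhat (ρ * t / γ))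

noncomputable def cpa (γ ρ uhat : ℝ) (t : ℝ) : ℝ :=
  if t < uhat then ρ * t else max (γ * uhat) (ρ * t)

open Filter Real Topology in
lemma ftc1 (ρ : ℝ) {s t : ℝ} (hs : 0 < s) (hst : s ≤ t) :
    ∫ z in s..t, ρ * (1 + Real.log z) = ρ * (t * Real.log t) - ρ * (s * Real.log s) := by
  have huIcc : Set.uIcc s t = Set.Icc s t := Set.uIcc_of_le hst
  have hd : ∀ z ∈ Set.uIcc s t, HasDerivAt (fun w => ρ * (w * Real.log w)) (ρ * (1 + Real.log z)) z := by
    intro z hz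
    rw [huIcc] at hz
    have hz0 : z ≠ 0 := (lt_of_lt_of_le hs hz.1).ne'
    have := (Real.hasDerivAt_mul_log hz0).const_mul ρ
    simpa [add_comm] using this
  have hcont : ContinuousOn (fun z => ρ * (1 + Real.log z)) (Set.uIcc s t) := by
    rw [huIcc]
    apply ContinuousOn.mul continuousOn_const
    apply ContinuousOn.add continuousOn_const
    exact Real.continuousOn_log.mono (fun z hz => (lt_of_lt_of_le hs hz.1).ne')
  rw [integral_eq_sub_of_hasDerivAt hd ((huIcc ▸ hcont).intervalIntegrable_of_Icc hst)]

open Filter Real Topology in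
lemma ftc2 (γ ρ : ℝ) (hγ : 0 < γ) (hρ : 0 < ρ) {c t : ℝ} (hc : 0 < c) (hct : c ≤ t) :
    ∫ z in c..t, (γ + ρ * Real.log (ρ * z / γ))
      = (γ * t + ρ * (t * Real.log (ρ * t / γ)) - ρ * t)
        - (γ * c + ρ * (c * Real.log (ρ * c / γ)) - ρ * c) := by
  have huIcc : Set.uIcc c t = Set.Icc c t := Set.uIcc_of_le hct
  have hd : ∀ z ∈ Set.uIcc c t,
      HasDerivAt (fun w => γ * w + ρ * (w * Real.log (ρ * w / γ)) - ρ * w)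
        (γ + ρ * Real.log (ρ * z / γ)) z := by
    intro z hz
    rw [huIcc] at hz
    have hz0 : 0 < z := lt_of_lt_of_le hc hz.1
    have hne : ρ * z / γ ≠ 0 := by positivity
    have hlin : HasDerivAt (fun w : ℝ => ρ * w / γ) (ρ / γ) z := by
      simpa using ((hasDerivAt_id z).const_mul ρ).div_const γ
    have hlog : HasDerivAt (fun w : ℝ => Real.log (ρ * w / γ)) ((ρ / γ) / (ρ * z / γ)) z :=
      hlin.log hne
    have hmul : HasDerivAt (fun w : ℝ => w * Real.log (ρ * w / γ))
        (1 * Real.log (ρ * z / γ) + z * ((ρ / γ) / (ρ * z / γ))) z :=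
      (hasDerivAt_id z).mul hlog
    have e : z * ((ρ / γ) / (ρ * z / γ)) = 1 := by
      field_simp
    rw [e] at hmul
    have h1 : HasDerivAt (fun w : ℝ => γ * w) γ z := by
      simpa using (hasDerivAt_id z).const_mul γ
    have h2 : HasDerivAt (fun w : ℝ => ρ * w) ρ z := by
      simpa using (hasDerivAt_id z).const_mul ρ
    have := (h1.add (hmul.const_mul ρ)).sub h2
    refine this.congr_deriv ?_
    ring
  have hcont : ContinuousOn (fun z => γ + ρ * Real.log (ρ * z / γ)) (Set.uIcc c t) := by
    rw [huIcc]
    apply ContinuousOn.add continuousOn_const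
    apply ContinuousOn.mul continuousOn_const
    apply ContinuousOn.log
    · exact ((continuous_const.mul continuous_id).div_const γ).continuousOn
    · intro z hz
      have hz0 : 0 < z := lt_of_lt_of_le hc hz.1
      positivity
  rw [integral_eq_sub_of_hasDerivAt hd ((huIcc ▸ hcont).intervalIntegrable_of_Icc hct)]

open Filter Real Topology in
lemma cxa_mono {γ ρ uhat : ℝ} (hρ0 : 0 ≤ ρ) (hργ : ρ ≤ γ) (hγ : 0 < γ) (hu1 : 1 ≤ uhat) :
    MonotoneOn (cxa γ ρ uhat) (Set.Ici 1) := by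
  have hu0 : (0:ℝ) < uhat := lt_of_lt_of_le one_pos hu1
  intro a ha b hb hab
  simp only [Set.mem_Ici] at ha hb
  have ha0 : (0:ℝ) < a := lt_of_lt_of_le one_pos ha
  have hb0 : (0:ℝ) < b := lt_of_lt_of_le one_pos hb
  rcases lt_or_ge b uhat with hbu | hbu
  · have hau : a < uhat := lt_of_le_of_lt hab hbu
    simp only [cxa, if_pos hau, if_pos hbu]
    have := Real.log_le_log ha0 hab
    nlinarith
  · rcases lt_or_ge a uhat with hau | hau
    · simp only [cxa, if_pos hau, if_neg (not_lt.2 hbu)]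
      have h1 : Real.log a ≤ Real.log uhat := Real.log_le_log ha0 hau.le
      have h2 : Real.log uhat ≤ Real.log (max uhat (ρ * b / γ)) :=
        Real.log_le_log hu0 (le_max_left _ _)
      nlinarith
    · simp only [cxa, if_neg (not_lt.2 hau), if_neg (not_lt.2 hbu)]
      have h1 : max uhat (ρ * a / γ) ≤ max uhat (ρ * b / γ) := by
        apply max_le_max le_rfl
        gcongr
      have h2 : (0:ℝ) < max uhat (ρ * a / γ) := lt_of_lt_of_le hu0 (le_max_left _ _)
      have := Real.log_le_log h2 h1
      nlinarith

open Filter Real Topology in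
lemma cxa_integral {γ ρ uhat : ℝ} (hρ0 : 0 ≤ ρ) (hργ : ρ ≤ γ) (hγ : 0 < γ)
    (hu1 : 1 ≤ uhat) {t : ℝ} (ht1 : 1 ≤ t) :
    ∫ z in (1:ℝ)..t, cxa γ ρ uhat z = t * cxa γ ρ uhat t - cpa γ ρ uhat t := by
  have hu0 : (0:ℝ) < uhat := lt_of_lt_of_le one_pos hu1
  have hintg : ∀ a b : ℝ, 1 ≤ a → 1 ≤ b → IntervalIntegrable (cxa γ ρ uhat) volume a b := by
    intro a b ha hb
    refine ((cxa_mono hρ0 hργ hγ hu1).mono ?_).intervalIntegrable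
    intro z hz
    rcases le_total a b with h | h
    · rw [Set.uIcc_of_le h] at hz; exact le_trans ha hz.1
    · rw [Set.uIcc_of_ge h] at hz; exact le_trans hb hz.1
  rcases lt_or_ge t uhat with htu | htu
  · -- Case A : t < uhat
    have hEq : Set.EqOn (cxa γ ρ uhat) (fun z => ρ * (1 + Real.log z)) (Set.uIcc 1 t) := by
      intro z hz
      rw [Set.uIcc_of_le ht1] at hz
      have : z < uhat := lt_of_le_of_lt hz.2 htu
      simp [cxa, this]
    rw [integral_congr hEq, ftc1 ρ one_pos ht1]
    simp [cxa, cpa, htu, Real.log_one]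
    ring
  · -- Case B : uhat ≤ t
    have hint1 : ∫ z in (1:ℝ)..uhat, cxa γ ρ uhat z = ρ * (uhat * Real.log uhat) := by
      rcases eq_or_lt_of_le hu1 with h1u | h1u
      · rw [← h1u]
        simp [Real.log_one]
      · have hae : ∀ᵐ z : ℝ, z ∈ Set.uIoc (1:ℝ) uhat →
            cxa γ ρ uhat z = ρ * (1 + Real.log z) := by
          have hsing : ∀ᵐ z : ℝ, z ∉ ({uhat} : Set ℝ) :=
            compl_mem_ae_iff.2 (measure_singleton _)
          filter_upwards [hsing] with z hz hz2
          rw [Set.uIoc_of_le h1u.le] at hz2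
          have : z < uhat := lt_of_le_of_ne hz2.2 (by simpa using hz)
          simp [cxa, this]
        rw [integral_congr_ae hae, ftc1 ρ one_pos h1u.le]
        simp [Real.log_one]
    have hEq2 : Set.EqOn (cxa γ ρ uhat)
        (fun z => γ + ρ * Real.log (max uhat (ρ * z / γ))) (Set.uIcc uhat t) := by
      intro z hz
      rw [Set.uIcc_of_le htu] at hz
      simp [cxa, not_lt.2 hz.1]
    have hint2 : ∫ z in uhat..t, cxa γ ρ uhat z
        = ∫ z in uhat..t, (γ + ρ * Real.log (max uhat (ρ * z / γ))) := integral_congr hEq2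
    have htot := integral_add_adjacent_intervals
      (f := cxa γ ρ uhat) (μ := volume) (a := 1) (b := uhat) (c := t)
      (hintg 1 uhat le_rfl hu1) (hintg uhat t hu1 (le_trans hu1 htu))
    rcases eq_or_lt_of_le hρ0 with hρz | hρpos
    · -- ρ = 0
      subst hρz
      have hval : ∫ z in uhat..t, (γ + 0 * Real.log (max uhat (0 * z / γ))) = (t - uhat) * γ := by
        simp only [zero_mul, add_zero]
        rw [intervalIntegral.integral_const, smul_eq_mul]
      rw [hint1, hint2, hval] at htot
      rw [← htot]
      have hxt : cxa γ 0 uhat t = γ := by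
        simp [cxa, not_lt.2 htu]
      have hpt : cpa γ 0 uhat t = γ * uhat := by
        have h0 : (0:ℝ) ≤ γ * uhat := by positivity
        simp [cpa, not_lt.2 htu, max_eq_left, h0]
      rw [hxt, hpt]
      ring
    rcases le_or_gt t (γ * uhat / ρ) with hcase | hcase
    · -- constant branch on [uhat, t]
      have hEq3 : Set.EqOn (fun z => γ + ρ * Real.log (max uhat (ρ * z / γ)))
          (fun _ => γ + ρ * Real.log uhat) (Set.uIcc uhat t) := by
        intro z hz
        rw [Set.uIcc_of_le htu] at hz
        have hz2 : z ≤ γ * uhat / ρ := le_trans hz.2 hcase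
        rw [le_div_iff₀ hρpos] at hz2
        have : ρ * z / γ ≤ uhat := by
          rw [div_le_iff₀ hγ]; nlinarith
        simp [max_eq_left this]
      have hval : ∫ z in uhat..t, (γ + ρ * Real.log (max uhat (ρ * z / γ)))
          = (t - uhat) * (γ + ρ * Real.log uhat) := by
        rw [integral_congr hEq3, intervalIntegral.integral_const, smul_eq_mul]
      rw [hint1, hint2, hval] at htot
      rw [← htot]
      have hcase2 : t * ρ ≤ γ * uhat := by
        rw [le_div_iff₀ hρpos] at hcase; linarith
      have hxt : cxa γ ρ uhat t = γ + ρ * Real.log uhat := by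
        have hmax : ρ * t / γ ≤ uhat := by
          rw [div_le_iff₀ hγ]; nlinarith
        simp [cxa, not_lt.2 htu, max_eq_left hmax]
      have hpt : cpa γ ρ uhat t = γ * uhat := by
        have : ρ * t ≤ γ * uhat := by nlinarith
        simp [cpa, not_lt.2 htu, max_eq_left this]
      rw [hxt, hpt]
      ring
    · -- t > c = γ*uhat/ρ
      set c : ℝ := γ * uhat / ρ with hc
      have hc0 : 0 < c := by positivity
      have huc : uhat ≤ c := by
        rw [hc, le_div_iff₀ hρpos]
        nlinarith
      have hct : c ≤ t := hcase.le
      have hcu : ρ * c / γ = uhat := by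
        rw [hc]; field_simp
      have hcρ : ρ * c = γ * uhat := by
        rw [hc]; field_simp
      have hcont : ContinuousOn (fun z => γ + ρ * Real.log (max uhat (ρ * z / γ)))
          (Set.Icc uhat t) := by
        apply ContinuousOn.add continuousOn_const
        apply ContinuousOn.mul continuousOn_const
        apply ContinuousOn.log
        · exact (continuous_const.max ((continuous_const.mul continuous_id).div_const γ)).continuousOn
        · intro z _
          have : uhat ≤ max uhat (ρ * z / γ) := le_max_left _ _
          positivity
      have hsplit : ∫ z in uhat..t, (γ + ρ * Real.log (max uhat (ρ * z / γ)))
          = (∫ z in uhat..c, (γ + ρ * Real.log (max uhat (ρ * z / γ))))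
            + ∫ z in c..t, (γ + ρ * Real.log (max uhat (ρ * z / γ))) := by
        rw [integral_add_adjacent_intervals]
        · exact (hcont.mono (Set.Icc_subset_Icc le_rfl hct)).intervalIntegrable_of_Icc huc
        · exact (hcont.mono (Set.Icc_subset_Icc huc le_rfl)).intervalIntegrable_of_Icc hct
      have hI1 : ∫ z in uhat..c, (γ + ρ * Real.log (max uhat (ρ * z / γ)))
          = (c - uhat) * (γ + ρ * Real.log uhat) := by
        have hEq3 : Set.EqOn (fun z => γ + ρ * Real.log (max uhat (ρ * z / γ)))
            (fun _ => γ + ρ * Real.log uhat) (Set.uIcc uhat c) := by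
          intro z hz
          rw [Set.uIcc_of_le huc] at hz
          have hz2 := hz.2
          rw [hc, le_div_iff₀ hρpos] at hz2
          have : ρ * z / γ ≤ uhat := by
            rw [div_le_iff₀ hγ]; nlinarith
          simp [max_eq_left this]
        rw [integral_congr hEq3, intervalIntegral.integral_const, smul_eq_mul]
      have hI2 : ∫ z in c..t, (γ + ρ * Real.log (max uhat (ρ * z / γ)))
          = (γ * t + ρ * (t * Real.log (ρ * t / γ)) - ρ * t)
            - (γ * c + ρ * (c * Real.log uhat) - ρ * c) := by
        have hEq4 : Set.EqOn (fun z => γ + ρ * Real.log (max uhat (ρ * z / γ)))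
            (fun z => γ + ρ * Real.log (ρ * z / γ)) (Set.uIcc c t) := by
          intro z hz
          rw [Set.uIcc_of_le hct] at hz
          have : uhat ≤ ρ * z / γ := by
            rw [← hcu]
            gcongr
            exact hz.1
          simp [max_eq_right this]
        rw [integral_congr hEq4, ftc2 γ ρ hγ hρpos hc0 hct, hcu]
      rw [hint1, hint2, hsplit, hI1, hI2] at htot
      rw [← htot]
      have humax : uhat ≤ ρ * t / γ := by
        rw [← hcu]
        gcongr
      have hxt : cxa γ ρ uhat t = γ + ρ * Real.log (ρ * t / γ) := by
        simp [cxa, not_lt.2 htu, max_eq_right humax]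
      have hpt : cpa γ ρ uhat t = ρ * t := by
        have : γ * uhat ≤ ρ * t := by
          rw [← hcρ]; nlinarith
        simp [cpa, not_lt.2 htu, max_eq_right this]
      rw [hxt, hpt]
      linear_combination hcρ

/-- Theorem 1 of the paper: a characterization of the pairs of consistency and
robustness parameters `(γ, ρ)` for which a feasible DSIC single-bidder auction
on `[1, H]` with prediction `uhat` exists. -/
theorem consistency_robustness_tradeoff (H : ℝ) (hH : 1 < H)
    (γ ρ : ℝ) (hρ0 : 0 ≤ ρ) (hργ : ρ ≤ γ) (hγ1 : γ ≤ 1) (hγ : 0 < γ)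
    (uhat : ℝ) (huhat : uhat ∈ Set.Icc 1 H) :
    (∃ x p : ℝ → ℝ,
      -- feasibility
      (∀ t ∈ Set.Icc 1 H, 0 ≤ x t ∧ x t ≤ 1) ∧
      -- DSIC: nonnegative payments, monotone allocation, individual rationality,
      -- and Myerson's payment identity
      (∀ t ∈ Set.Icc 1 H, 0 ≤ p t) ∧
      MonotoneOn x (Set.Icc 1 H) ∧
      p 1 ≤ x 1 ∧
      (∀ s t : ℝ, 1 ≤ s → s ≤ t → t ≤ H →
        p t - p s = t * x t - s * x s - ∫ z in s..t, x z) ∧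
      -- γ-consistency
      γ * uhat ≤ p uhat ∧
      -- ρ-robustness
      (∀ t ∈ Set.Icc 1 H, ρ * t ≤ p t)) ↔
    γ + ρ * Real.log (max uhat (H * ρ / γ)) ≤ 1 := by
  obtain ⟨hu1, huH⟩ := huhat
  have hu0 : (0:ℝ) < uhat := lt_of_lt_of_le one_pos hu1
  have hH0 : (0:ℝ) < H := lt_trans one_pos hH
  constructor
  · -- necessity
    rintro ⟨x, p, hfeas, hppos, hmono, hp1, hid, hcons, hrob⟩
    set F : ℝ → ℝ := fun u => ∫ z in (1:ℝ)..u, x z with hF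
    have hkey : ∀ u ∈ Set.Icc 1 H, ρ + F u / u ≤ x u := by
      intro u hu
      have hu0' : (0:ℝ) < u := lt_of_lt_of_le one_pos hu.1
      have h1 := hid 1 u le_rfl hu.1 hu.2
      have h2 := hrob u hu
      have h3 : ρ * u + F u ≤ u * x u := by
        simp only [hF]
        rw [one_mul] at h1
        linarith
      have h4 : (ρ + F u / u) * u ≤ x u * u := by
        rw [add_mul, div_mul_cancel₀ _ hu0'.ne']
        linarith
      exact le_of_mul_le_mul_right h4 hu0'
    have gron := fun {s t : ℝ} (hs : s ∈ Set.Icc 1 H) (ht : t ∈ Set.Icc 1 H) (hst : s ≤ t) =>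
      gronwall_aux hρ0 hmono hkey hs ht hst
    have hF1 : F 1 = 0 := integral_same
    have h1Icc : (1:ℝ) ∈ Set.Icc 1 H := Set.left_mem_Icc.2 hH.le
    have hlog : ∀ t ∈ Set.Icc 1 H, ρ * Real.log t ≤ F t / t := by
      intro t ht
      have := gron h1Icc ht ht.1
      simp only [intervalIntegral.integral_same, zero_div, zero_add, div_one] at this
      simpa only [hF] using this
    have huIcc : uhat ∈ Set.Icc 1 H := ⟨hu1, huH⟩
    have hxu : γ + F uhat / uhat ≤ x uhat := by
      have h1 := hid 1 uhat le_rfl hu1 huH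
      have h3 : γ * uhat + F uhat ≤ uhat * x uhat := by
        simp only [hF]
        rw [one_mul] at h1
        linarith
      have h4 : (γ + F uhat / uhat) * uhat ≤ x uhat * uhat := by
        rw [add_mul, div_mul_cancel₀ _ hu0.ne']
        nlinarith
      exact le_of_mul_le_mul_right h4 hu0
    rcases le_total (H * ρ / γ) uhat with hM | hM
    · rw [max_eq_left hM]
      have h1 := hlog uhat huIcc
      have h2 := (hfeas uhat huIcc).2
      linarith
    · rw [max_eq_right hM]
      rcases eq_or_lt_of_le hρ0 with hρz | hρpos
      · rw [← hρz]
        simp only [zero_mul, add_zero]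
        exact hγ1
      set c : ℝ := γ * uhat / ρ with hc
      have hc0 : 0 < c := by positivity
      have huc : uhat ≤ c := by
        rw [hc, le_div_iff₀ hρpos]
        nlinarith
      have hcH : c ≤ H := by
        rw [hc, div_le_iff₀ hρpos]
        rw [le_div_iff₀ hγ] at hM
        linarith
      have hcIcc : c ∈ Set.Icc 1 H := ⟨le_trans hu1 huc, hcH⟩
      have h1c : (1:ℝ) ≤ c := le_trans hu1 huc
      -- F c ≥ F uhat + (c - uhat) * (γ + F uhat / uhat)
      have hintx : ∀ a b : ℝ, a ∈ Set.Icc 1 H → b ∈ Set.Icc 1 H →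
          IntervalIntegrable x volume a b := by
        intro a b ha hb
        exact (hmono.mono (Set.uIcc_subset_Icc ha hb)).intervalIntegrable
      have hadd : F c - F uhat = ∫ z in uhat..c, x z := by
        have := integral_add_adjacent_intervals (hintx 1 uhat h1Icc huIcc)
          (hintx uhat c huIcc hcIcc)
        simp only [hF] at *
        linarith
      have hstep1 : (c - uhat) * (γ + F uhat / uhat) ≤ F c - F uhat := by
        rw [hadd]
        have hcint : IntervalIntegrable (fun _ : ℝ => γ + F uhat / uhat) volume uhat c :=
          intervalIntegrable_const
        have hmon := intervalIntegral.integral_mono_on huc hcint (hintx uhat c huIcc hcIcc)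
          (fun z hz => le_trans hxu (hmono huIcc ⟨le_trans hu1 hz.1, le_trans hz.2 hcH⟩ hz.1))
        rw [intervalIntegral.integral_const, smul_eq_mul] at hmon
        exact hmon
      have hstep2 : γ - ρ + F uhat / uhat ≤ F c / c := by
        have hcρ : c * ρ = γ * uhat := by rw [hc]; field_simp
        have huF : uhat * (F uhat / uhat) = F uhat := by
          rw [mul_div_cancel₀ _ hu0.ne']
        have h5 : c * (γ - ρ + F uhat / uhat) ≤ F c := by nlinarith
        rw [← mul_le_mul_iff_right₀ hc0, mul_div_cancel₀ _ hc0.ne']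
        · exact h5
      have hstep3 := gron hcIcc ⟨hH.le, le_rfl⟩ hcH
      have hxH : ρ + F H / H ≤ x H := hkey H ⟨hH.le, le_rfl⟩
      have hxH1 : x H ≤ 1 := (hfeas H ⟨hH.le, le_rfl⟩).2
      have hlogu := hlog uhat huIcc
      -- log identity
      have hlogid : Real.log (H * ρ / γ) = Real.log uhat + Real.log (H / c) := by
        have he : H * ρ / γ = uhat * (H / c) := by
          rw [hc]
          field_simp
        rw [he, Real.log_mul hu0.ne' (by positivity)]
      have hHc : ρ * Real.log (H / c) ≤ F H / H - F c / c := by linarith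
      have hmul : ρ * Real.log (H * ρ / γ) = ρ * Real.log uhat + ρ * Real.log (H / c) := by
        rw [hlogid]; ring
      linarith
  · -- sufficiency: explicit construction
    intro hcond
    set M : ℝ := max uhat (H * ρ / γ) with hM
    have huM : uhat ≤ M := le_max_left _ _
    have hM0 : (0:ℝ) < M := lt_of_lt_of_le hu0 huM
    refine ⟨cxa γ ρ uhat, cpa γ ρ uhat, ?_, ?_, ?_, ?_, ?_, ?_, ?_⟩
    · -- feasibility
      intro t ⟨ht1, htH⟩
      have ht0 : (0:ℝ) < t := lt_of_lt_of_le one_pos ht1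
      constructor
      · rcases lt_or_ge t uhat with h | h
        · simp only [cxa, if_pos h]
          have := Real.log_nonneg ht1
          positivity
        · simp only [cxa, if_neg (not_lt.2 h)]
          have h2 : (1:ℝ) ≤ max uhat (ρ * t / γ) := le_trans hu1 (le_max_left _ _)
          have := Real.log_nonneg h2
          positivity
      · rcases lt_or_ge t uhat with h | h
        · simp only [cxa, if_pos h]
          have h1 : Real.log t ≤ Real.log M :=
            Real.log_le_log ht0 (le_trans h.le huM)
          nlinarith
        · simp only [cxa, if_neg (not_lt.2 h)]
          have h1 : max uhat (ρ * t / γ) ≤ M := by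
            apply max_le huM
            rw [hM]
            refine le_trans ?_ (le_max_right _ _)
            rw [mul_comm H ρ]
            gcongr
          have h2 : (0:ℝ) < max uhat (ρ * t / γ) := lt_of_lt_of_le hu0 (le_max_left _ _)
          have := Real.log_le_log h2 h1
          nlinarith
    · -- p nonneg
      intro t ⟨ht1, htH⟩
      rcases lt_or_ge t uhat with h | h
      · simp only [cpa, if_pos h]
        positivity
      · simp only [cpa, if_neg (not_lt.2 h)]
        exact le_trans (by positivity) (le_max_left _ _)
    · exact (cxa_mono hρ0 hργ hγ hu1).mono (fun z hz => hz.1)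
    · -- p 1 ≤ x 1
      rcases eq_or_lt_of_le hu1 with h | h
      · simp only [cpa, cxa, ← h, lt_irrefl, if_false, if_neg (lt_irrefl (1:ℝ))]
        have h1 : ρ * 1 / γ ≤ 1 := by
          rw [div_le_one hγ]
          linarith
        rw [max_eq_left (le_trans h1 le_rfl), Real.log_one, max_eq_left (by nlinarith)]
        simp
      · simp [cpa, cxa, h, Real.log_one]
    · -- payment identity
      intro s t hs hst htH
      have ht1 : (1:ℝ) ≤ t := le_trans hs hst
      have h1 := cxa_integral hρ0 hργ hγ hu1 hs
      have h2 := cxa_integral hρ0 hργ hγ hu1 ht1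
      have hintg : ∀ a b : ℝ, 1 ≤ a → 1 ≤ b → IntervalIntegrable (cxa γ ρ uhat) volume a b := by
        intro a b ha hb
        refine ((cxa_mono hρ0 hργ hγ hu1).mono ?_).intervalIntegrable
        intro z hz
        rcases le_total a b with hab | hab
        · rw [Set.uIcc_of_le hab] at hz; exact le_trans ha hz.1
        · rw [Set.uIcc_of_ge hab] at hz; exact le_trans hb hz.1
      have hadd := integral_add_adjacent_intervals (μ := volume)
        (hintg 1 s le_rfl hs) (hintg s t hs ht1)
      linarith
    · -- consistency
      simp only [cpa, lt_irrefl, if_neg (lt_irrefl uhat)]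
      exact le_max_left _ _
    · -- robustness
      intro t ⟨ht1, htH⟩
      rcases lt_or_ge t uhat with h | h
      · simp [cpa, h]
      · simp only [cpa, if_neg (not_lt.2 h)]
        exact le_max_right _ _
end

section
/- Let H > 1, let γ, ρ be real numbers with 0 ≤ ρ ≤ γ ≤ 1 and γ > 0, and let û ∈ [1,H]. If (x,p) is a feasible DSIC single-bidder auction on [1,H] satisfying p(t) ≥ ρ·t for all t ∈ [1,H] and p(û) ≥ γ·û, then γ + ρ·ln(max{û, H·ρ/γ}) ≤ 1. -/
open MeasureTheory intervalIntegral

lemma aux_integral_inv_sq {a b : ℝ} (ha : 0 < a) (hab : a ≤ b) :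
    ∫ s in a..b, (s ^ 2)⁻¹ = a⁻¹ - b⁻¹ := by
  have hderiv : ∀ s ∈ Set.uIcc a b, HasDerivAt (fun u : ℝ => -u⁻¹) ((s ^ 2)⁻¹) s := by
    intro s hs
    rw [Set.uIcc_of_le hab] at hs
    have hs0 : s ≠ 0 := ne_of_gt (lt_of_lt_of_le ha hs.1)
    simpa using (hasDerivAt_inv hs0).fun_neg
  have hint : IntervalIntegrable (fun s : ℝ => (s ^ 2)⁻¹) volume a b := by
    apply ContinuousOn.intervalIntegrable
    apply ((continuous_pow 2).continuousOn).inv₀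
    intro s hs
    rw [Set.uIcc_of_le hab] at hs
    exact pow_ne_zero 2 (ne_of_gt (lt_of_lt_of_le ha hs.1))
  rw [intervalIntegral.integral_eq_sub_of_hasDerivAt hderiv hint]
  ring

lemma aux_const_le_integral {f : ℝ → ℝ} {a b c : ℝ} (hab : a ≤ b)
    (hf : IntervalIntegrable f volume a b) (h : ∀ z ∈ Set.Ioc a b, c ≤ f z) :
    c * (b - a) ≤ ∫ z in a..b, f z := by
  rw [intervalIntegral.integral_of_le hab]
  have h1 : ∫ _z in Set.Ioc a b, c ≤ ∫ z in Set.Ioc a b, f z :=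
    setIntegral_mono_on (integrableOn_const measure_Ioc_lt_top.ne) hf.1
      measurableSet_Ioc h
  rw [setIntegral_const, Real.volume_real_Ioc_of_le hab, smul_eq_mul,
    mul_comm] at h1
  exact h1

lemma aux_integral_le_const {f : ℝ → ℝ} {a b c : ℝ} (hab : a ≤ b)
    (hf : IntervalIntegrable f volume a b) (h : ∀ z ∈ Set.Ioc a b, f z ≤ c) :
    (∫ z in a..b, f z) ≤ c * (b - a) := by
  rw [intervalIntegral.integral_of_le hab]
  have h1 : (∫ z in Set.Ioc a b, f z) ≤ ∫ _z in Set.Ioc a b, c :=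
    setIntegral_mono_on hf.1 (integrableOn_const measure_Ioc_lt_top.ne)
      measurableSet_Ioc h
  rw [setIntegral_const, Real.volume_real_Ioc_of_le hab, smul_eq_mul,
    mul_comm] at h1
  exact h1

/-- The "only if" part of Theorem 1 of the paper: any feasible DSIC single-bidder
auction on `[1, H]` that is `γ`-consistent and `ρ`-robust with respect to the
prediction `uhat` satisfies `γ + ρ·ln(max{uhat, H·ρ/γ}) ≤ 1`. -/
theorem consistency_robustness_necessary (H : ℝ) (hH : 1 < H)
    (γ ρ : ℝ) (hρ0 : 0 ≤ ρ) (hργ : ρ ≤ γ) (hγ1 : γ ≤ 1) (hγ : 0 < γ)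
    (uhat : ℝ) (huhat : uhat ∈ Set.Icc 1 H)
    (x p : ℝ → ℝ)
    -- feasibility
    (hfeas : ∀ t ∈ Set.Icc 1 H, 0 ≤ x t ∧ x t ≤ 1)
    -- DSIC: nonnegative payments, monotone allocation, individual rationality,
    -- and Myerson's payment identity
    (hppos : ∀ t ∈ Set.Icc 1 H, 0 ≤ p t)
    (hmono : MonotoneOn x (Set.Icc 1 H))
    (hir : p 1 ≤ x 1)
    (hmyerson : ∀ s t : ℝ, 1 ≤ s → s ≤ t → t ≤ H →
      p t - p s = t * x t - s * x s - ∫ z in s..t, x z)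
    -- ρ-robustness and γ-consistency
    (hrob : ∀ t ∈ Set.Icc 1 H, ρ * t ≤ p t)
    (hcons : γ * uhat ≤ p uhat) :
    γ + ρ * Real.log (max uhat (H * ρ / γ)) ≤ 1 := by
  obtain ⟨hu1, huH⟩ := huhat
  have hH0 : (0:ℝ) < H := lt_trans one_pos hH
  have hu0 : (0:ℝ) < uhat := lt_of_lt_of_le one_pos hu1
  -- interval integrability of x on subintervals of [1, H]
  have hxii : ∀ s t : ℝ, 1 ≤ s → t ≤ H → s ≤ t → IntervalIntegrable x volume s t := by
    intro s t hs ht hst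
    apply MonotoneOn.intervalIntegrable
    apply hmono.mono
    rw [Set.uIcc_of_le hst]
    exact Set.Icc_subset_Icc hs ht
  -- key consequence of Myerson + IR
  have hA : ∀ t ∈ Set.Icc (1:ℝ) H, p t + (∫ z in (1:ℝ)..t, x z) ≤ t * x t := by
    intro t ht
    have h := hmyerson 1 t le_rfl ht.1 ht.2
    have h2 : (1:ℝ) * x 1 = x 1 := one_mul _
    linarith [hir]
  -- p is nondecreasing on [1, H]
  have hpmono : ∀ s t : ℝ, s ∈ Set.Icc (1:ℝ) H → t ∈ Set.Icc (1:ℝ) H → s ≤ t → p s ≤ p t := by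
    intro s t hs ht hst
    have h := hmyerson s t hs.1 hst ht.2
    have hint : (∫ z in s..t, x z) ≤ ∫ _z in s..t, x t := by
      apply intervalIntegral.integral_mono_on hst (hxii s t hs.1 ht.2 hst)
        intervalIntegrable_const
      intro z hz
      exact hmono ⟨hs.1.trans hz.1, hz.2.trans ht.2⟩ ht hz.2
    rw [intervalIntegral.integral_const, smul_eq_mul] at hint
    have hxs : x s ≤ x t := hmono hs ht hst
    have h1s : (1:ℝ) ≤ s := hs.1
    nlinarith
  -- right limit of x
  set xplus : ℝ → ℝ := fun t => sInf (x '' Set.Ioc t H) with hxplusdef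
  have hxplus_le : ∀ t ∈ Set.Ico (1:ℝ) H, ∀ z ∈ Set.Ioc t H, xplus t ≤ x z := by
    intro t ht z hz
    apply csInf_le
    · refine ⟨0, ?_⟩
      rintro v ⟨w, hw, rfl⟩
      exact (hfeas w ⟨ht.1.trans hw.1.le, hw.2⟩).1
    · exact ⟨z, hz, rfl⟩
  have hle_xplus : ∀ t ∈ Set.Ico (1:ℝ) H, x t ≤ xplus t := by
    intro t ht
    apply le_csInf ⟨x H, Set.mem_image_of_mem x (Set.mem_Ioc.2 ⟨ht.2, le_rfl⟩)⟩
    rintro v ⟨w, hw, rfl⟩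
    exact hmono ⟨ht.1, ht.2.le⟩ ⟨ht.1.trans hw.1.le, hw.2⟩ hw.1.le
  -- F has right derivative xplus
  have hFderiv : ∀ t ∈ Set.Ioo (1:ℝ) H,
      HasDerivWithinAt (fun t => ∫ z in (1:ℝ)..t, x z) (xplus t) (Set.Ioi t) t := by
    intro t ht
    have htH : t < H := ht.2
    have h1t : (1:ℝ) ≤ t := ht.1.le
    rw [hasDerivWithinAt_iff_tendsto_slope]
    rw [Set.diff_singleton_eq_self (by simp)]
    have hslope : ∀ y ∈ Set.Ioc t H,
        slope (fun t => ∫ z in (1:ℝ)..t, x z) t y = (∫ z in t..y, x z) / (y - t) := by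
      intro y hy
      rw [slope_def_field]
      congr 1
      exact intervalIntegral.integral_interval_sub_left
        (hxii 1 y le_rfl hy.2 (h1t.trans hy.1.le)) (hxii 1 t le_rfl htH.le h1t)
    rw [tendsto_order]
    constructor
    · intro a ha
      filter_upwards [Ioc_mem_nhdsGT htH] with y hy
      have hyt : t < y := hy.1
      have hlow : xplus t * (y - t) ≤ ∫ z in t..y, x z := by
        apply aux_const_le_integral hyt.le (hxii t y h1t hy.2 hyt.le)
        intro z hz
        exact hxplus_le t ⟨h1t, htH⟩ z ⟨hz.1, hz.2.trans hy.2⟩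
      rw [hslope y hy]
      calc a < xplus t := ha
        _ ≤ _ := (le_div_iff₀ (sub_pos.2 hyt)).2 hlow
    · intro b hb
      obtain ⟨v, ⟨s₀, hs₀, rfl⟩, hv⟩ :=
        exists_lt_of_csInf_lt ⟨x H, Set.mem_image_of_mem x (Set.mem_Ioc.2 ⟨htH, le_rfl⟩)⟩ hb
      filter_upwards [Ioc_mem_nhdsGT hs₀.1] with y hy
      have hyt : t < y := hy.1
      have hyH : y ≤ H := hy.2.trans hs₀.2
      have hup : (∫ z in t..y, x z) ≤ x s₀ * (y - t) := by
        apply aux_integral_le_const hyt.le (hxii t y h1t hyH hyt.le)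
        intro z hz
        exact hmono ⟨h1t.trans hz.1.le, hz.2.trans hyH⟩ ⟨h1t.trans hs₀.1.le, hs₀.2⟩
          (hz.2.trans hy.2)
      rw [hslope y ⟨hyt, hyH⟩]
      calc (∫ z in t..y, x z) / (y - t) ≤ x s₀ := (div_le_iff₀ (sub_pos.2 hyt)).2 hup
        _ < b := hv
  -- g = F t / t : continuity and right derivative
  have hgcont : ContinuousOn (fun t => (∫ z in (1:ℝ)..t, x z) / t) (Set.Icc 1 H) := by
    apply ContinuousOn.div
    · have h1 : IntegrableOn x (Set.uIcc 1 H) volume := by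
        rw [Set.uIcc_of_le hH.le]
        exact (intervalIntegrable_iff_integrableOn_Icc_of_le hH.le).1
          (hxii 1 H le_rfl le_rfl hH.le)
      have := intervalIntegral.continuousOn_primitive_interval (a := (1:ℝ)) (b := H)
        (f := x) (μ := volume) h1
      rwa [Set.uIcc_of_le hH.le] at this
    · exact continuousOn_id
    · intro t ht
      exact ne_of_gt (lt_of_lt_of_le one_pos ht.1)
  have hgderiv : ∀ t ∈ Set.Ioo (1:ℝ) H,
      HasDerivWithinAt (fun t => (∫ z in (1:ℝ)..t, x z) / t)
        ((xplus t * t - (∫ z in (1:ℝ)..t, x z) * 1) / t ^ 2) (Set.Ioi t) t := by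
    intro t ht
    exact (hFderiv t ht).div (hasDerivWithinAt_id t _)
      (ne_of_gt (lt_of_lt_of_le one_pos ht.1.le))
  -- integrability of p and p s / s^2
  have hpm : MonotoneOn p (Set.Icc (1:ℝ) H) := fun s hs t ht hst => hpmono s t hs ht hst
  have hpii : IntervalIntegrable p volume 1 H := by
    apply MonotoneOn.intervalIntegrable
    rwa [Set.uIcc_of_le hH.le]
  have hφii : IntervalIntegrable (fun s => p s / s ^ 2) volume 1 H := by
    have hc : ContinuousOn (fun s : ℝ => (s ^ 2)⁻¹) (Set.uIcc 1 H) := by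
      apply ((continuous_pow 2).continuousOn).inv₀
      intro s hs
      rw [Set.uIcc_of_le hH.le] at hs
      exact pow_ne_zero 2 (ne_of_gt (lt_of_lt_of_le one_pos hs.1))
    have := hpii.mul_continuousOn hc
    simpa [div_eq_mul_inv] using this
  have hφsub : ∀ a b : ℝ, 1 ≤ a → a ≤ b → b ≤ H →
      IntervalIntegrable (fun s => p s / s ^ 2) volume a b := by
    intro a b h1 h2 h3
    apply hφii.mono_set
    rw [Set.uIcc_of_le h2, Set.uIcc_of_le hH.le]
    exact Set.Icc_subset_Icc h1 h3
  -- the key integral inequality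
  have hkey : (∫ s in (1:ℝ)..H, p s / s ^ 2) ≤ (∫ z in (1:ℝ)..H, x z) / H := by
    have hφint : IntegrableOn (fun s => p s / s ^ 2) (Set.Icc 1 H) :=
      (intervalIntegrable_iff_integrableOn_Icc_of_le hH.le).1 hφii
    have hφg : ∀ t ∈ Set.Ioo (1:ℝ) H,
        p t / t ^ 2 ≤ (xplus t * t - (∫ z in (1:ℝ)..t, x z) * 1) / t ^ 2 := by
      intro t ht
      have ht0 : (0:ℝ) < t := lt_trans one_pos ht.1
      have hAt := hA t ⟨ht.1.le, ht.2.le⟩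
      have hxp := hle_xplus t ⟨ht.1.le, ht.2⟩
      have hnum : p t ≤ xplus t * t - (∫ z in (1:ℝ)..t, x z) * 1 := by nlinarith
      have ht2 : (0:ℝ) < t ^ 2 := by positivity
      rw [div_le_div_iff₀ ht2 ht2]
      exact mul_le_mul_of_nonneg_right hnum ht2.le
    have h := intervalIntegral.integral_le_sub_of_hasDeriv_right_of_le hH.le hgcont
      hgderiv hφint hφg
    have hzero : (∫ z in (1:ℝ)..(1:ℝ), x z) = 0 := intervalIntegral.integral_same
    rw [hzero] at h
    simpa using h
  -- combine with feasibility at H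
  have hxH1 : x H ≤ 1 := (hfeas H ⟨hH.le, le_rfl⟩).2
  have hfinal : p H + H * (∫ s in (1:ℝ)..H, p s / s ^ 2) ≤ H := by
    have h1 := hA H ⟨hH.le, le_rfl⟩
    have h2 : H * (∫ s in (1:ℝ)..H, p s / s ^ 2) ≤ ∫ z in (1:ℝ)..H, x z := by
      have := mul_le_mul_of_nonneg_left hkey hH0.le
      calc H * (∫ s in (1:ℝ)..H, p s / s ^ 2) ≤ H * ((∫ z in (1:ℝ)..H, x z) / H) := this
        _ = ∫ z in (1:ℝ)..H, x z := by field_simp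
    nlinarith [mul_le_mul_of_nonneg_left hxH1 hH0.le]
  -- lower bound pieces
  have hlog_piece : ∀ a b : ℝ, 1 ≤ a → a ≤ b → b ≤ H →
      ρ * Real.log (b / a) ≤ ∫ s in a..b, p s / s ^ 2 := by
    intro a b h1 h2 h3
    have ha0 : (0:ℝ) < a := lt_of_lt_of_le one_pos h1
    have hmono1 : (∫ s in a..b, ρ * s⁻¹) ≤ ∫ s in a..b, p s / s ^ 2 := by
      apply intervalIntegral.integral_mono_on h2 ?_ (hφsub a b h1 h2 h3)
      · intro z hz
        have hz0 : (0:ℝ) < z := lt_of_lt_of_le ha0 hz.1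
        have hr := hrob z ⟨h1.trans hz.1, hz.2.trans h3⟩
        rw [le_div_iff₀ (by positivity : (0:ℝ) < z ^ 2)]
        calc ρ * z⁻¹ * z ^ 2 = ρ * z := by field_simp
          _ ≤ p z := hr
      · apply ContinuousOn.intervalIntegrable
        apply continuousOn_const.mul
        apply continuousOn_id.inv₀
        intro s hs
        rw [Set.uIcc_of_le h2] at hs
        exact ne_of_gt (lt_of_lt_of_le ha0 hs.1)
    have hcomp : (∫ s in a..b, ρ * s⁻¹) = ρ * Real.log (b / a) := by
      rw [intervalIntegral.integral_const_mul, integral_inv]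
      rw [Set.uIcc_of_le h2]
      intro h0
      exact absurd h0.1 (not_le.2 ha0)
    linarith [hmono1, hcomp.symm.le]
  have hconst_piece : ∀ a b : ℝ, uhat ≤ a → a ≤ b → b ≤ H →
      γ * uhat * (a⁻¹ - b⁻¹) ≤ ∫ s in a..b, p s / s ^ 2 := by
    intro a b h1 h2 h3
    have ha0 : (0:ℝ) < a := lt_of_lt_of_le hu0 h1
    have ha1 : (1:ℝ) ≤ a := hu1.trans h1
    have hmono1 : (∫ s in a..b, γ * uhat * (s ^ 2)⁻¹) ≤ ∫ s in a..b, p s / s ^ 2 := by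
      apply intervalIntegral.integral_mono_on h2 ?_ (hφsub a b ha1 h2 h3)
      · intro z hz
        have hz0 : (0:ℝ) < z := lt_of_lt_of_le ha0 hz.1
        have hpz : γ * uhat ≤ p z :=
          hcons.trans (hpmono uhat z ⟨hu1, huH⟩ ⟨ha1.trans hz.1, hz.2.trans h3⟩
            (h1.trans hz.1))
        rw [le_div_iff₀ (by positivity : (0:ℝ) < z ^ 2)]
        calc γ * uhat * (z ^ 2)⁻¹ * z ^ 2 = γ * uhat := by field_simp
          _ ≤ p z := hpz
      · apply ContinuousOn.intervalIntegrable
        apply continuousOn_const.mul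
        apply ((continuous_pow 2).continuousOn).inv₀
        intro s hs
        rw [Set.uIcc_of_le h2] at hs
        exact pow_ne_zero 2 (ne_of_gt (lt_of_lt_of_le ha0 hs.1))
    have hcomp : (∫ s in a..b, γ * uhat * (s ^ 2)⁻¹) = γ * uhat * (a⁻¹ - b⁻¹) := by
      rw [intervalIntegral.integral_const_mul, aux_integral_inv_sq ha0 h2]
    linarith [hmono1, hcomp.symm.le]
  -- case split
  rcases hρ0.eq_or_lt with hρz | hρpos
  · rw [← hρz]
    simpa using hγ1
  · -- ρ > 0
    set c : ℝ := γ * uhat / ρ with hcdef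
    have hc0 : (0:ℝ) < c := by positivity
    have hcu : uhat ≤ c := by
      rw [hcdef, le_div_iff₀ hρpos]
      nlinarith
    by_cases hHc : H ≤ c
    · -- case A : max = uhat
      have hmaxle : H * ρ / γ ≤ uhat := by
        rw [div_le_iff₀ hγ]
        have := (le_div_iff₀ hρpos).1 hHc
        nlinarith
      rw [max_eq_left hmaxle]
      have hsplit : (∫ s in (1:ℝ)..uhat, p s / s ^ 2) + (∫ s in uhat..H, p s / s ^ 2)
          = ∫ s in (1:ℝ)..H, p s / s ^ 2 :=
        intervalIntegral.integral_add_adjacent_intervals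
          (hφsub 1 uhat le_rfl hu1 huH) (hφsub uhat H hu1 huH le_rfl)
      have hp1 : ρ * Real.log uhat ≤ ∫ s in (1:ℝ)..uhat, p s / s ^ 2 := by
        have := hlog_piece 1 uhat le_rfl hu1 huH
        simpa using this
      have hp2 : γ * uhat * (uhat⁻¹ - H⁻¹) ≤ ∫ s in uhat..H, p s / s ^ 2 :=
        hconst_piece uhat H le_rfl huH le_rfl
      have hpH : γ * uhat ≤ p H :=
        hcons.trans (hpmono uhat H ⟨hu1, huH⟩ ⟨hH.le, le_rfl⟩ huH)
      have hIlow : ρ * Real.log uhat + γ * uhat * (uhat⁻¹ - H⁻¹)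
          ≤ ∫ s in (1:ℝ)..H, p s / s ^ 2 := by
        rw [← hsplit]; exact add_le_add hp1 hp2
      have hHI := mul_le_mul_of_nonneg_left hIlow hH0.le
      have hexp : H * (γ * uhat * (uhat⁻¹ - H⁻¹)) = H * γ - γ * uhat := by
        field_simp
      rw [← mul_le_mul_iff_of_pos_right hH0]
      linarith [hfinal, hHI, hpH, hexp]
    · -- case B : max = H * ρ / γ
      push_neg at hHc
      have hcH : c ≤ H := hHc.le
      have hc1 : (1:ℝ) ≤ c := hu1.trans hcu
      have hmaxle : uhat ≤ H * ρ / γ := by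
        rw [le_div_iff₀ hγ]
        have := (div_lt_iff₀ hρpos).1 hHc
        nlinarith
      rw [max_eq_right hmaxle]
      have hsplit1 : (∫ s in (1:ℝ)..uhat, p s / s ^ 2) + (∫ s in uhat..c, p s / s ^ 2)
          = ∫ s in (1:ℝ)..c, p s / s ^ 2 :=
        intervalIntegral.integral_add_adjacent_intervals
          (hφsub 1 uhat le_rfl hu1 huH) (hφsub uhat c hu1 hcu hcH)
      have hsplit2 : (∫ s in (1:ℝ)..c, p s / s ^ 2) + (∫ s in c..H, p s / s ^ 2)
          = ∫ s in (1:ℝ)..H, p s / s ^ 2 :=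
        intervalIntegral.integral_add_adjacent_intervals
          (hφsub 1 c le_rfl hc1 hcH) (hφsub c H hc1 hcH le_rfl)
      have hp1 : ρ * Real.log uhat ≤ ∫ s in (1:ℝ)..uhat, p s / s ^ 2 := by
        have := hlog_piece 1 uhat le_rfl hu1 huH
        simpa using this
      have hp2 : γ - ρ ≤ ∫ s in uhat..c, p s / s ^ 2 := by
        have h := hconst_piece uhat c le_rfl hcu hcH
        have he : γ * uhat * (uhat⁻¹ - c⁻¹) = γ - ρ := by
          rw [hcdef]
          field_simp
        linarith [he ▸ h]
      have hp3 : ρ * Real.log (H / c) ≤ ∫ s in c..H, p s / s ^ 2 :=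
        hlog_piece c H hc1 hcH le_rfl
      have hpH : ρ * H ≤ p H := hrob H ⟨hH.le, le_rfl⟩
      have hIlow : ρ * Real.log uhat + (γ - ρ) + ρ * Real.log (H / c)
          ≤ ∫ s in (1:ℝ)..H, p s / s ^ 2 := by
        rw [← hsplit2, ← hsplit1]
        linarith [hp1, hp2, hp3]
      have hlogsum : Real.log uhat + Real.log (H / c) = Real.log (H * ρ / γ) := by
        rw [← Real.log_mul (ne_of_gt hu0) (ne_of_gt (div_pos hH0 hc0))]
        congr 1
        rw [hcdef]
        field_simp
      have hls : ρ * H * (Real.log uhat + Real.log (H / c))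
          = ρ * H * Real.log (H * ρ / γ) := by rw [hlogsum]
      have hHI := mul_le_mul_of_nonneg_left hIlow hH0.le
      rw [← mul_le_mul_iff_of_pos_right hH0]
      linarith [hfinal, hHI, hpH, hls]
end

section
/- Let H > 1, let γ, ρ be real numbers with 0 ≤ ρ ≤ γ ≤ 1 and γ > 0, and let û ∈ [1,H]. If γ + ρ·ln(max{û, H·ρ/γ}) ≤ 1, then there exists a feasible DSIC single-bidder auction (x,p) on [1,H] such that p(t) ≥ ρ·t for all t ∈ [1,H] and p(û) ≥ γ·û. -/
open MeasureTheory intervalIntegral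

namespace CRAux

noncomputable def xf (γ ρ uhat : ℝ) : ℝ → ℝ :=
  fun t => if t < uhat then ρ * (1 + Real.log t) else γ + ρ * Real.log (max uhat (t * ρ / γ))

noncomputable def pf (γ ρ uhat : ℝ) : ℝ → ℝ :=
  fun t => if t < uhat then ρ * t else max (γ * uhat) (ρ * t)

noncomputable def Gf (γ ρ uhat : ℝ) : ℝ → ℝ :=
  fun t => t * xf γ ρ uhat t - pf γ ρ uhat t

variable {γ ρ uhat : ℝ}

lemma Gval1 (hγ : 0 < γ) (hρ0 : 0 ≤ ρ) (hργ : ρ ≤ γ)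
    {t : ℝ} (ht1 : 1 ≤ t) (htu : t ≤ uhat) :
    Gf γ ρ uhat t = ρ * (t * Real.log t) := by
  rcases lt_or_eq_of_le htu with h | h
  · simp only [Gf, xf, pf, if_pos h]; ring
  · subst h
    have h1 : ¬ t < t := lt_irrefl t
    have hmax : max t (t * ρ / γ) = t := max_eq_left (by
      rw [div_le_iff₀ hγ]; nlinarith)
    have hp : max (γ * t) (ρ * t) = γ * t := max_eq_left (by nlinarith)
    simp only [Gf, xf, pf, if_neg h1, hmax, hp]; ring

lemma Gval2 (hγ : 0 < γ) (hρ0 : 0 ≤ ρ)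
    {t : ℝ} (hut : uhat ≤ t) (htρ : ρ * t ≤ γ * uhat) :
    Gf γ ρ uhat t = t * (γ + ρ * Real.log uhat) - γ * uhat := by
  have h1 : ¬ t < uhat := not_lt.mpr hut
  have hmax : max uhat (t * ρ / γ) = uhat := max_eq_left (by
    rw [div_le_iff₀ hγ]; nlinarith)
  have hp : max (γ * uhat) (ρ * t) = γ * uhat := max_eq_left htρ
  simp only [Gf, xf, pf, if_neg h1, hmax, hp]

lemma Gval3 (hγ : 0 < γ) (hρ0 : 0 ≤ ρ) (hργ : ρ ≤ γ) (hu1 : 1 ≤ uhat)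
    {t : ℝ} (ht1 : 1 ≤ t) (htρ : γ * uhat ≤ ρ * t) :
    Gf γ ρ uhat t = γ * t + ρ * (t * Real.log t) - ρ * t + (ρ * Real.log (ρ / γ)) * t := by
  have hρpos : 0 < ρ := by nlinarith
  have hut : uhat ≤ t := by nlinarith
  have h1 : ¬ t < uhat := not_lt.mpr hut
  have hmax : max uhat (t * ρ / γ) = t * ρ / γ := max_eq_right (by
    rw [le_div_iff₀ hγ]; nlinarith)
  have hp : max (γ * uhat) (ρ * t) = ρ * t := max_eq_right htρ
  have ht0 : t ≠ 0 := by positivity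
  have hr0 : ρ / γ ≠ 0 := by positivity
  simp only [Gf, xf, pf, if_neg h1, hmax, hp]
  rw [show t * ρ / γ = t * (ρ / γ) by ring, Real.log_mul ht0 hr0]
  ring

lemma lemA (hγ : 0 < γ) (hρ0 : 0 ≤ ρ) (hργ : ρ ≤ γ)
    {s t : ℝ} (hs : 1 ≤ s) (hst : s ≤ t) (htu : t ≤ uhat) :
    ∫ z in s..t, xf γ ρ uhat z = Gf γ ρ uhat t - Gf γ ρ uhat s := by
  have h1 : ∫ z in s..t, xf γ ρ uhat z = ∫ z in s..t, ρ * (Real.log z + 1) := by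
    apply intervalIntegral.integral_congr_ae
    have hae : ∀ᵐ z : ℝ, z ≠ uhat := by
      rw [MeasureTheory.ae_iff]
      have h : {z : ℝ | ¬ z ≠ uhat} = {uhat} := by ext z; simp
      rw [h]
      exact Real.volume_singleton
    filter_upwards [hae] with z hz hzI
    rw [Set.uIoc_of_le hst] at hzI
    have hz2 : z < uhat := lt_of_le_of_ne (hzI.2.trans htu) hz
    simp only [xf, if_pos hz2]; ring
  rw [h1]
  have h2 : ∫ z in s..t, ρ * (Real.log z + 1)
      = (fun z => ρ * (z * Real.log z)) t - (fun z => ρ * (z * Real.log z)) s := by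
    apply intervalIntegral.integral_eq_sub_of_hasDerivAt
    · intro z hz
      rw [Set.uIcc_of_le hst] at hz
      have hz0 : z ≠ 0 := by nlinarith [hz.1]
      exact (Real.hasDerivAt_mul_log hz0).const_mul ρ
    · apply ContinuousOn.intervalIntegrable
      apply ContinuousOn.mul continuousOn_const
      apply ContinuousOn.add ?_ continuousOn_const
      apply Real.continuousOn_log.mono
      intro z hz
      rw [Set.uIcc_of_le hst] at hz
      simp only [Set.mem_compl_iff, Set.mem_singleton_iff]
      nlinarith [hz.1]
  rw [h2, Gval1 hγ hρ0 hργ (hs.trans hst) htu, Gval1 hγ hρ0 hργ hs (hst.trans htu)]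

lemma lemB (hγ : 0 < γ) (hρ0 : 0 ≤ ρ)
    {s t : ℝ} (hus : uhat ≤ s) (hst : s ≤ t) (htρ : ρ * t ≤ γ * uhat) :
    ∫ z in s..t, xf γ ρ uhat z = Gf γ ρ uhat t - Gf γ ρ uhat s := by
  have key : Set.EqOn (xf γ ρ uhat) (fun _ => γ + ρ * Real.log uhat) (Set.uIcc s t) := by
    intro z hz
    rw [Set.uIcc_of_le hst] at hz
    have hz1 : ¬ z < uhat := not_lt.mpr (hus.trans hz.1)
    have hmax : max uhat (z * ρ / γ) = uhat := max_eq_left (by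
      rw [div_le_iff₀ hγ]
      nlinarith [mul_le_mul_of_nonneg_left hz.2 hρ0])
    simp only [xf, if_neg hz1, hmax]
  rw [intervalIntegral.integral_congr key, intervalIntegral.integral_const]
  have hsρ : ρ * s ≤ γ * uhat := le_trans (by nlinarith) htρ
  rw [Gval2 hγ hρ0 (hus.trans hst) htρ, Gval2 hγ hρ0 hus hsρ]
  simp only [smul_eq_mul]; ring

lemma lemC (hγ : 0 < γ) (hρ0 : 0 ≤ ρ) (hργ : ρ ≤ γ) (hu1 : 1 ≤ uhat)
    {s t : ℝ} (hs : 1 ≤ s) (hst : s ≤ t) (hρs : γ * uhat ≤ ρ * s) :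
    ∫ z in s..t, xf γ ρ uhat z = Gf γ ρ uhat t - Gf γ ρ uhat s := by
  have hρpos : 0 < ρ := by nlinarith
  have hr0 : ρ / γ ≠ 0 := by positivity
  have key : Set.EqOn (xf γ ρ uhat)
      (fun z => γ + ρ * Real.log z + ρ * Real.log (ρ / γ)) (Set.uIcc s t) := by
    intro z hz
    rw [Set.uIcc_of_le hst] at hz
    have hz1 : 1 ≤ z := hs.trans hz.1
    have hρz : γ * uhat ≤ ρ * z := le_trans hρs (by nlinarith [hz.1])
    have huz : uhat ≤ z := by nlinarith
    have hz0 : z ≠ 0 := by nlinarith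
    have hznlt : ¬ z < uhat := not_lt.mpr huz
    have hmax : max uhat (z * ρ / γ) = z * ρ / γ := max_eq_right (by
      rw [le_div_iff₀ hγ]; nlinarith)
    simp only [xf, if_neg hznlt, hmax]
    rw [show z * ρ / γ = z * (ρ / γ) by ring, Real.log_mul hz0 hr0]
    ring
  rw [intervalIntegral.integral_congr key]
  have h2 : ∫ z in s..t, (γ + ρ * Real.log z + ρ * Real.log (ρ / γ))
      = (fun z => γ * z + ρ * (z * Real.log z) - ρ * z + (ρ * Real.log (ρ / γ)) * z) t
        - (fun z => γ * z + ρ * (z * Real.log z) - ρ * z + (ρ * Real.log (ρ / γ)) * z) s := by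
    apply intervalIntegral.integral_eq_sub_of_hasDerivAt
    · intro z hz
      rw [Set.uIcc_of_le hst] at hz
      have hz0 : z ≠ 0 := by nlinarith [hz.1]
      have hd : HasDerivAt
          (fun z => γ * z + ρ * (z * Real.log z) - ρ * z + (ρ * Real.log (ρ / γ)) * z)
          (γ * 1 + ρ * (Real.log z + 1) - ρ * 1 + (ρ * Real.log (ρ / γ)) * 1) z :=
        ((((hasDerivAt_id z).const_mul γ).add
          ((Real.hasDerivAt_mul_log hz0).const_mul ρ)).sub
          ((hasDerivAt_id z).const_mul ρ)).add ((hasDerivAt_id z).const_mul (ρ * Real.log (ρ / γ)))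
      refine hd.congr_deriv ?_
      ring
    · apply ContinuousOn.intervalIntegrable
      apply ContinuousOn.add
      · apply ContinuousOn.add continuousOn_const
        apply ContinuousOn.mul continuousOn_const
        apply Real.continuousOn_log.mono
        intro z hz
        rw [Set.uIcc_of_le hst] at hz
        simp only [Set.mem_compl_iff, Set.mem_singleton_iff]
        nlinarith [hz.1]
      · exact continuousOn_const
  rw [h2]
  have hρt : γ * uhat ≤ ρ * t := le_trans hρs (by nlinarith)
  rw [Gval3 hγ hρ0 hργ hu1 (hs.trans hst) hρt, Gval3 hγ hρ0 hργ hu1 hs hρs]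

lemma mono (hγ : 0 < γ) (hρ0 : 0 ≤ ρ) (hργ : ρ ≤ γ) (hu1 : 1 ≤ uhat) :
    MonotoneOn (xf γ ρ uhat) (Set.Ici 1) := by
  intro u hu v hv huv
  simp only [Set.mem_Ici] at hu hv
  have hu0 : 0 < u := by linarith
  by_cases h1 : u < uhat
  · by_cases h2 : v < uhat
    · simp only [xf, if_pos h1, if_pos h2]
      have := Real.log_le_log hu0 huv
      nlinarith
    · simp only [xf, if_pos h1, if_neg h2]
      have hlog : Real.log u ≤ Real.log (max uhat (v * ρ / γ)) :=
        Real.log_le_log hu0 (le_trans h1.le (le_max_left _ _))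
      nlinarith
  · have h2 : ¬ v < uhat := fun hv2 => h1 (lt_of_le_of_lt huv hv2)
    simp only [xf, if_neg h1, if_neg h2]
    have hmm : max uhat (u * ρ / γ) ≤ max uhat (v * ρ / γ) :=
      max_le_max le_rfl ((div_le_div_iff_of_pos_right hγ).mpr (by nlinarith))
    have hpos : 0 < max uhat (u * ρ / γ) := lt_of_lt_of_le (by linarith) (le_max_left _ _)
    have := Real.log_le_log hpos hmm
    nlinarith

lemma keyInt (hγ : 0 < γ) (hρ0 : 0 ≤ ρ) (hργ : ρ ≤ γ) (hu1 : 1 ≤ uhat)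
    {s t : ℝ} (hs : 1 ≤ s) (hst : s ≤ t) :
    ∫ z in s..t, xf γ ρ uhat z = Gf γ ρ uhat t - Gf γ ρ uhat s := by
  have hint : ∀ u v : ℝ, 1 ≤ u → u ≤ v → IntervalIntegrable (xf γ ρ uhat) volume u v := by
    intro u v hu huv
    apply MonotoneOn.intervalIntegrable
    apply (mono hγ hρ0 hργ hu1).mono
    rw [Set.uIcc_of_le huv]
    intro z hz
    exact le_trans hu hz.1
  set a : ℝ := max s (min uhat t) with ha
  set c : ℝ := if ρ = 0 then t else max a (min t (γ * uhat / ρ)) with hc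
  have hsa : s ≤ a := le_max_left _ _
  have hat : a ≤ t := max_le hst (min_le_right _ _)
  have hac : a ≤ c := by
    rw [hc]; split
    · exact hat
    · exact le_max_left _ _
  have hct : c ≤ t := by
    rw [hc]; split
    · exact le_rfl
    · exact max_le hat (min_le_left _ _)
  have h1a : 1 ≤ a := hs.trans hsa
  have h1c : 1 ≤ c := h1a.trans hac
  have I1 : ∫ z in s..a, xf γ ρ uhat z = Gf γ ρ uhat a - Gf γ ρ uhat s := by
    rcases le_total uhat s with h | h
    · have has : a = s := by
        rw [ha, min_eq_left (h.trans hst), max_eq_left h]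
      rw [has, intervalIntegral.integral_same, sub_self]
    · have hau : a ≤ uhat := max_le h (min_le_left _ _)
      exact lemA hγ hρ0 hργ hs hsa hau
  have I2 : ∫ z in a..c, xf γ ρ uhat z = Gf γ ρ uhat c - Gf γ ρ uhat a := by
    rcases le_total t uhat with h | h
    · have hat' : a = t := by rw [ha, min_eq_right h, max_eq_right hst]
      have hct' : c = t := by
        rw [hc]; split
        · rfl
        · rename_i hρ
          have hρpos : 0 < ρ := lt_of_le_of_ne hρ0 (Ne.symm hρ)
          have ht1 : 1 ≤ t := hs.trans hst
          have htd : t ≤ γ * uhat / ρ := by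
            rw [le_div_iff₀ hρpos]
            nlinarith
          rw [min_eq_left htd, hat', max_eq_right le_rfl]
      rw [hat', hct', intervalIntegral.integral_same, sub_self]
    · have hua : uhat ≤ a := by
        rw [ha, min_eq_left h]
        exact le_max_right s uhat
      rw [hc]; split
      · rename_i hρ
        subst hρ
        exact lemB hγ hρ0 hua hat (by nlinarith)
      · rename_i hρ
        have hρpos : 0 < ρ := lt_of_le_of_ne hρ0 (Ne.symm hρ)
        rcases le_total a (γ * uhat / ρ) with h3 | h3
        · have hcle : max a (min t (γ * uhat / ρ)) ≤ γ * uhat / ρ :=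
            max_le h3 (min_le_right _ _)
          have h4 := (le_div_iff₀ hρpos).mp hcle
          exact lemB hγ hρ0 hua (le_max_left _ _) (by linarith)
        · have hca : max a (min t (γ * uhat / ρ)) = a :=
            max_eq_left (le_trans (min_le_right _ _) h3)
          rw [hca, intervalIntegral.integral_same, sub_self]
  have I3 : ∫ z in c..t, xf γ ρ uhat z = Gf γ ρ uhat t - Gf γ ρ uhat c := by
    rw [hc]; split
    · rw [intervalIntegral.integral_same, sub_self]
    · rename_i hρ
      have hρpos : 0 < ρ := lt_of_le_of_ne hρ0 (Ne.symm hρ)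
      rcases le_total t (γ * uhat / ρ) with h3 | h3
      · have hct' : max a (min t (γ * uhat / ρ)) = t := by
          rw [min_eq_left h3, max_eq_right hat]
        rw [hct', intervalIntegral.integral_same, sub_self]
      · have hge : γ * uhat / ρ ≤ max a (min t (γ * uhat / ρ)) := by
          rw [min_eq_right h3]; exact le_max_right _ _
        have h4 := (div_le_iff₀ hρpos).mp hge
        exact lemC hγ hρ0 hργ hu1 (h1a.trans (le_max_left _ _))
          (max_le hat (min_le_left _ _)) (by linarith)
  rw [← intervalIntegral.integral_add_adjacent_intervals
        (hint s c hs (hsa.trans hac)) (hint c t h1c hct),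
      ← intervalIntegral.integral_add_adjacent_intervals
        (hint s a hs hsa) (hint a c h1a hac),
      I1, I2, I3]
  ring

end CRAux

open CRAux in
/-- The "if" part of Theorem 1 of the paper: if `γ + ρ·ln(max{uhat, H·ρ/γ}) ≤ 1`
then there exists a feasible DSIC single-bidder auction on `[1, H]` that is
`γ`-consistent and `ρ`-robust with respect to the prediction `uhat`. -/
theorem consistency_robustness_sufficient (H : ℝ) (hH : 1 < H)
    (γ ρ : ℝ) (hρ0 : 0 ≤ ρ) (hργ : ρ ≤ γ) (hγ1 : γ ≤ 1) (hγ : 0 < γ)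
    (uhat : ℝ) (huhat : uhat ∈ Set.Icc 1 H)
    (hcond : γ + ρ * Real.log (max uhat (H * ρ / γ)) ≤ 1) :
    ∃ x p : ℝ → ℝ,
      -- feasibility
      (∀ t ∈ Set.Icc 1 H, 0 ≤ x t ∧ x t ≤ 1) ∧
      -- DSIC: nonnegative payments, monotone allocation, individual rationality,
      -- and Myerson's payment identity
      (∀ t ∈ Set.Icc 1 H, 0 ≤ p t) ∧
      MonotoneOn x (Set.Icc 1 H) ∧
      p 1 ≤ x 1 ∧
      (∀ s t : ℝ, 1 ≤ s → s ≤ t → t ≤ H →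
        p t - p s = t * x t - s * x s - ∫ z in s..t, x z) ∧
      -- ρ-robustness and γ-consistency
      (∀ t ∈ Set.Icc 1 H, ρ * t ≤ p t) ∧
      γ * uhat ≤ p uhat := by
  obtain ⟨hu1, huH⟩ := huhat
  refine ⟨xf γ ρ uhat, pf γ ρ uhat, ?_, ?_, ?_, ?_, ?_, ?_, ?_⟩
  · -- feasibility
    intro t ht
    obtain ⟨ht1, htH⟩ := ht
    have ht0 : 0 < t := by linarith
    constructor
    · by_cases h : t < uhat
      · simp only [xf, if_pos h]
        have := Real.log_nonneg ht1
        positivity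
      · simp only [xf, if_neg h]
        have hln : (0:ℝ) ≤ Real.log (max uhat (t * ρ / γ)) :=
          Real.log_nonneg (le_trans hu1 (le_max_left _ _))
        nlinarith
    · by_cases h : t < uhat
      · simp only [xf, if_pos h]
        have hlm : Real.log t ≤ Real.log (max uhat (H * ρ / γ)) :=
          Real.log_le_log ht0 (le_trans h.le (le_max_left _ _))
        nlinarith [mul_le_mul_of_nonneg_left hlm hρ0]
      · simp only [xf, if_neg h]
        have hmm : max uhat (t * ρ / γ) ≤ max uhat (H * ρ / γ) :=
          max_le_max le_rfl ((div_le_div_iff_of_pos_right hγ).mpr (by nlinarith))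
        have hpos : 0 < max uhat (t * ρ / γ) := lt_of_lt_of_le (by linarith) (le_max_left _ _)
        have hlm := Real.log_le_log hpos hmm
        nlinarith [mul_le_mul_of_nonneg_left hlm hρ0]
  · -- p nonneg
    intro t ht
    obtain ⟨ht1, htH⟩ := ht
    by_cases h : t < uhat
    · simp only [pf, if_pos h]; nlinarith
    · simp only [pf, if_neg h]
      exact le_trans (by nlinarith) (le_max_right _ _)
  · -- monotone
    exact (mono hγ hρ0 hργ hu1).mono (fun z hz => hz.1)
  · -- IR
    by_cases h : (1:ℝ) < uhat
    · simp only [pf, xf, if_pos h, Real.log_one]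
      norm_num
    · have hu : uhat = 1 := le_antisymm (not_lt.mp h) hu1
      subst hu
      have h1 : ¬ (1:ℝ) < 1 := lt_irrefl 1
      have hmax : max (1:ℝ) (1 * ρ / γ) = 1 := max_eq_left (by
        rw [div_le_iff₀ hγ]; nlinarith)
      have hp : max (γ * 1) (ρ * 1) = γ * 1 := max_eq_left (by nlinarith)
      simp only [pf, xf, if_neg h1, hmax, hp, Real.log_one]
      nlinarith
  · -- payment identity
    intro s t hs hst htH
    rw [keyInt hγ hρ0 hργ hu1 hs hst]
    simp only [Gf]
    ring
  · -- robustness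
    intro t ht
    by_cases h : t < uhat
    · simp only [pf, if_pos h]
      exact le_rfl
    · simp only [pf, if_neg h]
      exact le_max_right _ _
  · -- consistency
    have h : ¬ uhat < uhat := lt_irrefl uhat
    simp only [pf, if_neg h]
    exact le_max_left _ _
end

section
/- Let H > 1, let û ∈ [1,H], and let ρ : [1,H] → [0,1] be a differentiable function such that ρ(η) is non-increasing in η and η·ρ(η) is non-decreasing in η. There exists a feasible DSIC single-bidder auction (x,p) on [1,H] with the error-dependent robustness guarantee p(t) ≥ ρ(û/t)·t for all t ∈ [1,û] and p(t) ≥ ρ(t/û)·t for all t ∈ [û,H] if and only if ρ(H/û) + ∫_1^û ρ(z)/z dz + ∫_1^{H/û} ρ(z)/z dz ≤ 1. -/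
open MeasureTheory intervalIntegral

section aux
open Set

namespace RobustAux

/-- continuous extension of ρ by clamping to [1,H] -/
noncomputable def sg (ρ : ℝ → ℝ) (H : ℝ) : ℝ → ℝ := fun η => ρ (max 1 (min η H))

/-- the guarantee function g(z) = ρ(max(û/z, z/û)) (clamped) -/
noncomputable def gf (ρ : ℝ → ℝ) (H uhat : ℝ) : ℝ → ℝ :=
  fun z => sg ρ H (max (uhat / z) (z / uhat))

/-- continuous version of ρ(w)/w -/
noncomputable def qf (ρ : ℝ → ℝ) (H : ℝ) : ℝ → ℝ :=
  fun w => sg ρ H (max w 1) / max w 1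

variable {H uhat : ℝ} {ρ : ℝ → ℝ}

lemma clamp_mem (hH : 1 ≤ H) (η : ℝ) : max 1 (min η H) ∈ Icc (1:ℝ) H :=
  ⟨le_max_left _ _, max_le hH (min_le_right _ _)⟩

lemma sg_cont (hH : 1 ≤ H) (hρc : ContinuousOn ρ (Icc 1 H)) : Continuous (sg ρ H) := by
  apply hρc.comp_continuous
  · exact continuous_const.max (continuous_id.min continuous_const)
  · exact clamp_mem hH

lemma sg_eq {η : ℝ} (hη : η ∈ Icc 1 H) : sg ρ H η = ρ η := by
  unfold sg
  rw [min_eq_left hη.2, max_eq_right hη.1]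

lemma qf_cont (hH : 1 ≤ H) (hρc : ContinuousOn ρ (Icc 1 H)) : Continuous (qf ρ H) := by
  apply Continuous.div
  · exact (sg_cont hH hρc).comp (continuous_id.max continuous_const)
  · exact continuous_id.max continuous_const
  · intro w
    have : (1:ℝ) ≤ max w 1 := le_max_right _ _
    positivity

lemma qf_eq (hH : 1 ≤ H) {w : ℝ} (hw : w ∈ Icc 1 H) : qf ρ H w = ρ w / w := by
  unfold qf
  rw [max_eq_left hw.1, sg_eq hw]

lemma gf_cont_at (hu : 1 ≤ uhat) (hH : 1 ≤ H) (hρc : ContinuousOn ρ (Icc 1 H))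
    {z : ℝ} (hz : z ≠ 0) : ContinuousAt (gf ρ H uhat) z := by
  have hu0 : uhat ≠ 0 := by positivity
  have h1 : ContinuousAt (fun z : ℝ => max (uhat / z) (z / uhat)) z :=
    by fun_prop (disch := assumption)
  exact ((sg_cont hH hρc).continuousAt).comp h1

lemma gf_eq_low (hu : 1 ≤ uhat) {z : ℝ} (hz : z ∈ Icc 1 uhat) :
    gf ρ H uhat z = sg ρ H (uhat / z) := by
  unfold gf
  have hz0 : 0 < z := lt_of_lt_of_le zero_lt_one hz.1
  have hu0 : 0 < uhat := lt_of_lt_of_le zero_lt_one hu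
  rw [max_eq_left]
  rw [div_le_div_iff₀ hu0 hz0]
  nlinarith [hz.1, hz.2]

lemma gf_eq_high (hu : 1 ≤ uhat) {z : ℝ} (hz : z ∈ Icc uhat H) :
    gf ρ H uhat z = sg ρ H (z / uhat) := by
  unfold gf
  have hu0 : 0 < uhat := lt_of_lt_of_le zero_lt_one hu
  have hz0 : 0 < z := lt_of_lt_of_le hu0 hz.1
  rw [max_eq_right]
  rw [div_le_div_iff₀ hz0 hu0]
  nlinarith [hz.1]

lemma ratio_mem_low (hu : uhat ∈ Icc 1 H) {z : ℝ} (hz : z ∈ Icc 1 uhat) :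
    uhat / z ∈ Icc (1:ℝ) H := by
  have hz0 : 0 < z := lt_of_lt_of_le zero_lt_one hz.1
  constructor
  · rw [le_div_iff₀ hz0]; simpa using hz.2
  · rw [div_le_iff₀ hz0]
    nlinarith [hu.2, hz.1, lt_of_lt_of_le zero_lt_one (hu.1.trans hu.2)]

lemma ratio_mem_high (hu : uhat ∈ Icc 1 H) {z : ℝ} (hz : z ∈ Icc uhat H) :
    z / uhat ∈ Icc (1:ℝ) H := by
  have hu0 : 0 < uhat := lt_of_lt_of_le zero_lt_one hu.1
  constructor
  · rw [le_div_iff₀ hu0]; simpa using hz.1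
  · rw [div_le_iff₀ hu0]
    nlinarith [hz.2, hu.1, lt_of_lt_of_le zero_lt_one (hu.1.trans hz.1)]

lemma gf_eq_low' (hu : uhat ∈ Icc 1 H) {z : ℝ} (hz : z ∈ Icc 1 uhat) :
    gf ρ H uhat z = ρ (uhat / z) := by
  rw [gf_eq_low hu.1 hz, sg_eq (ratio_mem_low hu hz)]

lemma gf_eq_high' (hu : uhat ∈ Icc 1 H) {z : ℝ} (hz : z ∈ Icc uhat H) :
    gf ρ H uhat z = ρ (z / uhat) := by
  rw [gf_eq_high hu.1 hz, sg_eq (ratio_mem_high hu hz)]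

lemma gf_mem (hu : uhat ∈ Icc 1 H) (hρrange : ∀ η ∈ Set.Icc 1 H, ρ η ∈ Set.Icc (0 : ℝ) 1)
    {z : ℝ} (hz : z ∈ Icc 1 H) : gf ρ H uhat z ∈ Icc (0:ℝ) 1 := by
  rcases le_total z uhat with h | h
  · rw [gf_eq_low' hu ⟨hz.1, h⟩]
    exact hρrange _ (ratio_mem_low hu ⟨hz.1, h⟩)
  · rw [gf_eq_high' hu ⟨h, hz.2⟩]
    exact hρrange _ (ratio_mem_high hu ⟨h, hz.2⟩)


lemma subst_low (hu : uhat ∈ Icc 1 H) (hρc : ContinuousOn ρ (Icc 1 H)) :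
    ∫ z in (1:ℝ)..uhat, gf ρ H uhat z / z = ∫ w in (1:ℝ)..uhat, ρ w / w := by
  have hH1 : (1:ℝ) ≤ H := hu.1.trans hu.2
  have hu1 : (1:ℝ) ≤ uhat := hu.1
  have hu0 : (0:ℝ) < uhat := lt_of_lt_of_le one_pos hu1
  have key : (∫ z in (1:ℝ)..uhat, (-(uhat / z^2)) • ((qf ρ H) ∘ (fun z => uhat / z)) z)
      = ∫ w in (uhat/1)..(uhat/uhat), qf ρ H w := by
    apply integral_comp_smul_deriv
    · intro z hz
      rw [uIcc_of_le hu1] at hz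
      have hz0 : z ≠ 0 := by nlinarith [hz.1]
      simp only [div_eq_mul_inv]
      refine ((hasDerivAt_inv hz0).const_mul uhat).congr_deriv ?_
      ring
    · apply ContinuousOn.neg
      apply ContinuousOn.div continuousOn_const (continuous_pow 2).continuousOn
      intro z hz
      rw [uIcc_of_le hu1] at hz
      have : (0:ℝ) < z := lt_of_lt_of_le one_pos hz.1
      positivity
    · exact qf_cont hH1 hρc
  rw [div_self (ne_of_gt hu0), div_one] at key
  have lhs_eq : ∫ z in (1:ℝ)..uhat, gf ρ H uhat z / z
      = -∫ z in (1:ℝ)..uhat, (-(uhat / z^2)) • ((qf ρ H) ∘ (fun z => uhat / z)) z := by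
    rw [← intervalIntegral.integral_neg]
    apply integral_congr
    intro z hz
    rw [uIcc_of_le hu1] at hz
    have hz0 : (0:ℝ) < z := lt_of_lt_of_le one_pos hz.1
    have h1 : (1:ℝ) ≤ uhat / z := (le_div_iff₀ hz0).2 (by simpa using hz.2)
    show gf ρ H uhat z / z = -(-(uhat / z^2) • ((qf ρ H) ∘ (fun z => uhat / z)) z)
    rw [Function.comp_apply, gf_eq_low hu1 hz]
    unfold qf
    rw [max_eq_left h1, smul_eq_mul]
    have hz0' : z ≠ 0 := ne_of_gt hz0
    have hu0' : uhat ≠ 0 := ne_of_gt hu0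
    field_simp
  rw [lhs_eq, key, integral_symm 1 uhat, neg_neg]
  apply integral_congr
  intro w hw
  rw [uIcc_of_le hu1] at hw
  exact qf_eq hH1 ⟨hw.1, hw.2.trans hu.2⟩

lemma subst_high (hu : uhat ∈ Icc 1 H) (hρc : ContinuousOn ρ (Icc 1 H)) :
    ∫ z in uhat..H, gf ρ H uhat z / z = ∫ w in (1:ℝ)..(H/uhat), ρ w / w := by
  have hH1 : (1:ℝ) ≤ H := hu.1.trans hu.2
  have hu1 : (1:ℝ) ≤ uhat := hu.1
  have hu0 : (0:ℝ) < uhat := lt_of_lt_of_le one_pos hu1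
  have huH : uhat ≤ H := hu.2
  have key : (∫ z in uhat..H, (1/uhat) • ((qf ρ H) ∘ (fun z => z / uhat)) z)
      = ∫ w in (uhat/uhat)..(H/uhat), qf ρ H w := by
    apply integral_comp_smul_deriv
    · intro z _
      simpa using (hasDerivAt_id z).div_const uhat
    · exact continuousOn_const
    · exact qf_cont hH1 hρc
  rw [div_self (ne_of_gt hu0)] at key
  have lhs_eq : ∫ z in uhat..H, gf ρ H uhat z / z
      = ∫ z in uhat..H, (1/uhat) • ((qf ρ H) ∘ (fun z => z / uhat)) z := by
    apply integral_congr
    intro z hz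
    rw [uIcc_of_le huH] at hz
    have hz0 : (0:ℝ) < z := lt_of_lt_of_le hu0 hz.1
    have h1 : (1:ℝ) ≤ z / uhat := (le_div_iff₀ hu0).2 (by simpa using hz.1)
    show gf ρ H uhat z / z = (1/uhat) • ((qf ρ H) ∘ (fun z => z / uhat)) z
    rw [Function.comp_apply, gf_eq_high hu1 hz]
    unfold qf
    rw [max_eq_left h1, smul_eq_mul]
    have hz0' : z ≠ 0 := ne_of_gt hz0
    have hu0' : uhat ≠ 0 := ne_of_gt hu0
    field_simp
  rw [lhs_eq, key]
  apply integral_congr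
  intro w hw
  have hHu1 : (1:ℝ) ≤ H / uhat := (le_div_iff₀ hu0).2 (by simpa using huH)
  rw [uIcc_of_le hHu1] at hw
  refine qf_eq hH1 ⟨hw.1, hw.2.trans ?_⟩
  exact div_le_self (by linarith) hu1

lemma gfz_contOn (hu1 : 1 ≤ uhat) (hH : 1 ≤ H) (hρc : ContinuousOn ρ (Icc 1 H)) :
    ContinuousOn (fun z => gf ρ H uhat z / z) (Ici (1:ℝ)) := by
  intro z hz
  have hz0 : z ≠ 0 := by
    have : (0:ℝ) < z := lt_of_lt_of_le one_pos hz
    exact ne_of_gt this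
  exact ((gf_cont_at hu1 hH hρc hz0).div continuousAt_id hz0).continuousWithinAt

lemma gfz_intable (hu1 : 1 ≤ uhat) (hH : 1 ≤ H) (hρc : ContinuousOn ρ (Icc 1 H))
    {a b : ℝ} (ha : 1 ≤ a) (hb : 1 ≤ b) :
    IntervalIntegrable (fun z => gf ρ H uhat z / z) volume a b := by
  apply ContinuousOn.intervalIntegrable
  apply (gfz_contOn hu1 hH hρc).mono
  intro z hz
  rcases le_total a b with h | h
  · rw [uIcc_of_le h] at hz; exact ha.trans hz.1
  · rw [uIcc_of_ge h] at hz; exact hb.trans hz.1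

lemma key_integral (hu : uhat ∈ Icc 1 H) (hρc : ContinuousOn ρ (Icc 1 H)) :
    ∫ z in (1:ℝ)..H, gf ρ H uhat z / z
      = (∫ z in (1:ℝ)..uhat, ρ z / z) + ∫ z in (1:ℝ)..(H/uhat), ρ z / z := by
  have hH1 : (1:ℝ) ≤ H := hu.1.trans hu.2
  rw [← integral_add_adjacent_intervals (b := uhat)
    (gfz_intable hu.1 hH1 hρc le_rfl hu.1) (gfz_intable hu.1 hH1 hρc hu.1 hH1),
    subst_low hu hρc, subst_high hu hρc]


noncomputable def Gf (ρ : ℝ → ℝ) (H uhat : ℝ) : ℝ → ℝ :=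
  fun t => ∫ z in (1:ℝ)..t, gf ρ H uhat z / z

lemma gfz_meas (hH : 1 ≤ H) (hρc : ContinuousOn ρ (Icc 1 H)) :
    Measurable (fun z => gf ρ H uhat z / z) := by
  apply Measurable.div _ measurable_id
  exact (sg_cont hH hρc).measurable.comp
    ((measurable_const.div measurable_id).max (measurable_id.div measurable_const))

lemma Gf_hasDeriv (hu : uhat ∈ Icc 1 H) (hρc : ContinuousOn ρ (Icc 1 H))
    {b : ℝ} (hb : 1 ≤ b) :
    HasDerivAt (Gf ρ H uhat) (gf ρ H uhat b / b) b := by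
  have hH1 : (1:ℝ) ≤ H := hu.1.trans hu.2
  have hb0 : b ≠ 0 := ne_of_gt (lt_of_lt_of_le one_pos hb)
  exact integral_hasDerivAt_right (gfz_intable hu.1 hH1 hρc le_rfl hb)
    ((gfz_meas hH1 hρc).stronglyMeasurable.stronglyMeasurableAtFilter)
    ((gf_cont_at hu.1 hH1 hρc hb0).div continuousAt_id hb0)

lemma Gf_nonneg (hu : uhat ∈ Icc 1 H)
    (hρrange : ∀ η ∈ Set.Icc 1 H, ρ η ∈ Set.Icc (0 : ℝ) 1)
    {t : ℝ} (ht : t ∈ Icc 1 H) : 0 ≤ Gf ρ H uhat t := by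
  apply intervalIntegral.integral_nonneg ht.1
  intro z hz
  have hz1 : z ∈ Icc (1:ℝ) H := ⟨hz.1, hz.2.trans ht.2⟩
  have h0 : (0:ℝ) < z := lt_of_lt_of_le one_pos hz1.1
  have := (gf_mem hu hρrange hz1).1
  positivity

lemma Gf_diff (hu : uhat ∈ Icc 1 H) (hρc : ContinuousOn ρ (Icc 1 H))
    {s t : ℝ} (hs : 1 ≤ s) (hst : s ≤ t) (ht : t ≤ H) :
    Gf ρ H uhat t - Gf ρ H uhat s = ∫ z in s..t, gf ρ H uhat z / z := by
  have hH1 : (1:ℝ) ≤ H := hu.1.trans hu.2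
  have h := integral_add_adjacent_intervals (a := (1:ℝ)) (b := s) (c := t)
    (gfz_intable hu.1 hH1 hρc le_rfl hs) (gfz_intable hu.1 hH1 hρc hs (hs.trans hst))
  unfold Gf
  rw [← h]; ring

lemma integral_x (hu : uhat ∈ Icc 1 H) (hρc : ContinuousOn ρ (Icc 1 H))
    {s t : ℝ} (hs : 1 ≤ s) (ht : 1 ≤ t) :
    ∫ z in s..t, (gf ρ H uhat z + Gf ρ H uhat z)
      = t * Gf ρ H uhat t - s * Gf ρ H uhat s := by
  have hH1 : (1:ℝ) ≤ H := hu.1.trans hu.2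
  have hmem : ∀ z ∈ uIcc s t, (1:ℝ) ≤ z := by
    intro z hz
    rcases le_total s t with h | h
    · rw [uIcc_of_le h] at hz; exact hs.trans hz.1
    · rw [uIcc_of_ge h] at hz; exact ht.trans hz.1
  apply integral_eq_sub_of_hasDerivAt (f := fun z => z * Gf ρ H uhat z)
  · intro z hz
    have hz1 : (1:ℝ) ≤ z := hmem z hz
    have hz0 : z ≠ 0 := ne_of_gt (lt_of_lt_of_le one_pos hz1)
    have h := (hasDerivAt_id z).mul (Gf_hasDeriv hu hρc hz1)
    refine h.congr_deriv ?_
    field_simp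
    simp only [id]
    ring
  · apply ContinuousOn.intervalIntegrable
    intro z hz
    have hz1 : (1:ℝ) ≤ z := hmem z hz
    have hz0 : z ≠ 0 := ne_of_gt (lt_of_lt_of_le one_pos hz1)
    exact ((gf_cont_at hu.1 hH1 hρc hz0).add
      (Gf_hasDeriv hu hρc hz1).continuousAt).continuousWithinAt

lemma tg_mono (hu : uhat ∈ Icc 1 H) (hρmono : MonotoneOn (fun η => η * ρ η) (Set.Icc 1 H))
    {s z : ℝ} (hs : s ∈ Icc uhat H) (hz : z ∈ Icc uhat H) (hsz : s ≤ z) :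
    s * gf ρ H uhat s ≤ z * gf ρ H uhat z := by
  have hu0 : (0:ℝ) < uhat := lt_of_lt_of_le one_pos hu.1
  rw [gf_eq_high' hu hs, gf_eq_high' hu hz]
  have h := hρmono (ratio_mem_high hu hs) (ratio_mem_high hu hz)
    (by gcongr)
  simp only at h
  have h2 := mul_le_mul_of_nonneg_left h (le_of_lt hu0)
  calc s * ρ (s / uhat) = uhat * (s / uhat * ρ (s / uhat)) := by field_simp
    _ ≤ uhat * (z / uhat * ρ (z / uhat)) := h2
    _ = z * ρ (z / uhat) := by field_simp

lemma x_mono_high (hu : uhat ∈ Icc 1 H) (hρc : ContinuousOn ρ (Icc 1 H))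
    (hρrange : ∀ η ∈ Set.Icc 1 H, ρ η ∈ Set.Icc (0 : ℝ) 1)
    (hρmono : MonotoneOn (fun η => η * ρ η) (Set.Icc 1 H))
    {s t : ℝ} (hs : s ∈ Icc uhat H) (ht : t ∈ Icc uhat H) (hst : s ≤ t) :
    gf ρ H uhat s + Gf ρ H uhat s ≤ gf ρ H uhat t + Gf ρ H uhat t := by
  have hH1 : (1:ℝ) ≤ H := hu.1.trans hu.2
  have hs1 : (1:ℝ) ≤ s := hu.1.trans hs.1
  have hs0 : (0:ℝ) < s := lt_of_lt_of_le one_pos hs1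
  have ht0 : (0:ℝ) < t := lt_of_lt_of_le hs0 hst
  -- step C : value of comparison integral
  have stepC : ∫ z in s..t, (s * gf ρ H uhat s) / z^2
      = s * gf ρ H uhat s * s⁻¹ - s * gf ρ H uhat s * t⁻¹ := by
    have := integral_eq_sub_of_hasDerivAt (a := s) (b := t)
      (f := fun z => -(s * gf ρ H uhat s) * z⁻¹)
      (f' := fun z => (s * gf ρ H uhat s) / z^2) ?_ ?_
    · rw [this]; ring
    · intro z hz
      rw [uIcc_of_le hst] at hz
      have hz0 : z ≠ 0 := ne_of_gt (lt_of_lt_of_le hs0 hz.1)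
      have h := (hasDerivAt_inv hz0).const_mul (-(s * gf ρ H uhat s))
      refine h.congr_deriv ?_
      field_simp
    · apply ContinuousOn.intervalIntegrable
      apply ContinuousOn.div continuousOn_const (continuous_pow 2).continuousOn
      intro z hz
      rw [uIcc_of_le hst] at hz
      have : (0:ℝ) < z := lt_of_lt_of_le hs0 hz.1
      positivity
  -- step D : integral comparison
  have stepD : (∫ z in s..t, (s * gf ρ H uhat s) / z^2)
      ≤ ∫ z in s..t, gf ρ H uhat z / z := by
    apply integral_mono_on hst
    · apply ContinuousOn.intervalIntegrable
      apply ContinuousOn.div continuousOn_const (continuous_pow 2).continuousOn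
      intro z hz
      rw [uIcc_of_le hst] at hz
      have : (0:ℝ) < z := lt_of_lt_of_le hs0 hz.1
      positivity
    · exact gfz_intable hu.1 hH1 hρc hs1 (hs1.trans hst)
    · intro z hz
      have hz0 : (0:ℝ) < z := lt_of_lt_of_le hs0 hz.1
      have hzm : z ∈ Icc uhat H := ⟨hs.1.trans hz.1, hz.2.trans ht.2⟩
      have hA := tg_mono hu hρmono hs hzm hz.1
      rw [div_le_div_iff₀ (by positivity) hz0]
      nlinarith
  have hGf : Gf ρ H uhat t - Gf ρ H uhat s = ∫ z in s..t, gf ρ H uhat z / z :=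
    Gf_diff hu hρc hs1 hst ht.2
  have hA := tg_mono hu hρmono hs ht hst
  have hss : s * gf ρ H uhat s * s⁻¹ = gf ρ H uhat s := by field_simp
  have htt : gf ρ H uhat t = t * gf ρ H uhat t * t⁻¹ := by field_simp
  nlinarith [stepC, stepD, mul_le_mul_of_nonneg_right hA (le_of_lt (inv_pos.2 ht0))]

lemma x_mono_low (hu : uhat ∈ Icc 1 H) (hρc : ContinuousOn ρ (Icc 1 H))
    (hρrange : ∀ η ∈ Set.Icc 1 H, ρ η ∈ Set.Icc (0 : ℝ) 1)
    (hρanti : AntitoneOn ρ (Set.Icc 1 H))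
    {s t : ℝ} (hs : s ∈ Icc 1 uhat) (ht : t ∈ Icc 1 uhat) (hst : s ≤ t) :
    gf ρ H uhat s + Gf ρ H uhat s ≤ gf ρ H uhat t + Gf ρ H uhat t := by
  have hH1 : (1:ℝ) ≤ H := hu.1.trans hu.2
  have hs0 : (0:ℝ) < s := lt_of_lt_of_le one_pos hs.1
  have hu0 : (0:ℝ) ≤ uhat := by linarith [hu.1]
  have hgf : gf ρ H uhat s ≤ gf ρ H uhat t := by
    rw [gf_eq_low' hu hs, gf_eq_low' hu ht]
    exact hρanti (ratio_mem_low hu ht) (ratio_mem_low hu hs) (by gcongr)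
  have hGf : Gf ρ H uhat t - Gf ρ H uhat s = ∫ z in s..t, gf ρ H uhat z / z :=
    Gf_diff hu hρc hs.1 hst (ht.2.trans hu.2)
  have hnn : 0 ≤ ∫ z in s..t, gf ρ H uhat z / z := by
    apply intervalIntegral.integral_nonneg hst
    intro z hz
    have hz1 : z ∈ Icc (1:ℝ) H := ⟨hs.1.trans hz.1, hz.2.trans (ht.2.trans hu.2)⟩
    have h0 : (0:ℝ) < z := lt_of_lt_of_le one_pos hz1.1
    have := (gf_mem hu hρrange hz1).1
    positivity
  linarith

lemma x_mono (hu : uhat ∈ Icc 1 H) (hρc : ContinuousOn ρ (Icc 1 H))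
    (hρrange : ∀ η ∈ Set.Icc 1 H, ρ η ∈ Set.Icc (0 : ℝ) 1)
    (hρanti : AntitoneOn ρ (Set.Icc 1 H))
    (hρmono : MonotoneOn (fun η => η * ρ η) (Set.Icc 1 H)) :
    MonotoneOn (fun t => gf ρ H uhat t + Gf ρ H uhat t) (Icc 1 H) := by
  intro s hs t ht hst
  rcases le_total t uhat with h | h
  · exact x_mono_low hu hρc hρrange hρanti ⟨hs.1, hst.trans h⟩ ⟨ht.1, h⟩ hst
  rcases le_total s uhat with h' | h'
  · calc gf ρ H uhat s + Gf ρ H uhat s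
        ≤ gf ρ H uhat uhat + Gf ρ H uhat uhat :=
          x_mono_low hu hρc hρrange hρanti ⟨hs.1, h'⟩ ⟨hu.1, le_rfl⟩ h'
      _ ≤ gf ρ H uhat t + Gf ρ H uhat t :=
          x_mono_high hu hρc hρrange hρmono ⟨le_rfl, hu.2⟩ ⟨h, ht.2⟩ h
  · exact x_mono_high hu hρc hρrange hρmono ⟨h', hs.2⟩ ⟨h, ht.2⟩ hst


lemma integral_c_div_sq {c a b : ℝ} (ha : 0 < a) (hab : a ≤ b) :
    ∫ z in a..b, c / z^2 = c * a⁻¹ - c * b⁻¹ := by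
  have := integral_eq_sub_of_hasDerivAt (a := a) (b := b)
    (f := fun z => -c * z⁻¹) (f' := fun z => c / z^2) ?_ ?_
  · rw [this]; ring
  · intro z hz
    rw [uIcc_of_le hab] at hz
    have hz0 : z ≠ 0 := ne_of_gt (lt_of_lt_of_le ha hz.1)
    have h := (hasDerivAt_inv hz0).const_mul (-c)
    refine h.congr_deriv ?_
    field_simp
  · apply ContinuousOn.intervalIntegrable
    apply ContinuousOn.div continuousOn_const (continuous_pow 2).continuousOn
    intro z hz
    rw [uIcc_of_le hab] at hz
    have : (0:ℝ) < z := lt_of_lt_of_le ha hz.1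
    positivity

lemma necessity (hH : 1 < H) (hu : uhat ∈ Icc 1 H) (hρc : ContinuousOn ρ (Icc 1 H))
    {x p : ℝ → ℝ}
    (hfeas : ∀ t ∈ Icc 1 H, 0 ≤ x t ∧ x t ≤ 1)
    (hxmono : MonotoneOn x (Icc 1 H))
    (hIR : p 1 ≤ x 1)
    (hMy : ∀ s t : ℝ, 1 ≤ s → s ≤ t → t ≤ H → p t - p s = t * x t - s * x s - ∫ z in s..t, x z)
    (hrob1 : ∀ t ∈ Icc 1 uhat, ρ (uhat / t) * t ≤ p t)
    (hrob2 : ∀ t ∈ Icc uhat H, ρ (t / uhat) * t ≤ p t) :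
    ρ (H / uhat) + (∫ z in (1:ℝ)..uhat, ρ z / z) + (∫ z in (1:ℝ)..(H / uhat), ρ z / z) ≤ 1 := by
  have hH1 : (1:ℝ) ≤ H := le_of_lt hH
  have hH0 : (0:ℝ) < H := lt_of_lt_of_le one_pos hH1
  -- the clamped allocation
  set xt : ℝ → ℝ := fun t => x (max 1 (min t H)) with hxt_def
  have hxtmono : Monotone xt := by
    intro a b hab
    exact hxmono (clamp_mem hH1 a) (clamp_mem hH1 b)
      (max_le_max le_rfl (min_le_min hab le_rfl))
  have hxteq : ∀ t ∈ Icc (1:ℝ) H, xt t = x t := by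
    intro t ht
    simp only [hxt_def]
    rw [min_eq_left ht.2, max_eq_right ht.1]
  have hxtrange : ∀ t, xt t ∈ Icc (0:ℝ) 1 := fun t => hfeas _ (clamp_mem hH1 t)
  have hxtmeas : Measurable xt := hxtmono.measurable
  have hxtint : ∀ a b : ℝ, IntervalIntegrable xt volume a b := by
    intro a b
    apply MonotoneOn.intervalIntegrable
    exact fun u _ v _ huv => hxtmono huv
  -- the cumulative allocation
  set F : ℝ → ℝ := fun t => ∫ z in (1:ℝ)..t, xt z with hF_def
  -- the key pointwise constraint
  have hC : ∀ t ∈ Icc (1:ℝ) H, gf ρ H uhat t * t + F t ≤ t * xt t := by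
    intro t ht
    have hmy := hMy 1 t le_rfl ht.1 ht.2
    have hint : ∫ z in (1:ℝ)..t, x z = F t := by
      apply integral_congr
      intro z hz
      rw [uIcc_of_le ht.1] at hz
      exact (hxteq z ⟨hz.1, hz.2.trans ht.2⟩).symm
    have hpt : gf ρ H uhat t * t ≤ p t := by
      rcases le_total t uhat with h | h
      · rw [gf_eq_low' hu ⟨ht.1, h⟩]
        exact hrob1 t ⟨ht.1, h⟩
      · rw [gf_eq_high' hu ⟨h, ht.2⟩]
        exact hrob2 t ⟨h, ht.2⟩
    rw [hxteq t ht]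
    rw [hint] at hmy
    linarith [hpt, hIR, hmy]
  -- set up the Fubini argument
  set μ : Measure ℝ := volume.restrict (Ioc 1 H) with hμ_def
  haveI hfin : IsFiniteMeasure μ := by
    constructor
    rw [hμ_def, Measure.restrict_apply MeasurableSet.univ, Set.univ_inter, Real.volume_Ioc]
    exact ENNReal.ofReal_lt_top
  set k : ℝ → ℝ → ℝ := fun z w => if w ≤ z then xt w / z^2 else 0 with hk_def
  have claimA : ∫ z, F z / z^2 ∂μ = ∫ z, (∫ w, k z w ∂μ) ∂μ := by
    apply setIntegral_congr_fun measurableSet_Ioc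
    intro z hz
    have h1z : (1:ℝ) < z := hz.1
    have hz0 : (0:ℝ) < z := lt_trans one_pos h1z
    have heq : (fun w => k z w) = (Iic z).indicator (fun w => xt w / z^2) := by
      funext w
      simp only [hk_def, Set.indicator_apply, mem_Iic]
    show F z / z^2 = ∫ w, k z w ∂μ
    rw [hμ_def, heq, setIntegral_indicator measurableSet_Iic, Ioc_inter_Iic,
      min_eq_right hz.2, MeasureTheory.integral_div]
    have : F z = ∫ w in Ioc (1:ℝ) z, xt w := intervalIntegral.integral_of_le (le_of_lt h1z)
    rw [this]
  have hkmeas : Measurable (Function.uncurry k) := by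
    have : Function.uncurry k = fun q : ℝ × ℝ => if q.2 ≤ q.1 then xt q.2 / q.1^2 else 0 := rfl
    rw [this]
    apply Measurable.ite (measurableSet_le measurable_snd measurable_fst)
    · exact (hxtmeas.comp measurable_snd).div (measurable_fst.pow_const 2)
    · exact measurable_const
  have hkint : Integrable (Function.uncurry k) (μ.prod μ) := by
    apply Integrable.mono' (integrable_const (1:ℝ)) hkmeas.aestronglyMeasurable
    have hprod : μ.prod μ = (volume.prod volume).restrict ((Ioc 1 H) ×ˢ (Ioc 1 H)) :=
      Measure.prod_restrict _ _
    rw [hprod]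
    filter_upwards [ae_restrict_mem (measurableSet_Ioc.prod measurableSet_Ioc)] with q hq
    have h1 : (1:ℝ) ≤ q.1 := le_of_lt hq.1.1
    have h2 := hxtrange q.2
    have hsq : (1:ℝ) ≤ q.1^2 := by nlinarith
    show ‖if q.2 ≤ q.1 then xt q.2 / q.1^2 else 0‖ ≤ 1
    split_ifs with h
    · have hq2 : (0:ℝ) < q.1^2 := by nlinarith
      rw [Real.norm_eq_abs, abs_of_nonneg (div_nonneg h2.1 (le_of_lt hq2)),
        div_le_one hq2]
      linarith [h2.2]
    · simp
  have claimSwap : ∫ z, (∫ w, k z w ∂μ) ∂μ = ∫ w, (∫ z, k z w ∂μ) ∂μ :=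
    integral_integral_swap hkint
  have claimB : ∫ w, (∫ z, k z w ∂μ) ∂μ = ∫ w, xt w * (w⁻¹ - H⁻¹) ∂μ := by
    apply setIntegral_congr_fun measurableSet_Ioc
    intro w hw
    have h1w : (1:ℝ) < w := hw.1
    have hw0 : (0:ℝ) < w := lt_trans one_pos h1w
    have heq : (fun z => k z w) = (Ici w).indicator (fun z => xt w / z^2) := by
      funext z
      simp only [hk_def, Set.indicator_apply, mem_Ici]
    have hset : Ioc (1:ℝ) H ∩ Ici w = Icc w H := by
      ext z
      simp only [mem_inter_iff, mem_Ioc, mem_Ici, mem_Icc]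
      constructor
      · rintro ⟨⟨_, h2⟩, h3⟩; exact ⟨h3, h2⟩
      · rintro ⟨h1, h2⟩; exact ⟨⟨lt_of_lt_of_le h1w h1, h2⟩, h1⟩
    show (∫ z, k z w ∂μ) = xt w * (w⁻¹ - H⁻¹)
    rw [hμ_def, heq, setIntegral_indicator measurableSet_Ici, hset,
      integral_Icc_eq_integral_Ioc, ← intervalIntegral.integral_of_le hw.2,
      integral_c_div_sq hw0 hw.2]
    ring
  -- integrability facts
  have hIx : Integrable xt μ := (hxtint 1 H).1
  have hIxw : Integrable (fun w => xt w * w⁻¹) μ := by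
    apply Integrable.mono' (integrable_const (1:ℝ))
    · exact ((hxtmeas.mul measurable_inv).aestronglyMeasurable).restrict
    · rw [hμ_def]
      filter_upwards [ae_restrict_mem measurableSet_Ioc] with w hw
      have h1w : (1:ℝ) < w := hw.1
      have hw0 : (0:ℝ) < w := lt_trans one_pos h1w
      have h2 := hxtrange w
      have hinv : (0:ℝ) ≤ w⁻¹ := le_of_lt (inv_pos.2 hw0)
      have hmul : w * w⁻¹ = 1 := mul_inv_cancel₀ (ne_of_gt hw0)
      rw [Real.norm_eq_abs, abs_of_nonneg (mul_nonneg h2.1 hinv)]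
      nlinarith [h2.1, h2.2]
  have hIxz : Integrable (fun z => xt z / z) μ := by
    simpa only [div_eq_mul_inv] using hIxw
  have hIg : Integrable (fun z => gf ρ H uhat z / z) μ :=
    (gfz_intable hu.1 hH1 hρc le_rfl hH1).1
  have hIF : Integrable (fun z => F z / z^2) μ := by
    have hIxIcc : IntegrableOn xt (Icc 1 H) := by
      apply MonotoneOn.integrableOn_isCompact isCompact_Icc
      exact fun u _ v _ huv => hxtmono huv
    have hFcont : ContinuousOn F (Icc 1 H) := by
      have h := continuousOn_primitive (f := xt) (a := 1) (b := H) (μ := volume) hIxIcc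
      apply ContinuousOn.congr h
      intro z hz
      exact intervalIntegral.integral_of_le hz.1
    have hcont2 : ContinuousOn (fun z => F z / z^2) (Icc 1 H) := by
      apply hFcont.div (continuous_pow 2).continuousOn
      intro z hz
      have : (0:ℝ) < z := lt_of_lt_of_le one_pos hz.1
      positivity
    exact (hcont2.integrableOn_compact isCompact_Icc).mono_set Ioc_subset_Icc_self
  have claimD : ∫ w, xt w * (w⁻¹ - H⁻¹) ∂μ = (∫ w, xt w / w ∂μ) - F H / H := by
    have e1 : (fun w => xt w * (w⁻¹ - H⁻¹)) = fun w => xt w * w⁻¹ - xt w * H⁻¹ := by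
      funext w; ring
    rw [e1, integral_sub hIxw (hIx.mul_const H⁻¹), MeasureTheory.integral_mul_const]
    have e4 : ∫ w, xt w / w ∂μ = ∫ w, xt w * w⁻¹ ∂μ := by simp only [div_eq_mul_inv]
    have e5 : F H = ∫ w, xt w ∂μ := by
      rw [hμ_def]; exact intervalIntegral.integral_of_le hH1
    rw [e4, e5, div_eq_mul_inv]
  -- the main integral inequality
  have main : (∫ z in (1:ℝ)..H, gf ρ H uhat z / z) ≤ F H / H := by
    have hmono : ∫ z, gf ρ H uhat z / z ∂μ ≤ ∫ z, (xt z / z - F z / z^2) ∂μ := by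
      rw [hμ_def]
      apply setIntegral_mono_on hIg (hIxz.sub hIF) measurableSet_Ioc
      intro z hz
      show gf ρ H uhat z / z ≤ xt z / z - F z / z^2
      have h1z : 1 < z := hz.1
      have hz0 : (0:ℝ) < z := lt_trans one_pos h1z
      have h := hC z ⟨le_of_lt h1z, hz.2⟩
      have e : xt z / z - F z / z^2 - gf ρ H uhat z / z
          = (z * xt z - (gf ρ H uhat z * z + F z)) / z^2 := by
        field_simp
        ring
      have h2 : 0 ≤ xt z / z - F z / z^2 - gf ρ H uhat z / z := by
        rw [e]
        apply div_nonneg (by linarith) (by positivity)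
      linarith
    have hsplit : ∫ z, (xt z / z - F z / z^2) ∂μ = F H / H := by
      rw [integral_sub hIxz hIF, claimA, claimSwap, claimB, claimD]
      ring
    have hiocc : (∫ z in (1:ℝ)..H, gf ρ H uhat z / z) = ∫ z, gf ρ H uhat z / z ∂μ := by
      rw [hμ_def]
      exact intervalIntegral.integral_of_le hH1
    rw [hiocc]
    linarith
  -- conclusion
  have hKEY := key_integral hu hρc
  have hposH : gf ρ H uhat H * H + F H ≤ H := by
    have h := hC H ⟨hH1, le_rfl⟩
    nlinarith [(hxtrange H).2]
  have hgfH : gf ρ H uhat H = ρ (H / uhat) := gf_eq_high' hu ⟨hu.2, le_rfl⟩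
  have e2 : (gf ρ H uhat H * H + F H) / H = gf ρ H uhat H + F H / H := by
    field_simp
  have e3 : (gf ρ H uhat H * H + F H) / H ≤ 1 := (div_le_one hH0).2 hposH
  rw [add_assoc, ← hKEY, ← hgfH]
  linarith

end RobustAux



end aux

open RobustAux in
/-- Theorem 2 of the paper: a characterization of the robustness functions `ρ`
of the prediction error for which a `ρ`-robust feasible DSIC single-bidder
auction on `[1, H]` with prediction `uhat` exists. -/
theorem robustness_of_prediction_error (H : ℝ) (hH : 1 < H)
    (uhat : ℝ) (huhat : uhat ∈ Set.Icc 1 H)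
    (ρ : ℝ → ℝ)
    (hρrange : ∀ η ∈ Set.Icc 1 H, ρ η ∈ Set.Icc (0 : ℝ) 1)
    (hρdiff : DifferentiableOn ℝ ρ (Set.Icc 1 H))
    (hρanti : AntitoneOn ρ (Set.Icc 1 H))
    (hρmono : MonotoneOn (fun η => η * ρ η) (Set.Icc 1 H)) :
    (∃ x p : ℝ → ℝ,
      -- feasibility
      (∀ t ∈ Set.Icc 1 H, 0 ≤ x t ∧ x t ≤ 1) ∧
      -- DSIC: nonnegative payments, monotone allocation, individual rationality,
      -- and Myerson's payment identity
      (∀ t ∈ Set.Icc 1 H, 0 ≤ p t) ∧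
      MonotoneOn x (Set.Icc 1 H) ∧
      p 1 ≤ x 1 ∧
      (∀ s t : ℝ, 1 ≤ s → s ≤ t → t ≤ H →
        p t - p s = t * x t - s * x s - ∫ z in s..t, x z) ∧
      -- error-dependent robustness guarantee
      (∀ t ∈ Set.Icc 1 uhat, ρ (uhat / t) * t ≤ p t) ∧
      (∀ t ∈ Set.Icc uhat H, ρ (t / uhat) * t ≤ p t)) ↔
    ρ (H / uhat) + (∫ z in (1:ℝ)..uhat, ρ z / z)
      + (∫ z in (1:ℝ)..(H / uhat), ρ z / z) ≤ 1 := by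
  have hρc : ContinuousOn ρ (Set.Icc 1 H) := hρdiff.continuousOn
  have hH1 : (1:ℝ) ≤ H := le_of_lt hH
  constructor
  · rintro ⟨x, p, hfeas, hp0, hxmono, hIR, hMy, hrob1, hrob2⟩
    exact necessity hH huhat hρc hfeas hxmono hIR hMy hrob1 hrob2
  · intro hle
    refine ⟨fun t => gf ρ H uhat t + Gf ρ H uhat t, fun t => t * gf ρ H uhat t,
      ?_, ?_, ?_, ?_, ?_, ?_, ?_⟩
    · intro t ht
      constructor
      · exact add_nonneg (gf_mem huhat hρrange ht).1 (Gf_nonneg huhat hρrange ht)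
      · have hxH : gf ρ H uhat t + Gf ρ H uhat t ≤ gf ρ H uhat H + Gf ρ H uhat H :=
          x_mono huhat hρc hρrange hρanti hρmono ht ⟨hH1, le_rfl⟩ ht.2
        have hGH : Gf ρ H uhat H
            = (∫ z in (1:ℝ)..uhat, ρ z / z) + ∫ z in (1:ℝ)..(H / uhat), ρ z / z :=
          key_integral huhat hρc
        have hgH : gf ρ H uhat H = ρ (H / uhat) := gf_eq_high' huhat ⟨huhat.2, le_rfl⟩
        rw [hGH, hgH] at hxH
        show gf ρ H uhat t + Gf ρ H uhat t ≤ 1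
        linarith
    · intro t ht
      have h1 : (0:ℝ) ≤ t := by linarith [ht.1]
      exact mul_nonneg h1 (gf_mem huhat hρrange ht).1
    · exact x_mono huhat hρc hρrange hρanti hρmono
    · have hG1 : Gf ρ H uhat 1 = 0 := intervalIntegral.integral_same
      show (1:ℝ) * gf ρ H uhat 1 ≤ gf ρ H uhat 1 + Gf ρ H uhat 1
      rw [hG1, one_mul, add_zero]
    · intro s t hs hst ht
      have hi := integral_x huhat hρc hs (hs.trans hst)
      rw [hi]
      ring
    · intro t ht
      show ρ (uhat / t) * t ≤ t * gf ρ H uhat t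
      rw [gf_eq_low' huhat ht]
      exact le_of_eq (mul_comm _ _)
    · intro t ht
      show ρ (t / uhat) * t ≤ t * gf ρ H uhat t
      rw [gf_eq_high' huhat ht]
      exact le_of_eq (mul_comm _ _)
end

section
/- Let H > 1, let û ∈ [1,H], and let ρ : [1,H] → [0,1] be non-increasing. If (x,p) is a feasible DSIC single-bidder auction on [1,H] satisfying p(t) ≥ ρ(û/t)·t for all t ∈ [1,û] and p(t) ≥ ρ(t/û)·t for all t ∈ [û,H], then ρ(H/û) + ∫_1^û ρ(z)/z dz + ∫_1^{H/û} ρ(z)/z dz ≤ 1. -/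
open MeasureTheory intervalIntegral

lemma rpen_image_inv_Icc (u : ℝ) (hu : 1 ≤ u) :
    (fun t => u / t) '' Set.Icc 1 u = Set.Icc 1 u := by
  have hu0 : (0:ℝ) < u := lt_of_lt_of_le one_pos hu
  ext z
  constructor
  · rintro ⟨t, ⟨ht1, htu⟩, rfl⟩
    have h0 : (0:ℝ) < t := lt_of_lt_of_le one_pos ht1
    exact ⟨(one_le_div h0).2 htu, div_le_self hu0.le ht1⟩
  · rintro ⟨hz1, hzu⟩
    have hz0 : (0:ℝ) < z := lt_of_lt_of_le one_pos hz1
    refine ⟨u / z, ⟨(one_le_div hz0).2 hzu, div_le_self hu0.le hz1⟩, ?_⟩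
    field_simp

lemma rpen_subst_first (u : ℝ) (hu : 1 ≤ u) (g : ℝ → ℝ) :
    ∫ z in (1:ℝ)..u, g z = ∫ t in (1:ℝ)..u, (u / t ^ 2) * g (u / t) := by
  have hu0 : (0:ℝ) < u := lt_of_lt_of_le one_pos hu
  rw [intervalIntegral.integral_of_le hu, intervalIntegral.integral_of_le hu,
      ← MeasureTheory.integral_Icc_eq_integral_Ioc, ← MeasureTheory.integral_Icc_eq_integral_Ioc]
  have hderiv : ∀ t ∈ Set.Icc (1:ℝ) u,
      HasDerivWithinAt (fun t => u / t) (-(u / t ^ 2)) (Set.Icc 1 u) t := by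
    intro t ht
    have h0 : (0:ℝ) < t := lt_of_lt_of_le one_pos ht.1
    have := ((hasDerivAt_inv (ne_of_gt h0)).const_mul u).hasDerivWithinAt (s := Set.Icc (1:ℝ) u)
    simpa [div_eq_mul_inv, mul_comm, mul_assoc, mul_left_comm] using this
  have hinj : Set.InjOn (fun t => u / t) (Set.Icc 1 u) := by
    intro a ha b hb h
    have ha0 : a ≠ 0 := ne_of_gt (lt_of_lt_of_le one_pos ha.1)
    have hb0 : b ≠ 0 := ne_of_gt (lt_of_lt_of_le one_pos hb.1)
    field_simp at h
    exact h.symm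
  have key := MeasureTheory.integral_image_eq_integral_abs_deriv_smul measurableSet_Icc hderiv hinj g
  rw [rpen_image_inv_Icc u hu] at key
  rw [key]
  apply MeasureTheory.setIntegral_congr_fun measurableSet_Icc
  intro t ht
  have h0 : (0:ℝ) < t := lt_of_lt_of_le one_pos ht.1
  simp [abs_of_nonneg (le_of_lt (by positivity : (0:ℝ) < u / t ^ 2))]

lemma rpen_subst_second (u b : ℝ) (hu : 1 ≤ u) (hub : u ≤ b) (g : ℝ → ℝ) :
    ∫ z in (1:ℝ)..(b / u), g z = ∫ t in u..b, (1 / u) * g (t / u) := by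
  have hu0 : (0:ℝ) < u := lt_of_lt_of_le one_pos hu
  have h1bu : (1:ℝ) ≤ b / u := (one_le_div hu0).2 hub
  rw [intervalIntegral.integral_of_le h1bu, intervalIntegral.integral_of_le hub,
      ← MeasureTheory.integral_Icc_eq_integral_Ioc, ← MeasureTheory.integral_Icc_eq_integral_Ioc]
  have himg : (fun t => t / u) '' Set.Icc u b = Set.Icc 1 (b / u) := by
    ext z
    constructor
    · rintro ⟨t, ⟨ht1, htu⟩, rfl⟩
      exact ⟨(one_le_div hu0).2 ht1, by rw [div_le_div_iff₀ (by positivity) hu0]; nlinarith⟩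
    · rintro ⟨hz1, hzu⟩
      refine ⟨u * z, ⟨le_mul_of_one_le_right hu0.le hz1, ?_⟩, by field_simp⟩
      calc u * z ≤ u * (b / u) := by nlinarith
        _ = b := by field_simp
  have hderiv : ∀ t ∈ Set.Icc u b, HasDerivWithinAt (fun t => t / u) (1 / u) (Set.Icc u b) t := by
    intro t ht
    simpa using ((hasDerivAt_id t).div_const u).hasDerivWithinAt (s := Set.Icc u b)
  have hinj : Set.InjOn (fun t => t / u) (Set.Icc u b) := by
    intro a _ c _ h
    field_simp at h
    exact h
  have key := MeasureTheory.integral_image_eq_integral_abs_deriv_smul measurableSet_Icc hderiv hinj g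
  rw [himg] at key
  rw [key]
  apply MeasureTheory.setIntegral_congr_fun measurableSet_Icc
  intro t _
  simp only [smul_eq_mul]
  rw [abs_of_nonneg (le_of_lt (by positivity : (0:ℝ) < 1 / u))]

/-- The "only if" part of Theorem 2 of the paper: any feasible DSIC single-bidder
auction on `[1, H]` whose revenue satisfies the error-dependent robustness
guarantee given by a non-increasing function `ρ : [1,H] → [0,1]` must satisfy
`ρ(H/uhat) + ∫_1^uhat ρ(z)/z dz + ∫_1^{H/uhat} ρ(z)/z dz ≤ 1`. -/
theorem robustness_of_prediction_error_necessary (H : ℝ) (hH : 1 < H)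
    (uhat : ℝ) (huhat : uhat ∈ Set.Icc 1 H)
    (ρ : ℝ → ℝ)
    (hρrange : ∀ η ∈ Set.Icc 1 H, ρ η ∈ Set.Icc (0 : ℝ) 1)
    (hρanti : AntitoneOn ρ (Set.Icc 1 H))
    (x p : ℝ → ℝ)
    -- feasibility
    (hfeas : ∀ t ∈ Set.Icc 1 H, 0 ≤ x t ∧ x t ≤ 1)
    -- DSIC: nonnegative payments, monotone allocation, individual rationality,
    -- and Myerson's payment identity
    (hppos : ∀ t ∈ Set.Icc 1 H, 0 ≤ p t)
    (hmono : MonotoneOn x (Set.Icc 1 H))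
    (hir : p 1 ≤ x 1)
    (hmyerson : ∀ s t : ℝ, 1 ≤ s → s ≤ t → t ≤ H →
      p t - p s = t * x t - s * x s - ∫ z in s..t, x z)
    -- error-dependent robustness guarantee
    (hrob₁ : ∀ t ∈ Set.Icc 1 uhat, ρ (uhat / t) * t ≤ p t)
    (hrob₂ : ∀ t ∈ Set.Icc uhat H, ρ (t / uhat) * t ≤ p t) :
    ρ (H / uhat) + (∫ z in (1:ℝ)..uhat, ρ z / z)
      + (∫ z in (1:ℝ)..(H / uhat), ρ z / z) ≤ 1 := by
  obtain ⟨hu1, huH⟩ := huhat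
  have h0u : (0:ℝ) < uhat := lt_of_lt_of_le one_pos hu1
  have h0H : (0:ℝ) < H := lt_trans one_pos hH
  -- monotone extension of x to all of ℝ
  set c : ℝ → ℝ := fun t => max 1 (min t H) with hc
  have hc_mem : ∀ t, c t ∈ Set.Icc 1 H := fun t =>
    ⟨le_max_left _ _, max_le (le_of_lt hH) (min_le_right _ _)⟩
  have hc_id : ∀ t ∈ Set.Icc 1 H, c t = t := by
    intro t ht
    simp only [hc]
    rw [min_eq_left ht.2, max_eq_right ht.1]
  set x' : ℝ → ℝ := fun t => x (c t) with hx'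
  have hx'mono : Monotone x' := by
    intro a b hab
    exact hmono (hc_mem a) (hc_mem b) (max_le_max le_rfl (min_le_min hab le_rfl))
  have hx'eq : ∀ t ∈ Set.Icc 1 H, x' t = x t := fun t ht => by
    simp only [hx']; rw [hc_id t ht]
  -- right-continuous modification
  set Y : StieltjesFunction ℝ := hx'mono.stieltjesFunction with hYdef
  have hYmono : Monotone Y := Y.mono
  have hYeq : ∀ t, Y t = Function.rightLim x' t := fun t => hx'mono.stieltjesFunction_eq t
  have hx'leY : ∀ t, x' t ≤ Y t := fun t => by
    rw [hYeq t]; exact hx'mono.le_rightLim le_rfl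
  have hYle1 : ∀ t, Y t ≤ 1 := by
    intro t
    rw [hYeq t]
    exact le_trans (hx'mono.rightLim_le (lt_add_one t)) (hfeas _ (hc_mem (t+1))).2
  have hae : x' =ᵐ[volume] Y := by
    have hsub : {t | x' t ≠ Y t} ⊆ {t | ¬ContinuousAt x' t} := by
      intro t ht hcont
      exact ht (((hx'mono.continuousWithinAt_Ioi_iff_rightLim_eq).1
        hcont.continuousWithinAt).symm.trans (hYeq t).symm)
    exact MeasureTheory.ae_iff.2
      (measure_mono_null hsub (hx'mono.countable_not_continuousAt.measure_zero _))
  have hYint : ∀ a b : ℝ, IntervalIntegrable Y volume a b := fun a b =>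
    hYmono.intervalIntegrable
  -- the primitive of Y
  set F : ℝ → ℝ := fun t => ∫ z in (1:ℝ)..t, Y z with hF
  have hFcont : Continuous F := intervalIntegral.continuous_primitive hYint 1
  have hF1 : F 1 = 0 := intervalIntegral.integral_same
  have hFderiv : ∀ t : ℝ, HasDerivWithinAt F (Y t) (Set.Ioi t) t := by
    intro t
    have hmeas : StronglyMeasurableAtFilter Y (nhdsWithin t (Set.Ioi t)) volume :=
      (hYmono.measurable.stronglyMeasurable).stronglyMeasurableAtFilter
    have hcw : ContinuousWithinAt Y (Set.Ioi t) t :=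
      (Y.right_continuous t).mono Set.Ioi_subset_Ici_self
    exact (intervalIntegral.integral_hasDerivWithinAt_right (hYint 1 t) hmeas hcw).mono
      Set.Ioi_subset_Ici_self
  -- key payment bound
  have hpF : ∀ t ∈ Set.Icc 1 H, p t ≤ t * x t - F t := by
    intro t ht
    have hm := hmyerson 1 t le_rfl ht.1 ht.2
    have hint : (∫ z in (1:ℝ)..t, x z) = F t := by
      have h1 : (∫ z in (1:ℝ)..t, x z) = ∫ z in (1:ℝ)..t, x' z := by
        apply intervalIntegral.integral_congr
        intro z hz
        rw [Set.uIcc_of_le ht.1] at hz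
        exact (hx'eq z ⟨hz.1, le_trans hz.2 ht.2⟩).symm
      rw [h1, hF]
      exact intervalIntegral.integral_congr_ae (hae.mono fun z hz _ => hz)
    rw [hint, one_mul] at hm
    linarith
  have hpFY : ∀ t ∈ Set.Icc 1 H, p t ≤ t * Y t - F t := by
    intro t ht
    have h1 : x t ≤ Y t := (hx'eq t ht) ▸ hx'leY t
    have ht0 : (0:ℝ) ≤ t := le_trans zero_le_one ht.1
    nlinarith [hpF t ht]
  -- the function G = F t / t and its right derivative
  set G : ℝ → ℝ := fun t => F t / t with hG
  have hGcont : ContinuousOn G (Set.Icc 1 H) := by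
    apply ContinuousOn.div hFcont.continuousOn continuousOn_id
    intro t ht
    exact ne_of_gt (lt_of_lt_of_le one_pos ht.1)
  have hGderiv : ∀ t : ℝ, 1 ≤ t →
      HasDerivWithinAt G ((Y t * t - F t * 1) / t ^ 2) (Set.Ioi t) t := by
    intro t ht
    exact (hFderiv t).div (hasDerivWithinAt_id t _) (ne_of_gt (lt_of_lt_of_le one_pos ht))
  have hG1 : G 1 = 0 := by simp [hG, hF1]
  -- first interval: ∫_1^uhat ρ z / z ≤ G uhat
  have key1 : (∫ z in (1:ℝ)..uhat, ρ z / z) ≤ G uhat := by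
    have hsub : (∫ z in (1:ℝ)..uhat, ρ z / z)
        = ∫ t in (1:ℝ)..uhat, ρ (uhat / t) / t := by
      rw [rpen_subst_first uhat hu1 (fun z => ρ z / z)]
      apply intervalIntegral.integral_congr
      intro t htm
      rw [Set.uIcc_of_le hu1] at htm
      have h0 : (0:ℝ) < t := lt_of_lt_of_le one_pos htm.1
      field_simp
    rw [hsub, ← sub_zero (G uhat), ← hG1]
    -- integrability of φ₁
    have hφmono : MonotoneOn (fun t => ρ (uhat / t)) (Set.uIcc 1 uhat) := by
      rw [Set.uIcc_of_le hu1]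
      intro a ha b hb hab
      have ha0 : (0:ℝ) < a := lt_of_lt_of_le one_pos ha.1
      have hb0 : (0:ℝ) < b := lt_of_lt_of_le one_pos hb.1
      have hmem : ∀ s : ℝ, s ∈ Set.Icc (1:ℝ) uhat → uhat / s ∈ Set.Icc (1:ℝ) H := by
        intro s hs
        have hs0 : (0:ℝ) < s := lt_of_lt_of_le one_pos hs.1
        exact ⟨(one_le_div hs0).2 hs.2, le_trans (div_le_self h0u.le hs.1) huH⟩
      exact hρanti (hmem b hb) (hmem a ha) (div_le_div_of_nonneg_left h0u.le ha0 hab)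
    have hφint : IntegrableOn (fun t => ρ (uhat / t) / t) (Set.Icc 1 uhat) volume := by
      have h1 : IntervalIntegrable (fun t => ρ (uhat / t)) volume 1 uhat :=
        hφmono.intervalIntegrable
      have h2 : IntervalIntegrable (fun t => ρ (uhat / t) * (1 / t)) volume 1 uhat := by
        apply h1.mul_continuousOn
        apply ContinuousOn.div continuousOn_const continuousOn_id
        intro t ht
        rw [Set.uIcc_of_le hu1] at ht
        exact ne_of_gt (lt_of_lt_of_le one_pos ht.1)
      have h3 : IntervalIntegrable (fun t => ρ (uhat / t) / t) volume 1 uhat := by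
        simpa [div_eq_mul_inv] using h2
      exact (intervalIntegrable_iff_integrableOn_Icc_of_le hu1).1 h3
    apply intervalIntegral.integral_le_sub_of_hasDeriv_right_of_le hu1
      (hGcont.mono (Set.Icc_subset_Icc le_rfl huH))
      (fun t ht => hGderiv t ht.1.le) hφint
    intro t ht
    have h1t : (1:ℝ) < t := ht.1
    have ht0 : (0:ℝ) < t := lt_trans one_pos h1t
    have hIcc : t ∈ Set.Icc 1 uhat := ⟨h1t.le, ht.2.le⟩
    have hr := hrob₁ t hIcc
    have hp := hpFY t ⟨h1t.le, le_trans ht.2.le huH⟩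
    rw [div_le_div_iff₀ ht0 (by positivity)]
    nlinarith
  -- second interval: ∫_1^{H/uhat} ρ z / z ≤ G H - G uhat
  have key2 : (∫ z in (1:ℝ)..(H / uhat), ρ z / z) ≤ G H - G uhat := by
    have hsub : (∫ z in (1:ℝ)..(H / uhat), ρ z / z)
        = ∫ t in uhat..H, ρ (t / uhat) / t := by
      rw [rpen_subst_second uhat H hu1 huH (fun z => ρ z / z)]
      apply intervalIntegral.integral_congr
      intro t htm
      rw [Set.uIcc_of_le huH] at htm
      have h0 : (0:ℝ) < t := lt_of_lt_of_le h0u htm.1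
      field_simp
    rw [hsub]
    have hφanti : AntitoneOn (fun t => ρ (t / uhat)) (Set.uIcc uhat H) := by
      rw [Set.uIcc_of_le huH]
      intro a ha b hb hab
      have hmem : ∀ s : ℝ, s ∈ Set.Icc uhat H → s / uhat ∈ Set.Icc (1:ℝ) H := by
        intro s hs
        refine ⟨(one_le_div h0u).2 hs.1, ?_⟩
        rw [div_le_iff₀ h0u]
        nlinarith [hs.2]
      exact hρanti (hmem a ha) (hmem b hb) (by gcongr)
    have hφint : IntegrableOn (fun t => ρ (t / uhat) / t) (Set.Icc uhat H) volume := by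
      have h1 : IntervalIntegrable (fun t => ρ (t / uhat)) volume uhat H :=
        hφanti.intervalIntegrable
      have h2 : IntervalIntegrable (fun t => ρ (t / uhat) * (1 / t)) volume uhat H := by
        apply h1.mul_continuousOn
        apply ContinuousOn.div continuousOn_const continuousOn_id
        intro t ht
        rw [Set.uIcc_of_le huH] at ht
        exact ne_of_gt (lt_of_lt_of_le h0u ht.1)
      have h3 : IntervalIntegrable (fun t => ρ (t / uhat) / t) volume uhat H := by
        simpa [div_eq_mul_inv] using h2
      exact (intervalIntegrable_iff_integrableOn_Icc_of_le huH).1 h3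
    apply intervalIntegral.integral_le_sub_of_hasDeriv_right_of_le huH
      (hGcont.mono (Set.Icc_subset_Icc hu1 le_rfl))
      (fun t ht => hGderiv t (le_trans hu1 ht.1.le)) hφint
    intro t ht
    have h1t : (1:ℝ) < t := lt_of_le_of_lt hu1 ht.1
    have ht0 : (0:ℝ) < t := lt_trans one_pos h1t
    have hr := hrob₂ t ⟨ht.1.le, ht.2.le⟩
    have hp := hpFY t ⟨h1t.le, ht.2.le⟩
    rw [div_le_div_iff₀ ht0 (by positivity)]
    nlinarith
  -- endpoint: ρ (H / uhat) ≤ 1 - G H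
  have key3 : ρ (H / uhat) ≤ 1 - G H := by
    have hr := hrob₂ H ⟨huH, le_rfl⟩
    have hp := hpF H ⟨le_of_lt hH, le_rfl⟩
    have hx1 : x H ≤ 1 := (hfeas H ⟨le_of_lt hH, le_rfl⟩).2
    have hGH : G H * H = F H := by
      simp only [hG]
      field_simp
    nlinarith [hr, hp]
  linarith [key1, key2, key3]
end

section
/- Let H > 1, let û ∈ [1,H], and let ρ : [1,H] → [0,1] be a differentiable function such that ρ(η) is non-increasing in η and η·ρ(η) is non-decreasing in η. If ρ(H/û) + ∫_1^û ρ(z)/z dz + ∫_1^{H/û} ρ(z)/z dz ≤ 1, then there exists a feasible DSIC single-bidder auction (x,p) on [1,H] such that p(t) ≥ ρ(û/t)·t for all t ∈ [1,û] and p(t) ≥ ρ(t/û)·t for all t ∈ [û,H]. -/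
open MeasureTheory intervalIntegral Set


noncomputable def cl (H w : ℝ) : ℝ := min (max w 1) H

lemma cl_mem (H : ℝ) (hH : 1 < H) (w : ℝ) : cl H w ∈ Set.Icc 1 H :=
  ⟨le_min (le_max_right _ _) hH.le, min_le_right _ _⟩

lemma cl_eq (H : ℝ) {w : ℝ} (hw : w ∈ Set.Icc 1 H) : cl H w = w := by
  rw [cl, max_eq_left hw.1, min_eq_left hw.2]

lemma cl_cont (H : ℝ) : Continuous (cl H) := by
  unfold cl; fun_prop

lemma cl_pos (H : ℝ) (hH : 1 < H) (w : ℝ) : 0 < cl H w :=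
  lt_of_lt_of_le one_pos (cl_mem H hH w).1

noncomputable def ff (H : ℝ) (ρ : ℝ → ℝ) (w : ℝ) : ℝ := ρ (cl H w) / cl H w

lemma ff_cont (H : ℝ) (hH : 1 < H) (ρ : ℝ → ℝ) (hρcont : ContinuousOn ρ (Set.Icc 1 H)) :
    Continuous (ff H ρ) := by
  apply Continuous.div
  · exact hρcont.comp_continuous (cl_cont H) (cl_mem H hH)
  · exact cl_cont H
  · exact fun w => (cl_pos H hH w).ne'

lemma ff_nonneg (H : ℝ) (hH : 1 < H) (ρ : ℝ → ℝ)
    (hρrange : ∀ η ∈ Set.Icc 1 H, ρ η ∈ Set.Icc (0 : ℝ) 1) (w : ℝ) : 0 ≤ ff H ρ w :=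
  div_nonneg (hρrange _ (cl_mem H hH w)).1 (cl_pos H hH w).le

noncomputable def CC (H : ℝ) (ρ : ℝ → ℝ) (s : ℝ) : ℝ := ∫ w in (1:ℝ)..s, ff H ρ w

lemma CC_deriv (H : ℝ) (hH : 1 < H) (ρ : ℝ → ℝ) (hρcont : ContinuousOn ρ (Set.Icc 1 H))
    (s : ℝ) : HasDerivAt (CC H ρ) (ff H ρ s) s :=
  intervalIntegral.integral_hasDerivAt_right
    ((ff_cont H hH ρ hρcont).intervalIntegrable _ _)
    ((ff_cont H hH ρ hρcont).stronglyMeasurable.stronglyMeasurableAtFilter)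
    (ff_cont H hH ρ hρcont).continuousAt

lemma CC_cont (H : ℝ) (hH : 1 < H) (ρ : ℝ → ℝ) (hρcont : ContinuousOn ρ (Set.Icc 1 H)) :
    Continuous (CC H ρ) := by
  rw [continuous_iff_continuousAt]
  exact fun s => (CC_deriv H hH ρ hρcont s).continuousAt

lemma CC_sub (H : ℝ) (hH : 1 < H) (ρ : ℝ → ℝ) (hρcont : ContinuousOn ρ (Set.Icc 1 H))
    (s t : ℝ) : CC H ρ t - CC H ρ s = ∫ w in s..t, ff H ρ w := by
  have h := intervalIntegral.integral_add_adjacent_intervals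
    (a := (1:ℝ)) (b := s) (c := t) (μ := volume)
    ((ff_cont H hH ρ hρcont).intervalIntegrable _ _)
    ((ff_cont H hH ρ hρcont).intervalIntegrable _ _)
  rw [CC, CC, ← h]; ring

lemma CC_mono (H : ℝ) (hH : 1 < H) (ρ : ℝ → ℝ) (hρcont : ContinuousOn ρ (Set.Icc 1 H))
    (hρrange : ∀ η ∈ Set.Icc 1 H, ρ η ∈ Set.Icc (0 : ℝ) 1) : Monotone (CC H ρ) := by
  intro s t hst
  have h := CC_sub H hH ρ hρcont s t
  nlinarith [intervalIntegral.integral_nonneg (μ := volume) hst (fun w _ => ff_nonneg H hH ρ hρrange w)]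

lemma CC_one (H : ℝ) (ρ : ℝ → ℝ) : CC H ρ 1 = 0 := intervalIntegral.integral_same

lemma key_mono (H : ℝ) (hH : 1 < H) (ρ : ℝ → ℝ)
    (hρcont : ContinuousOn ρ (Set.Icc 1 H))
    (hρrange : ∀ η ∈ Set.Icc 1 H, ρ η ∈ Set.Icc (0 : ℝ) 1)
    (hρmono : MonotoneOn (fun η => η * ρ η) (Set.Icc 1 H))
    {σ τ : ℝ} (hσ : σ ∈ Set.Icc 1 H) (hτ : τ ∈ Set.Icc 1 H) (hστ : σ ≤ τ) :
    ρ σ + CC H ρ σ ≤ ρ τ + CC H ρ τ := by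
  set c := σ * ρ σ with hc
  have hσ0 : (0:ℝ) < σ := lt_of_lt_of_le one_pos hσ.1
  have hτ0 : (0:ℝ) < τ := lt_of_lt_of_le one_pos hτ.1
  have hc0 : 0 ≤ c := mul_nonneg hσ0.le (hρrange σ hσ).1
  -- integral of c/w^2
  have hint : (∫ w in σ..τ, c * (w^2)⁻¹) = c * σ⁻¹ - c * τ⁻¹ := by
    have : ∀ w ∈ Set.uIcc σ τ, HasDerivAt (fun y => -(c * y⁻¹)) (c * (w^2)⁻¹) w := by
      intro w hw
      rw [Set.uIcc_of_le hστ] at hw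
      have hw0 : w ≠ 0 := (lt_of_lt_of_le hσ0 hw.1).ne'
      have := ((hasDerivAt_inv hw0).const_mul c).neg
      exact this.congr_deriv (by ring)
    have h2 := intervalIntegral.integral_eq_sub_of_hasDerivAt this
      (by apply ContinuousOn.intervalIntegrable; apply ContinuousOn.mul continuousOn_const
          apply ContinuousOn.inv₀ (by fun_prop)
          intro w hw
          rw [Set.uIcc_of_le hστ] at hw
          exact pow_ne_zero _ (lt_of_lt_of_le hσ0 hw.1).ne')
    rw [h2]; ring
  -- pointwise bound
  have hptw : ∀ w ∈ Set.Icc σ τ, c * (w^2)⁻¹ ≤ ff H ρ w := by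
    intro w hw
    have hwm : w ∈ Set.Icc 1 H := ⟨le_trans hσ.1 hw.1, le_trans hw.2 hτ.2⟩
    have hw0 : (0:ℝ) < w := lt_of_lt_of_le one_pos hwm.1
    have : c ≤ w * ρ w := hρmono hσ hwm (le_trans (le_refl σ) hw.1)
    rw [ff, cl_eq H hwm]
    calc c * (w^2)⁻¹ ≤ (w * ρ w) * (w^2)⁻¹ :=
          mul_le_mul_of_nonneg_right this (by positivity)
    _ = ρ w / w := by field_simp
  have hmono := intervalIntegral.integral_mono_on (μ := volume) hστ
    (by apply ContinuousOn.intervalIntegrable; rw [Set.uIcc_of_le hστ]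
        apply ContinuousOn.mul continuousOn_const
        apply ContinuousOn.inv₀ (by fun_prop)
        intro w hw; have := lt_of_lt_of_le hσ0 hw.1; positivity)
    ((ff_cont H hH ρ hρcont).intervalIntegrable _ _) hptw
  have hsub := CC_sub H hH ρ hρcont σ τ
  have hfinal : c * σ⁻¹ - c * τ⁻¹ ≤ CC H ρ τ - CC H ρ σ := by
    rw [hsub, ← hint]; exact hmono
  have hlast : σ * ρ σ ≤ τ * ρ τ := hρmono hσ hτ hστ
  have h1 : c * σ⁻¹ = ρ σ := by
    rw [hc, mul_comm σ (ρ σ), mul_assoc, mul_inv_cancel₀ hσ0.ne', mul_one]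
  have h2 : c * τ⁻¹ ≤ ρ τ := by
    have hρτ : ρ τ = (τ * ρ τ) * τ⁻¹ := by field_simp
    rw [hρτ]
    exact mul_le_mul_of_nonneg_right hlast (by positivity)
  nlinarith

lemma E1 (H : ℝ) (hH : 1 < H) (ρ : ℝ → ℝ) (hρcont : ContinuousOn ρ (Set.Icc 1 H))
    (uhat : ℝ) (hu : uhat ∈ Set.Icc 1 H) {t : ℝ} (ht : t ∈ Set.Icc 1 uhat) :
    (∫ z in (1:ℝ)..t, (ρ (cl H (uhat / z)) + (CC H ρ uhat - CC H ρ (uhat / z))))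
      = t * (CC H ρ uhat - CC H ρ (uhat / t)) := by
  have hu0 : (0:ℝ) < uhat := lt_of_lt_of_le one_pos hu.1
  have h1t : (1:ℝ) ≤ t := ht.1
  set g : ℝ → ℝ := fun z => z * (CC H ρ uhat - CC H ρ (uhat / z)) with hg
  have hPc : Continuous (fun w => ρ (cl H w)) :=
    hρcont.comp_continuous (cl_cont H) (cl_mem H hH)
  have hdivc : ContinuousOn (fun z : ℝ => uhat / z) (Set.Icc 1 t) :=
    ContinuousOn.div continuousOn_const continuousOn_id
      (fun z hz => (lt_of_lt_of_le one_pos hz.1).ne')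
  have hgcont : ContinuousOn g (Set.Icc 1 t) := by
    apply ContinuousOn.mul continuousOn_id
    exact ContinuousOn.sub continuousOn_const
      ((CC_cont H hH ρ hρcont).comp_continuousOn hdivc)
  have hderiv : ∀ z ∈ Set.Ioo (1:ℝ) t,
      HasDerivAt g (ρ (cl H (uhat / z)) + (CC H ρ uhat - CC H ρ (uhat / z))) z := by
    intro z hz
    have hz0 : (0:ℝ) < z := lt_trans one_pos hz.1
    have hmem : uhat / z ∈ Set.Icc 1 H := by
      constructor
      · rw [le_div_iff₀ hz0]; simpa using le_trans hz.2.le ht.2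
      · calc uhat / z ≤ uhat / 1 := by
              apply div_le_div_of_nonneg_left hu0.le one_pos hz.1.le
        _ ≤ H := by simpa using hu.2
    have hinner : HasDerivAt (fun z : ℝ => uhat / z) (-(uhat / z ^ 2)) z := by
      simpa [div_eq_mul_inv, neg_mul, mul_comm] using
        ((hasDerivAt_inv hz0.ne').const_mul uhat)
    have hcomp : HasDerivAt (fun z : ℝ => CC H ρ (uhat / z))
        (ff H ρ (uhat / z) * -(uhat / z ^ 2)) z :=
      (CC_deriv H hH ρ hρcont (uhat / z)).comp z hinner
    have hmul : HasDerivAt g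
        (1 * (CC H ρ uhat - CC H ρ (uhat / z))
          + z * (0 - ff H ρ (uhat / z) * -(uhat / z ^ 2))) z :=
      (hasDerivAt_id z).mul ((hasDerivAt_const z _).sub hcomp)
    convert hmul using 1
    have : ff H ρ (uhat / z) = ρ (cl H (uhat / z)) / (uhat / z) := by
      rw [ff, cl_eq H hmem]
    rw [this, cl_eq H hmem]
    have huz : uhat / z ≠ 0 := (lt_of_lt_of_le one_pos hmem.1).ne'
    field_simp
    ring
  have hint : IntervalIntegrable
      (fun z => (ρ (cl H (uhat / z)) + (CC H ρ uhat - CC H ρ (uhat / z)))) volume 1 t := by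
    apply ContinuousOn.intervalIntegrable
    rw [Set.uIcc_of_le h1t]
    apply ContinuousOn.add (hPc.comp_continuousOn hdivc)
    exact ContinuousOn.sub continuousOn_const
      ((CC_cont H hH ρ hρcont).comp_continuousOn hdivc)
  have := intervalIntegral.integral_eq_sub_of_hasDeriv_right_of_le h1t hgcont
    (fun z hz => (hderiv z hz).hasDerivWithinAt) hint
  rw [this, hg]
  simp

lemma E2 (H : ℝ) (hH : 1 < H) (ρ : ℝ → ℝ) (hρcont : ContinuousOn ρ (Set.Icc 1 H))
    (uhat : ℝ) (hu : uhat ∈ Set.Icc 1 H) {t : ℝ} (ht : t ∈ Set.Icc uhat H) :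
    (∫ z in uhat..t, (ρ (cl H (z / uhat)) + CC H ρ uhat + CC H ρ (z / uhat)))
      = t * (CC H ρ uhat + CC H ρ (t / uhat)) - uhat * CC H ρ uhat := by
  have hu0 : (0:ℝ) < uhat := lt_of_lt_of_le one_pos hu.1
  have hut : uhat ≤ t := ht.1
  set g : ℝ → ℝ := fun z => z * (CC H ρ uhat + CC H ρ (z / uhat)) with hg
  have hPc : Continuous (fun w => ρ (cl H w)) :=
    hρcont.comp_continuous (cl_cont H) (cl_mem H hH)
  have hdivc : Continuous (fun z : ℝ => z / uhat) := by fun_prop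
  have hgcont : ContinuousOn g (Set.Icc uhat t) := by
    apply ContinuousOn.mul continuousOn_id
    exact ContinuousOn.add continuousOn_const
      ((CC_cont H hH ρ hρcont).comp hdivc).continuousOn
  have hderiv : ∀ z ∈ Set.Ioo uhat t,
      HasDerivAt g (ρ (cl H (z / uhat)) + CC H ρ uhat + CC H ρ (z / uhat)) z := by
    intro z hz
    have hz0 : (0:ℝ) < z := lt_trans hu0 hz.1
    have hmem : z / uhat ∈ Set.Icc 1 H := by
      constructor
      · rw [le_div_iff₀ hu0]; simpa using hz.1.le
      · calc z / uhat ≤ z / 1 := by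
              apply div_le_div_of_nonneg_left hz0.le one_pos hu.1
        _ ≤ H := by simpa using le_trans hz.2.le ht.2
    have hinner : HasDerivAt (fun z : ℝ => z / uhat) (1 / uhat) z := by
      simpa using (hasDerivAt_id z).div_const uhat
    have hcomp : HasDerivAt (fun z : ℝ => CC H ρ (z / uhat))
        (ff H ρ (z / uhat) * (1 / uhat)) z :=
      (CC_deriv H hH ρ hρcont (z / uhat)).comp (h := fun z : ℝ => z / uhat) z hinner
    have hmul : HasDerivAt g
        (1 * (CC H ρ uhat + CC H ρ (z / uhat))
          + z * (0 + ff H ρ (z / uhat) * (1 / uhat))) z :=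
      (hasDerivAt_id z).mul ((hasDerivAt_const z _).add hcomp)
    convert hmul using 1
    have hffeq : ff H ρ (z / uhat) = ρ (cl H (z / uhat)) / (z / uhat) := by
      rw [ff, cl_eq H hmem]
    rw [hffeq, cl_eq H hmem]
    have huz : z / uhat ≠ 0 := (lt_of_lt_of_le one_pos hmem.1).ne'
    field_simp
    ring
  have hint : IntervalIntegrable
      (fun z => (ρ (cl H (z / uhat)) + CC H ρ uhat + CC H ρ (z / uhat))) volume uhat t := by
    apply ContinuousOn.intervalIntegrable
    exact (((hPc.comp hdivc).add continuous_const).add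
      ((CC_cont H hH ρ hρcont).comp hdivc)).continuousOn
  have := intervalIntegral.integral_eq_sub_of_hasDeriv_right_of_le hut hgcont
    (fun z hz => (hderiv z hz).hasDerivWithinAt) hint
  rw [this, hg]
  simp [div_self hu0.ne', CC_one]

noncomputable def XX (H uhat : ℝ) (ρ : ℝ → ℝ) (t : ℝ) : ℝ :=
  if t ≤ uhat then ρ (cl H (uhat / t)) + (CC H ρ uhat - CC H ρ (uhat / t))
  else ρ (cl H (t / uhat)) + CC H ρ uhat + CC H ρ (t / uhat)

noncomputable def PP (H uhat : ℝ) (ρ : ℝ → ℝ) (t : ℝ) : ℝ :=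
  t * XX H uhat ρ t - ∫ z in (1:ℝ)..t, XX H uhat ρ z

lemma mem_div1 (H uhat : ℝ) (hu : uhat ∈ Set.Icc 1 H) {t : ℝ} (ht : t ∈ Set.Icc 1 uhat) :
    uhat / t ∈ Set.Icc 1 H := by
  have ht0 : (0:ℝ) < t := lt_of_lt_of_le one_pos ht.1
  constructor
  · rw [le_div_iff₀ ht0]; simpa using ht.2
  · calc uhat / t ≤ uhat / 1 :=
        div_le_div_of_nonneg_left (le_trans one_pos.le hu.1) one_pos ht.1
    _ ≤ H := by simpa using hu.2

lemma mem_div2 (H uhat : ℝ) (hu : uhat ∈ Set.Icc 1 H) {t : ℝ} (ht : t ∈ Set.Icc uhat H) :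
    t / uhat ∈ Set.Icc 1 H := by
  have hu0 : (0:ℝ) < uhat := lt_of_lt_of_le one_pos hu.1
  have ht0 : (0:ℝ) < t := lt_of_lt_of_le hu0 ht.1
  constructor
  · rw [le_div_iff₀ hu0]; simpa using ht.1
  · calc t / uhat ≤ t / 1 := div_le_div_of_nonneg_left ht0.le one_pos hu.1
    _ ≤ H := by simpa using ht.2

lemma XX_v1 (H uhat : ℝ) (ρ : ℝ → ℝ) {t : ℝ} (ht : t ≤ uhat) :
    XX H uhat ρ t = ρ (cl H (uhat / t)) + (CC H ρ uhat - CC H ρ (uhat / t)) := if_pos ht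

lemma XX_v2 (H uhat : ℝ) (hu0 : 0 < uhat) (ρ : ℝ → ℝ) {t : ℝ} (ht : uhat ≤ t) :
    XX H uhat ρ t = ρ (cl H (t / uhat)) + CC H ρ uhat + CC H ρ (t / uhat) := by
  rcases eq_or_lt_of_le ht with h | h
  · subst h
    rw [XX_v1 H uhat ρ le_rfl, div_self hu0.ne', CC_one]
    ring
  · exact if_neg (not_le.2 h)

lemma XX_mono (H : ℝ) (hH : 1 < H) (ρ : ℝ → ℝ)
    (hρcont : ContinuousOn ρ (Set.Icc 1 H))
    (hρrange : ∀ η ∈ Set.Icc 1 H, ρ η ∈ Set.Icc (0 : ℝ) 1)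
    (hρanti : AntitoneOn ρ (Set.Icc 1 H))
    (hρmono : MonotoneOn (fun η => η * ρ η) (Set.Icc 1 H))
    (uhat : ℝ) (hu : uhat ∈ Set.Icc 1 H) :
    MonotoneOn (XX H uhat ρ) (Set.Icc 1 H) := by
  have hu0 : (0:ℝ) < uhat := lt_of_lt_of_le one_pos hu.1
  have m1 : ∀ s ∈ Set.Icc 1 uhat, ∀ t ∈ Set.Icc 1 uhat, s ≤ t →
      XX H uhat ρ s ≤ XX H uhat ρ t := by
    intro s hs t ht hst
    rw [XX_v1 H uhat ρ hs.2, XX_v1 H uhat ρ ht.2]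
    have hds := mem_div1 H uhat hu hs
    have hdt := mem_div1 H uhat hu ht
    have hdd : uhat / t ≤ uhat / s :=
      div_le_div_of_nonneg_left hu0.le (lt_of_lt_of_le one_pos hs.1) hst
    have h1 : ρ (cl H (uhat / s)) ≤ ρ (cl H (uhat / t)) := by
      rw [cl_eq H hds, cl_eq H hdt]
      exact hρanti hdt hds hdd
    have h2 : CC H ρ (uhat / t) ≤ CC H ρ (uhat / s) :=
      CC_mono H hH ρ hρcont hρrange hdd
    linarith
  have m2 : ∀ s ∈ Set.Icc uhat H, ∀ t ∈ Set.Icc uhat H, s ≤ t →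
      XX H uhat ρ s ≤ XX H uhat ρ t := by
    intro s hs t ht hst
    rw [XX_v2 H uhat hu0 ρ hs.1, XX_v2 H uhat hu0 ρ ht.1]
    have hds := mem_div2 H uhat hu hs
    have hdt := mem_div2 H uhat hu ht
    have hdd : s / uhat ≤ t / uhat := by gcongr
    have hk := key_mono H hH ρ hρcont hρrange hρmono hds hdt hdd
    rw [cl_eq H hds, cl_eq H hdt]
    linarith
  intro s hs t ht hst
  by_cases htu : t ≤ uhat
  · exact m1 s ⟨hs.1, le_trans hst htu⟩ t ⟨ht.1, htu⟩ hst
  · push_neg at htu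
    by_cases hsu : s ≤ uhat
    · calc XX H uhat ρ s ≤ XX H uhat ρ uhat :=
            m1 s ⟨hs.1, hsu⟩ uhat ⟨hu.1, le_rfl⟩ hsu
      _ ≤ XX H uhat ρ t := m2 uhat ⟨le_rfl, hu.2⟩ t ⟨htu.le, ht.2⟩ htu.le
    · push_neg at hsu
      exact m2 s ⟨hsu.le, hs.2⟩ t ⟨le_trans hsu.le hst, ht.2⟩ hst

lemma XX_int (H : ℝ) (hH : 1 < H) (ρ : ℝ → ℝ)
    (hρcont : ContinuousOn ρ (Set.Icc 1 H))
    (hρrange : ∀ η ∈ Set.Icc 1 H, ρ η ∈ Set.Icc (0 : ℝ) 1)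
    (hρanti : AntitoneOn ρ (Set.Icc 1 H))
    (hρmono : MonotoneOn (fun η => η * ρ η) (Set.Icc 1 H))
    (uhat : ℝ) (hu : uhat ∈ Set.Icc 1 H)
    {s t : ℝ} (hs : s ∈ Set.Icc 1 H) (ht : t ∈ Set.Icc 1 H) :
    IntervalIntegrable (XX H uhat ρ) volume s t := by
  have hsub : Set.uIcc s t ⊆ Set.Icc 1 H := by
    rw [← Set.uIcc_of_le hH.le]
    exact Set.uIcc_subset_uIcc (by rwa [Set.uIcc_of_le hH.le]) (by rwa [Set.uIcc_of_le hH.le])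
  exact ((XX_mono H hH ρ hρcont hρrange hρanti hρmono uhat hu).mono hsub).intervalIntegrable

lemma XX_intE1 (H : ℝ) (hH : 1 < H) (ρ : ℝ → ℝ)
    (hρcont : ContinuousOn ρ (Set.Icc 1 H))
    (uhat : ℝ) (hu : uhat ∈ Set.Icc 1 H) {t : ℝ} (ht : t ∈ Set.Icc 1 uhat) :
    (∫ z in (1:ℝ)..t, XX H uhat ρ z) = t * (CC H ρ uhat - CC H ρ (uhat / t)) := by
  rw [← E1 H hH ρ hρcont uhat hu ht]
  apply intervalIntegral.integral_congr
  intro z hz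
  rw [Set.uIcc_of_le ht.1] at hz
  exact XX_v1 H uhat ρ (le_trans hz.2 ht.2)

lemma XX_intE2 (H : ℝ) (hH : 1 < H) (ρ : ℝ → ℝ)
    (hρcont : ContinuousOn ρ (Set.Icc 1 H))
    (hρrange : ∀ η ∈ Set.Icc 1 H, ρ η ∈ Set.Icc (0 : ℝ) 1)
    (hρanti : AntitoneOn ρ (Set.Icc 1 H))
    (hρmono : MonotoneOn (fun η => η * ρ η) (Set.Icc 1 H))
    (uhat : ℝ) (hu : uhat ∈ Set.Icc 1 H) {t : ℝ} (ht : t ∈ Set.Icc uhat H) :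
    (∫ z in (1:ℝ)..t, XX H uhat ρ z) = t * (CC H ρ uhat + CC H ρ (t / uhat)) := by
  have hu0 : (0:ℝ) < uhat := lt_of_lt_of_le one_pos hu.1
  have hadd := intervalIntegral.integral_add_adjacent_intervals
    (XX_int H hH ρ hρcont hρrange hρanti hρmono uhat hu
      (Set.mem_Icc.2 ⟨le_rfl, hH.le⟩) hu)
    (XX_int H hH ρ hρcont hρrange hρanti hρmono uhat hu hu ⟨le_trans hu.1 ht.1, ht.2⟩)
  have h1 : (∫ z in (1:ℝ)..uhat, XX H uhat ρ z) = uhat * CC H ρ uhat := by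
    rw [XX_intE1 H hH ρ hρcont uhat hu ⟨hu.1, le_rfl⟩, div_self hu0.ne', CC_one]
    ring
  have h2 : (∫ z in uhat..t, XX H uhat ρ z)
      = t * (CC H ρ uhat + CC H ρ (t / uhat)) - uhat * CC H ρ uhat := by
    rw [← E2 H hH ρ hρcont uhat hu ht]
    apply intervalIntegral.integral_congr
    intro z hz
    rw [Set.uIcc_of_le ht.1] at hz
    rw [XX_v2 H uhat hu0 ρ hz.1]
  rw [← hadd, h1, h2]
  ring

lemma PP_v1 (H : ℝ) (hH : 1 < H) (ρ : ℝ → ℝ)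
    (hρcont : ContinuousOn ρ (Set.Icc 1 H))
    (uhat : ℝ) (hu : uhat ∈ Set.Icc 1 H) {t : ℝ} (ht : t ∈ Set.Icc 1 uhat) :
    PP H uhat ρ t = ρ (cl H (uhat / t)) * t := by
  rw [PP, XX_intE1 H hH ρ hρcont uhat hu ht, XX_v1 H uhat ρ ht.2]
  ring

lemma PP_v2 (H : ℝ) (hH : 1 < H) (ρ : ℝ → ℝ)
    (hρcont : ContinuousOn ρ (Set.Icc 1 H))
    (hρrange : ∀ η ∈ Set.Icc 1 H, ρ η ∈ Set.Icc (0 : ℝ) 1)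
    (hρanti : AntitoneOn ρ (Set.Icc 1 H))
    (hρmono : MonotoneOn (fun η => η * ρ η) (Set.Icc 1 H))
    (uhat : ℝ) (hu : uhat ∈ Set.Icc 1 H) {t : ℝ} (ht : t ∈ Set.Icc uhat H) :
    PP H uhat ρ t = ρ (cl H (t / uhat)) * t := by
  have hu0 : (0:ℝ) < uhat := lt_of_lt_of_le one_pos hu.1
  rw [PP, XX_intE2 H hH ρ hρcont hρrange hρanti hρmono uhat hu ht,
    XX_v2 H uhat hu0 ρ ht.1]
  ring


/-- The "if" part of Theorem 2 of the paper: if the robustness function `ρ`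
satisfies `ρ(H/uhat) + ∫_1^uhat ρ(z)/z dz + ∫_1^{H/uhat} ρ(z)/z dz ≤ 1`, then
there exists a feasible DSIC single-bidder auction on `[1, H]` satisfying the
corresponding error-dependent robustness guarantee. -/
theorem robustness_of_prediction_error_sufficient (H : ℝ) (hH : 1 < H)
    (uhat : ℝ) (huhat : uhat ∈ Set.Icc 1 H)
    (ρ : ℝ → ℝ)
    (hρrange : ∀ η ∈ Set.Icc 1 H, ρ η ∈ Set.Icc (0 : ℝ) 1)
    (hρdiff : DifferentiableOn ℝ ρ (Set.Icc 1 H))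
    (hρanti : AntitoneOn ρ (Set.Icc 1 H))
    (hρmono : MonotoneOn (fun η => η * ρ η) (Set.Icc 1 H))
    (hcond : ρ (H / uhat) + (∫ z in (1:ℝ)..uhat, ρ z / z)
      + (∫ z in (1:ℝ)..(H / uhat), ρ z / z) ≤ 1) :
    ∃ x p : ℝ → ℝ,
      -- feasibility
      (∀ t ∈ Set.Icc 1 H, 0 ≤ x t ∧ x t ≤ 1) ∧
      -- DSIC: nonnegative payments, monotone allocation, individual rationality,
      -- and Myerson's payment identity
      (∀ t ∈ Set.Icc 1 H, 0 ≤ p t) ∧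
      MonotoneOn x (Set.Icc 1 H) ∧
      p 1 ≤ x 1 ∧
      (∀ s t : ℝ, 1 ≤ s → s ≤ t → t ≤ H →
        p t - p s = t * x t - s * x s - ∫ z in s..t, x z) ∧
      -- error-dependent robustness guarantee
      (∀ t ∈ Set.Icc 1 uhat, ρ (uhat / t) * t ≤ p t) ∧
      (∀ t ∈ Set.Icc uhat H, ρ (t / uhat) * t ≤ p t) := by
  have hρcont : ContinuousOn ρ (Set.Icc 1 H) := hρdiff.continuousOn
  have hu0 : (0:ℝ) < uhat := lt_of_lt_of_le one_pos huhat.1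
  have hmemH : H ∈ Set.Icc (1:ℝ) H := ⟨hH.le, le_rfl⟩
  have hmem1 : (1:ℝ) ∈ Set.Icc (1:ℝ) H := ⟨le_rfl, hH.le⟩
  have xmono := XX_mono H hH ρ hρcont hρrange hρanti hρmono uhat huhat
  have hHu : H / uhat ∈ Set.Icc (1:ℝ) H := mem_div2 H uhat huhat ⟨huhat.2, le_rfl⟩
  -- x 1 and x H
  have hx1 : XX H uhat ρ 1 = ρ (cl H uhat) := by
    rw [XX_v1 H uhat ρ huhat.1, div_one]; ring
  have hCCu : CC H ρ uhat = ∫ z in (1:ℝ)..uhat, ρ z / z := by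
    apply intervalIntegral.integral_congr
    intro w hw
    rw [Set.uIcc_of_le huhat.1] at hw
    rw [ff, cl_eq H ⟨hw.1, le_trans hw.2 huhat.2⟩]
  have hCCHu : CC H ρ (H / uhat) = ∫ z in (1:ℝ)..(H / uhat), ρ z / z := by
    apply intervalIntegral.integral_congr
    intro w hw
    rw [Set.uIcc_of_le hHu.1] at hw
    rw [ff, cl_eq H ⟨hw.1, le_trans hw.2 hHu.2⟩]
  have hxH : XX H uhat ρ H ≤ 1 := by
    rw [XX_v2 H uhat hu0 ρ huhat.2, cl_eq H hHu, hCCu, hCCHu]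
    linarith
  refine ⟨XX H uhat ρ, PP H uhat ρ, ?_, ?_, xmono, ?_, ?_, ?_, ?_⟩
  · intro t ht
    constructor
    · have : XX H uhat ρ 1 ≤ XX H uhat ρ t := xmono hmem1 ht ht.1
      rw [hx1] at this
      exact le_trans (hρrange _ (cl_mem H hH uhat)).1 this
    · exact le_trans (xmono ht hmemH ht.2) hxH
  · intro t ht
    by_cases htu : t ≤ uhat
    · rw [PP_v1 H hH ρ hρcont uhat huhat ⟨ht.1, htu⟩]
      exact mul_nonneg (hρrange _ (cl_mem H hH _)).1 (le_trans one_pos.le ht.1)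
    · push_neg at htu
      rw [PP_v2 H hH ρ hρcont hρrange hρanti hρmono uhat huhat ⟨htu.le, ht.2⟩]
      exact mul_nonneg (hρrange _ (cl_mem H hH _)).1 (le_trans one_pos.le ht.1)
  · rw [PP]
    simp
  · intro s t hs hst htH
    have hsm : s ∈ Set.Icc (1:ℝ) H := ⟨hs, le_trans hst htH⟩
    have htm : t ∈ Set.Icc (1:ℝ) H := ⟨le_trans hs hst, htH⟩
    have hadd := intervalIntegral.integral_add_adjacent_intervals
      (XX_int H hH ρ hρcont hρrange hρanti hρmono uhat huhat hmem1 hsm)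
      (XX_int H hH ρ hρcont hρrange hρanti hρmono uhat huhat hsm htm)
    rw [PP, PP, ← hadd]
    ring
  · intro t ht
    rw [PP_v1 H hH ρ hρcont uhat huhat ht, cl_eq H (mem_div1 H uhat huhat ht)]
  · intro t ht
    rw [PP_v2 H hH ρ hρcont hρrange hρanti hρmono uhat huhat ht,
      cl_eq H (mem_div2 H uhat huhat ht)]
end

section
/- Let ε ∈ (0,1] and define ρ : [1,∞) → ℝ by ρ(η) = 1/((π/ε + 1)·(1 + (ln η)^{1+ε})). Then: (a) ρ is non-increasing on [1,∞); (b) η ↦ η·ρ(η) is non-decreasing on [1,∞); and (c) for every H > 1 and every û ∈ [1,H], ρ(H/û) + ∫_1^û ρ(z)/z dz + ∫_1^{H/û} ρ(z)/z dz ≤ 1. -/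
open MeasureTheory intervalIntegral Real

variable {ε : ℝ}


lemma amgm_key (hε0 : 0 < ε) (hε1 : ε ≤ 1) {L : ℝ} (hL : 0 ≤ L) :
    (1 + ε) * L ^ ((1 + ε) - 1) ≤ 1 + L ^ (1 + ε) := by
  have hp : (0:ℝ) < 1 + ε := by linarith
  have h := Real.geom_mean_le_arith_mean2_weighted
    (w₁ := ε / (1+ε)) (w₂ := 1 / (1+ε)) (p₁ := L ^ (1+ε)) (p₂ := 1)
    (by positivity) (by positivity) (by positivity) zero_le_one (by field_simp; ring)
  have h1 : (L ^ (1+ε)) ^ (ε / (1+ε)) = L ^ ε := by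
    rw [← Real.rpow_mul hL]; congr 1; field_simp
  rw [h1, Real.one_rpow, mul_one] at h
  have h2 : L ^ ((1+ε) - 1) = L ^ ε := by norm_num
  rw [h2]
  have hLp : 0 ≤ L ^ (1+ε) := Real.rpow_nonneg hL _
  have h3 : (1+ε) * L ^ ε ≤ ε * L ^ (1+ε) + 1 := by
    have := mul_le_mul_of_nonneg_left h (le_of_lt hp)
    calc (1+ε) * L ^ ε ≤ (1+ε) * (ε / (1+ε) * L ^ (1+ε) + 1 / (1+ε) * 1) := this
      _ = ε * L ^ (1+ε) + 1 := by field_simp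
  nlinarith

lemma part_a (hε0 : 0 < ε) :
    AntitoneOn (fun η => 1 / ((π / ε + 1) * (1 + Real.log η ^ (1 + ε)))) (Set.Ici 1) := by
  have hC : 0 < π / ε + 1 := by positivity
  intro a ha b hb hab
  have ha1 : (1:ℝ) ≤ a := ha
  have hb1 : (1:ℝ) ≤ b := hb
  have hla : 0 ≤ Real.log a := Real.log_nonneg ha1
  have hlb : 0 ≤ Real.log b := Real.log_nonneg hb1
  apply one_div_le_one_div_of_le
  · have : 0 ≤ Real.log a ^ (1+ε) := Real.rpow_nonneg hla _
    positivity
  · apply mul_le_mul_of_nonneg_left _ hC.le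
    have : Real.log a ^ (1+ε) ≤ Real.log b ^ (1+ε) :=
      Real.rpow_le_rpow hla (Real.log_le_log (by linarith) hab) (by linarith)
    linarith

lemma hasDeriv_b (hε0 : 0 < ε) {x : ℝ} (hx : 1 < x) :
    HasDerivAt (fun η => η * (1 / ((π / ε + 1) * (1 + Real.log η ^ (1 + ε)))))
      ((1 * ((π/ε+1) * (1 + Real.log x ^ (1+ε))) -
        x * ((π/ε+1) * ((1+ε) * Real.log x ^ ((1+ε)-1) * x⁻¹))) /
        ((π/ε+1) * (1 + Real.log x ^ (1+ε)))^2) x := by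
  have hC : 0 < π / ε + 1 := by positivity
  have hx0 : (0:ℝ) < x := by linarith
  have hlx : 0 < Real.log x := Real.log_pos hx
  have hrpow : HasDerivAt (fun η : ℝ => Real.log η ^ (1+ε))
      ((1+ε) * Real.log x ^ ((1+ε)-1) * x⁻¹) x := by
    have h1 : HasDerivAt (fun y : ℝ => y ^ (1+ε))
        ((1+ε) * Real.log x ^ ((1+ε)-1)) (Real.log x) :=
      Real.hasDerivAt_rpow_const (Or.inl hlx.ne')
    exact h1.comp x (Real.hasDerivAt_log hx0.ne')
  have hd : HasDerivAt (fun η : ℝ => (π/ε+1) * (1 + Real.log η ^ (1+ε)))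
      ((π/ε+1) * ((1+ε) * Real.log x ^ ((1+ε)-1) * x⁻¹)) x :=
    (hrpow.const_add 1).const_mul _
  have hne : (π/ε+1) * (1 + Real.log x ^ (1+ε)) ≠ 0 := by
    have : 0 ≤ Real.log x ^ (1+ε) := Real.rpow_nonneg hlx.le _
    positivity
  have := (hasDerivAt_id x).div hd hne
  have heq : (fun η : ℝ => η * (1 / ((π/ε+1) * (1 + Real.log η ^ (1+ε)))))
      = fun y => y / ((π/ε+1) * (1 + Real.log y ^ (1+ε))) := by
    funext y; rw [mul_one_div]
  rw [heq]
  exact this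

lemma cont_rho (hε0 : 0 < ε) :
    ContinuousOn (fun η => 1 / ((π / ε + 1) * (1 + Real.log η ^ (1 + ε)))) (Set.Ici 1) := by
  have hC : 0 < π / ε + 1 := by positivity
  apply ContinuousOn.div continuousOn_const
  · apply continuousOn_const.mul
    apply continuousOn_const.add
    intro x hx
    have hx1 : (1:ℝ) ≤ x := hx
    have h1 : ContinuousAt (fun η : ℝ => Real.log η ^ (1+ε)) x :=
      (Real.continuousAt_rpow_const _ _ (Or.inr (by linarith))).comp
        (Real.continuousAt_log (by linarith))
    exact h1.continuousWithinAt
  · intro x hx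
    have hx1 : (1:ℝ) ≤ x := hx
    have : 0 ≤ Real.log x ^ (1+ε) := Real.rpow_nonneg (Real.log_nonneg hx1) _
    positivity

lemma part_b (hε0 : 0 < ε) (hε1 : ε ≤ 1) :
    MonotoneOn (fun η => η * (1 / ((π / ε + 1) * (1 + Real.log η ^ (1 + ε))))) (Set.Ici 1) := by
  have hC : 0 < π / ε + 1 := by positivity
  apply monotoneOn_of_deriv_nonneg (convex_Ici 1)
  · exact continuousOn_id.mul (cont_rho hε0)
  · intro x hx
    rw [interior_Ici] at hx
    exact (hasDeriv_b hε0 hx).differentiableAt.differentiableWithinAt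
  · intro x hx
    rw [interior_Ici] at hx
    rw [(hasDeriv_b hε0 hx).deriv]
    have hx0 : (0:ℝ) < x := by linarith [hx.out]
    have hlx : 0 < Real.log x := Real.log_pos hx
    apply div_nonneg _ (sq_nonneg _)
    have hxx : x * ((π/ε+1) * ((1+ε) * Real.log x ^ ((1+ε)-1) * x⁻¹))
        = (π/ε+1) * ((1+ε) * Real.log x ^ ((1+ε)-1)) := by
      field_simp
    rw [one_mul, hxx]
    rw [← mul_sub]
    apply mul_nonneg hC.le
    have := amgm_key hε0 hε1 hlx.le
    linarith


lemma aux_frac {A B : ℝ} (hA : 0 < A) (hAB : A ≤ B) :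
    1/(1+A) ≤ 1/(1+B) + A⁻¹ - B⁻¹ := by
  have hB : 0 < B := lt_of_lt_of_le hA hAB
  have h1 : (0:ℝ) < 1 + A := by linarith
  have h2 : (0:ℝ) < 1 + B := by linarith
  have h : 1/(1+B) + A⁻¹ - B⁻¹ - 1/(1+A)
      = ((B-A)*(1+A+B)) / (A*B*((1+A)*(1+B))) := by
    field_simp; ring
  have hn : 0 ≤ ((B-A)*(1+A+B)) / (A*B*((1+A)*(1+B))) := by
    apply div_nonneg
    · nlinarith
    · positivity
  linarith

lemma cont_f (hε0 : 0 < ε) :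
    ContinuousOn (fun z => 1 / ((π / ε + 1) * (1 + Real.log z ^ (1 + ε))) / z) (Set.Ici 1) := by
  apply (cont_rho hε0).div continuousOn_id
  intro x hx
  have hx1 : (1:ℝ) ≤ x := hx
  exact (by linarith : x ≠ 0)

lemma intble_f (hε0 : 0 < ε) {a b : ℝ} (ha : 1 ≤ a) (hb : 1 ≤ b) :
    IntervalIntegrable (fun z => 1 / ((π / ε + 1) * (1 + Real.log z ^ (1 + ε))) / z)
      volume a b := by
  apply ((cont_f hε0).mono ?_).intervalIntegrable
  intro z hz
  rcases Set.mem_uIcc.mp hz with h | h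
  · exact le_trans ha h.1
  · exact le_trans hb h.1

lemma seg1 (hε0 : 0 < ε) (hε1 : ε ≤ 1) {x : ℝ} (h1 : 1 ≤ x) (hxe : x ≤ Real.exp 1) :
    (∫ z in (1:ℝ)..x, 1 / ((π / ε + 1) * (1 + Real.log z ^ (1 + ε))) / z)
      ≤ 1/(π/ε+1) * (π/4) := by
  have hC : 0 < π / ε + 1 := by positivity
  set g : ℝ → ℝ := fun z => 1/(π/ε+1) * (1 / (1 + Real.log z ^ 2) * z⁻¹) with hg
  have hderiv : ∀ z ∈ Set.uIcc (1:ℝ) x,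
      HasDerivAt (fun y => 1/(π/ε+1) * arctan (Real.log y)) (g z) z := by
    intro z hz
    rw [Set.uIcc_of_le h1] at hz
    have hz0 : (0:ℝ) < z := by linarith [hz.1]
    exact (((Real.hasDerivAt_arctan (Real.log z)).comp z
      (Real.hasDerivAt_log hz0.ne')).const_mul (1/(π/ε+1)))
  have hgcont : ContinuousOn g (Set.uIcc (1:ℝ) x) := by
    rw [Set.uIcc_of_le h1]
    intro z hz
    have hz0 : (0:ℝ) < z := by linarith [hz.1]
    have hd2 : (0:ℝ) < 1 + Real.log z ^ 2 := by positivity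
    have : ContinuousAt g z := by
      apply ContinuousAt.mul continuousAt_const
      apply ContinuousAt.mul
      · exact ContinuousAt.div continuousAt_const
          (continuousAt_const.add ((Real.continuousAt_log hz0.ne').pow 2)) hd2.ne'
      · exact continuousAt_id.inv₀ hz0.ne'
    exact this.continuousWithinAt
  have hgint : IntervalIntegrable g volume 1 x := hgcont.intervalIntegrable
  have hftc : (∫ z in (1:ℝ)..x, g z)
      = 1/(π/ε+1) * arctan (Real.log x) - 1/(π/ε+1) * arctan (Real.log 1) :=
    integral_eq_sub_of_hasDerivAt hderiv hgint
  have hmono : (∫ z in (1:ℝ)..x, 1 / ((π / ε + 1) * (1 + Real.log z ^ (1 + ε))) / z)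
      ≤ ∫ z in (1:ℝ)..x, g z := by
    apply integral_mono_on h1 (intble_f hε0 le_rfl h1) hgint
    intro z hz
    have hz1 : (1:ℝ) ≤ z := hz.1
    have hz0 : (0:ℝ) < z := by linarith
    have hL0 : 0 ≤ Real.log z := Real.log_nonneg hz1
    have hL1 : Real.log z ≤ 1 := by
      calc Real.log z ≤ Real.log x := Real.log_le_log hz0 hz.2
        _ ≤ Real.log (Real.exp 1) := Real.log_le_log (by linarith) hxe
        _ = 1 := Real.log_exp 1
    have hcmp : Real.log z ^ (2:ℕ) ≤ Real.log z ^ (1+ε) := by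
      rcases eq_or_lt_of_le hL0 with h0 | h0
      · rw [← h0]
        rw [Real.zero_rpow (by linarith : (1:ℝ)+ε ≠ 0)]
        norm_num
      · have h2 : Real.log z ^ ((2:ℕ):ℝ) ≤ Real.log z ^ (1+ε) :=
          Real.rpow_le_rpow_of_exponent_ge h0 hL1 (by push_cast; linarith)
        rwa [Real.rpow_natCast] at h2
    have hd1 : 0 < 1 + Real.log z ^ (1+ε) := by positivity
    have hd2 : (0:ℝ) < 1 + Real.log z ^ 2 := by positivity
    rw [hg]
    have heq : 1 / ((π / ε + 1) * (1 + Real.log z ^ (1 + ε))) / z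
        = 1/(π/ε+1) * (1 / (1 + Real.log z ^ (1+ε)) * z⁻¹) := by
      rw [div_div, one_div, one_div, one_div, mul_inv, mul_inv, mul_assoc]
    rw [heq]
    apply mul_le_mul_of_nonneg_left _ (by positivity)
    apply mul_le_mul_of_nonneg_right _ (by positivity)
    apply one_div_le_one_div_of_le hd2
    linarith
  have harc : arctan (Real.log x) ≤ π/4 := by
    rw [← Real.arctan_one]
    apply Real.arctan_strictMono.monotone
    calc Real.log x ≤ Real.log (Real.exp 1) := Real.log_le_log (by linarith) hxe
      _ = 1 := Real.log_exp 1
  calc (∫ z in (1:ℝ)..x, 1 / ((π / ε + 1) * (1 + Real.log z ^ (1 + ε))) / z)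
      ≤ ∫ z in (1:ℝ)..x, g z := hmono
    _ = 1/(π/ε+1) * arctan (Real.log x) - 1/(π/ε+1) * arctan (Real.log 1) := hftc
    _ ≤ 1/(π/ε+1) * (π/4) := by
        rw [Real.log_one, Real.arctan_zero]
        have := mul_le_mul_of_nonneg_left harc (by positivity : (0:ℝ) ≤ 1/(π/ε+1))
        linarith




lemma one_lt_e : (1:ℝ) < Real.exp 1 := by
  have := Real.exp_one_gt_d9
  norm_num at this
  linarith

lemma seg2 (hε0 : 0 < ε) (hε1 : ε ≤ 1) {x : ℝ} (hex : Real.exp 1 ≤ x) :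
    (∫ z in (Real.exp 1)..x, 1 / ((π / ε + 1) * (1 + Real.log z ^ (1 + ε))) / z)
      ≤ 1/(π/ε+1) * (π/4 + 1/ε - 1) := by
  have hC : 0 < π / ε + 1 := by positivity
  have he1 : (1:ℝ) ≤ Real.exp 1 := one_lt_e.le
  set g : ℝ → ℝ := fun z => 1/(π/ε+1) * (1 / (1 + Real.log z ^ 2) * z⁻¹
      + Real.log z ^ (-(1+ε)) * z⁻¹ - Real.log z ^ (-(2:ℝ)) * z⁻¹) with hgdef
  set G : ℝ → ℝ := fun z => 1/(π/ε+1) * (arctan (Real.log z)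
      - Real.log z ^ (-ε) / ε + Real.log z ^ (-(1:ℝ))) with hGdef
  have hzfacts : ∀ z ∈ Set.Icc (Real.exp 1) x,
      (0:ℝ) < z ∧ 1 ≤ Real.log z := by
    intro z hz
    have hz0 : (0:ℝ) < z := lt_of_lt_of_le (Real.exp_pos 1) hz.1
    refine ⟨hz0, ?_⟩
    calc (1:ℝ) = Real.log (Real.exp 1) := (Real.log_exp 1).symm
      _ ≤ Real.log z := Real.log_le_log (Real.exp_pos 1) hz.1
  have hderiv : ∀ z ∈ Set.uIcc (Real.exp 1) x, HasDerivAt G (g z) z := by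
    intro z hz
    rw [Set.uIcc_of_le hex] at hz
    obtain ⟨hz0, hL1⟩ := hzfacts z hz
    have hL0 : (0:ℝ) < Real.log z := by linarith
    have hlog : HasDerivAt Real.log z⁻¹ z := Real.hasDerivAt_log hz0.ne'
    have h1 : HasDerivAt (fun y => arctan (Real.log y))
        (1 / (1 + Real.log z ^ 2) * z⁻¹) z :=
      (Real.hasDerivAt_arctan (Real.log z)).comp z hlog
    have h2 : HasDerivAt (fun y => Real.log y ^ (-ε))
        ((-ε) * Real.log z ^ (-ε - 1) * z⁻¹) z :=
      (Real.hasDerivAt_rpow_const (Or.inl hL0.ne')).comp z hlog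
    have h3 : HasDerivAt (fun y => Real.log y ^ (-(1:ℝ)))
        ((-(1:ℝ)) * Real.log z ^ (-(1:ℝ) - 1) * z⁻¹) z :=
      (Real.hasDerivAt_rpow_const (Or.inl hL0.ne')).comp z hlog
    have := ((h1.sub (h2.div_const ε)).add h3).const_mul (1/(π/ε+1))
    refine this.congr_deriv ?_
    rw [hgdef]
    simp only
    have e1 : (-ε - 1 : ℝ) = -(1+ε) := by ring
    have e2 : (-(1:ℝ) - 1 : ℝ) = -(2:ℝ) := by norm_num
    rw [e1, e2] at this ⊢
    field_simp
    ring
  have hgcont : ContinuousOn g (Set.uIcc (Real.exp 1) x) := by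
    rw [Set.uIcc_of_le hex]
    intro z hz
    obtain ⟨hz0, hL1⟩ := hzfacts z hz
    have hL0 : (0:ℝ) < Real.log z := by linarith
    have hd2 : (0:ℝ) < 1 + Real.log z ^ 2 := by positivity
    have hlogc : ContinuousAt Real.log z := Real.continuousAt_log hz0.ne'
    have : ContinuousAt g z := by
      apply ContinuousAt.mul continuousAt_const
      apply ContinuousAt.sub
      apply ContinuousAt.add
      · exact ContinuousAt.mul
          (ContinuousAt.div continuousAt_const (continuousAt_const.add (hlogc.pow 2)) hd2.ne')
          (continuousAt_id.inv₀ hz0.ne')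
      · exact ContinuousAt.mul
          ((Real.continuousAt_rpow_const _ _ (Or.inl hL0.ne')).comp hlogc)
          (continuousAt_id.inv₀ hz0.ne')
      · exact ContinuousAt.mul
          ((Real.continuousAt_rpow_const _ _ (Or.inl hL0.ne')).comp hlogc)
          (continuousAt_id.inv₀ hz0.ne')
    exact this.continuousWithinAt
  have hgint : IntervalIntegrable g volume (Real.exp 1) x := hgcont.intervalIntegrable
  have hftc : (∫ z in (Real.exp 1)..x, g z) = G x - G (Real.exp 1) :=
    integral_eq_sub_of_hasDerivAt hderiv hgint
  have hmono : (∫ z in (Real.exp 1)..x, 1 / ((π / ε + 1) * (1 + Real.log z ^ (1 + ε))) / z)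
      ≤ ∫ z in (Real.exp 1)..x, g z := by
    apply integral_mono_on hex (intble_f hε0 he1 (le_trans he1 hex)) hgint
    intro z hz
    obtain ⟨hz0, hL1⟩ := hzfacts z hz
    have hL0 : (0:ℝ) < Real.log z := by linarith
    set L := Real.log z
    have hA : 0 < L ^ (1+ε) := Real.rpow_pos_of_pos hL0 _
    have hcast : L ^ ((2:ℕ):ℝ) = L ^ (2:ℕ) := Real.rpow_natCast L 2
    have hAB : L ^ (1+ε) ≤ L ^ (2:ℕ) := by
      rw [← hcast]
      exact Real.rpow_le_rpow_of_exponent_le hL1 (by push_cast; linarith)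
    have hkey : 1 / (1 + L ^ (1+ε)) ≤ 1 / (1 + L ^ (2:ℕ)) + L ^ (-(1+ε)) - L ^ (-(2:ℝ)) := by
      rw [Real.rpow_neg hL0.le, Real.rpow_neg hL0.le]
      rw [show ((2:ℝ)) = ((2:ℕ):ℝ) by norm_num, hcast]
      exact aux_frac hA hAB
    have heq : 1 / ((π / ε + 1) * (1 + L ^ (1 + ε))) / z
        = 1/(π/ε+1) * (1 / (1 + L ^ (1+ε)) * z⁻¹) := by
      rw [div_div, one_div, one_div, one_div, mul_inv, mul_inv, mul_assoc]
    rw [hgdef]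
    simp only
    rw [heq]
    have hrhs : 1 / (1 + L ^ 2) * z⁻¹ + L ^ (-(1+ε)) * z⁻¹ - L ^ (-(2:ℝ)) * z⁻¹
        = (1 / (1 + L ^ (2:ℕ)) + L ^ (-(1+ε)) - L ^ (-(2:ℝ))) * z⁻¹ := by ring
    rw [hrhs]
    apply mul_le_mul_of_nonneg_left _ (by positivity)
    exact mul_le_mul_of_nonneg_right hkey (by positivity)
  have hGe : G (Real.exp 1) = 1/(π/ε+1) * (π/4 - 1/ε + 1) := by
    rw [hGdef]
    simp only [Real.log_exp, Real.arctan_one, Real.one_rpow]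
  have hGx : G x ≤ 1/(π/ε+1) * (π/2) := by
    rw [hGdef]
    simp only
    set M := Real.log x with hM
    have hM1 : (1:ℝ) ≤ M := by
      rw [hM]
      calc (1:ℝ) = Real.log (Real.exp 1) := (Real.log_exp 1).symm
        _ ≤ Real.log x := Real.log_le_log (Real.exp_pos 1) hex
    have harc : arctan M ≤ π/2 := (Real.arctan_lt_pi_div_two M).le
    have hterm : M ^ (-(1:ℝ)) ≤ M ^ (-ε) / ε := by
      have s1 : M ^ (-(1:ℝ)) ≤ M ^ (-ε) :=
        Real.rpow_le_rpow_of_exponent_le hM1 (by linarith)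
      have s2 : M ^ (-ε) ≤ M ^ (-ε) / ε := by
        rw [le_div_iff₀ hε0]
        nlinarith [Real.rpow_nonneg (by linarith : (0:ℝ) ≤ M) (-ε)]
      linarith
    apply mul_le_mul_of_nonneg_left _ (by positivity : (0:ℝ) ≤ 1/(π/ε+1))
    linarith
  calc (∫ z in (Real.exp 1)..x, 1 / ((π / ε + 1) * (1 + Real.log z ^ (1 + ε))) / z)
      ≤ ∫ z in (Real.exp 1)..x, g z := hmono
    _ = G x - G (Real.exp 1) := hftc
    _ ≤ 1/(π/ε+1) * (π/2) - 1/(π/ε+1) * (π/4 - 1/ε + 1) := by rw [hGe]; linarith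
    _ = 1/(π/ε+1) * (π/4 + 1/ε - 1) := by ring

lemma int_bound (hε0 : 0 < ε) (hε1 : ε ≤ 1) {x : ℝ} (h1 : 1 ≤ x) :
    (∫ z in (1:ℝ)..x, 1 / ((π / ε + 1) * (1 + Real.log z ^ (1 + ε))) / z)
      ≤ 1/(π/ε+1) * (π/(2*ε)) := by
  have hC : 0 < π / ε + 1 := by positivity
  rcases le_or_gt x (Real.exp 1) with hxe | hxe
  · calc (∫ z in (1:ℝ)..x, 1 / ((π / ε + 1) * (1 + Real.log z ^ (1 + ε))) / z)
        ≤ 1/(π/ε+1) * (π/4) := seg1 hε0 hε1 h1 hxe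
      _ ≤ 1/(π/ε+1) * (π/(2*ε)) := by
          apply mul_le_mul_of_nonneg_left _ (by positivity)
          rw [div_le_div_iff₀ (by norm_num) (by positivity)]
          nlinarith [Real.pi_pos]
  · have he1 : (1:ℝ) ≤ Real.exp 1 := one_lt_e.le
    have hex : Real.exp 1 ≤ x := hxe.le
    have hsplit := integral_add_adjacent_intervals
      (intble_f hε0 le_rfl he1) (intble_f hε0 he1 (le_trans he1 hex))
      (μ := volume)
    have hb1 := seg1 hε0 hε1 he1 le_rfl
    have hb2 := seg2 hε0 hε1 hex
    have hkey : π/2 + 1/ε - 1 ≤ π/(2*ε) := by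
      have hid : π/(2*ε) - (π/2 + 1/ε - 1) = ((π-2)*(1-ε))/(2*ε) := by
        field_simp; ring
      have hnn : 0 ≤ ((π-2)*(1-ε))/(2*ε) :=
        div_nonneg (mul_nonneg (by linarith [Real.pi_gt_three]) (by linarith))
          (by linarith)
      linarith
    calc (∫ z in (1:ℝ)..x, 1 / ((π / ε + 1) * (1 + Real.log z ^ (1 + ε))) / z)
        = (∫ z in (1:ℝ)..(Real.exp 1), 1 / ((π / ε + 1) * (1 + Real.log z ^ (1 + ε))) / z)
          + ∫ z in (Real.exp 1)..x, 1 / ((π / ε + 1) * (1 + Real.log z ^ (1 + ε))) / z :=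
          hsplit.symm
      _ ≤ 1/(π/ε+1) * (π/4) + 1/(π/ε+1) * (π/4 + 1/ε - 1) := add_le_add hb1 hb2
      _ = 1/(π/ε+1) * (π/2 + 1/ε - 1) := by ring
      _ ≤ 1/(π/ε+1) * (π/(2*ε)) := mul_le_mul_of_nonneg_left hkey (by positivity)

/-- The first robustness function of Corollary 1 of the paper:
`ρ(η) = 1/((π/ε + 1)(1 + ln^{1+ε} η))` is non-increasing, `η·ρ(η)` is
non-decreasing, and `ρ` satisfies the robustness condition of Theorem 2
for every `H > 1` and every prediction `uhat ∈ [1,H]`. -/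
theorem first_robustness_function (ε : ℝ) (hε0 : 0 < ε) (hε1 : ε ≤ 1) :
    let ρ : ℝ → ℝ := fun η => 1 / ((π / ε + 1) * (1 + Real.log η ^ (1 + ε)))
    AntitoneOn ρ (Set.Ici 1) ∧
    MonotoneOn (fun η => η * ρ η) (Set.Ici 1) ∧
    (∀ H : ℝ, 1 < H → ∀ uhat ∈ Set.Icc (1:ℝ) H,
      ρ (H / uhat) + (∫ z in (1:ℝ)..uhat, ρ z / z)
        + (∫ z in (1:ℝ)..(H / uhat), ρ z / z) ≤ 1) := by
  intro ρ
  have hC : 0 < π / ε + 1 := by positivity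
  refine ⟨part_a hε0, part_b hε0 hε1, ?_⟩
  intro H hH uhat hu
  obtain ⟨hu1, huH⟩ := hu
  have hu0 : (0:ℝ) < uhat := by linarith
  have hHu1 : (1:ℝ) ≤ H / uhat := (one_le_div hu0).mpr huH
  have hρ : ρ (H / uhat) ≤ 1/(π/ε+1) := by
    show 1 / ((π / ε + 1) * (1 + Real.log (H/uhat) ^ (1 + ε))) ≤ 1/(π/ε+1)
    apply one_div_le_one_div_of_le hC
    have : 0 ≤ Real.log (H/uhat) ^ (1+ε) :=
      Real.rpow_nonneg (Real.log_nonneg hHu1) _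
    nlinarith
  have hi1 := int_bound hε0 hε1 hu1
  have hi2 := int_bound hε0 hε1 hHu1
  have hfin : 1/(π/ε+1) + 1/(π/ε+1) * (π/(2*ε)) + 1/(π/ε+1) * (π/(2*ε)) = 1 := by
    have h2 : 1/(π/ε+1) * (π/ε+1) = 1 := one_div_mul_cancel (ne_of_gt hC)
    calc 1/(π/ε+1) + 1/(π/ε+1) * (π/(2*ε)) + 1/(π/ε+1) * (π/(2*ε))
        = 1/(π/ε+1) * (1 + (π/(2*ε) + π/(2*ε))) := by ring
      _ = 1/(π/ε+1) * (π/ε+1) := by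
          congr 1
          field_simp
          ring
      _ = 1 := h2
  calc ρ (H / uhat) + (∫ z in (1:ℝ)..uhat, ρ z / z)
        + (∫ z in (1:ℝ)..(H / uhat), ρ z / z)
      ≤ 1/(π/ε+1) + 1/(π/ε+1) * (π/(2*ε)) + 1/(π/ε+1) * (π/(2*ε)) :=
        add_le_add (add_le_add hρ hi1) hi2
    _ = 1 := hfin
end

section
/- Let H > 1 and define ρ : [1,H] → ℝ by ρ(η) = 1/((1 + 2·ln(1 + ln H))·(1 + ln η)). Then: (a) ρ is non-increasing on [1,H]; (b) η ↦ η·ρ(η) is non-decreasing on [1,H]; and (c) for every û ∈ [1,H], ρ(H/û) + ∫_1^û ρ(z)/z dz + ∫_1^{H/û} ρ(z)/z dz ≤ 1. -/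
open MeasureTheory intervalIntegral Real

lemma aux_integral (C : ℝ) (hC : 0 < C) (u : ℝ) (hu : 1 ≤ u) :
    ∫ z in (1:ℝ)..u, (1 / (C * (1 + Real.log z))) / z
      = (1 / C) * Real.log (1 + Real.log u) := by
  have key : ∀ x ∈ Set.uIcc (1:ℝ) u,
      HasDerivAt (fun z => (1 / C) * Real.log (1 + Real.log z))
        ((1 / (C * (1 + Real.log x))) / x) x := by
    intro x hx
    rw [Set.uIcc_of_le hu] at hx
    have hx1 : (1:ℝ) ≤ x := hx.1
    have hx0 : (0:ℝ) < x := lt_of_lt_of_le one_pos hx1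
    have hlog : 0 ≤ Real.log x := Real.log_nonneg hx1
    have hden : (0:ℝ) < 1 + Real.log x := by linarith
    have h1 : HasDerivAt (fun z => 1 + Real.log z) x⁻¹ x :=
      (Real.hasDerivAt_log hx0.ne').const_add 1
    have h2 := (h1.log hden.ne').const_mul (1 / C)
    refine h2.congr_deriv ?_
    rw [div_div, one_div (C * (1 + Real.log x) * x), mul_inv, mul_inv]
    ring
  have hcont : ContinuousOn (fun z => (1 / (C * (1 + Real.log z))) / z)
      (Set.uIcc (1:ℝ) u) := by
    rw [Set.uIcc_of_le hu]
    apply ContinuousOn.div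
    · apply ContinuousOn.div continuousOn_const
      · exact continuousOn_const.mul (continuousOn_const.add
          (Real.continuousOn_log.mono (fun z hz => by
            simp only [Set.mem_compl_iff, Set.mem_singleton_iff]
            exact (lt_of_lt_of_le one_pos hz.1).ne')))
      · intro z hz
        have : (0:ℝ) < 1 + Real.log z := by
          have := Real.log_nonneg hz.1; linarith
        positivity
    · exact continuousOn_id
    · intro z hz
      exact (lt_of_lt_of_le one_pos hz.1).ne'
  have := intervalIntegral.integral_eq_sub_of_hasDerivAt key
    (hcont.intervalIntegrable)
  rw [this]
  simp

/-- The second robustness function of Corollary 1 of the paper: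
`ρ(η) = 1/((1 + 2 ln(1 + ln H))(1 + ln η))` is non-increasing on `[1,H]`,
`η·ρ(η)` is non-decreasing on `[1,H]`, and `ρ` satisfies the robustness
condition of Theorem 2 for every prediction `uhat ∈ [1,H]`. -/
theorem second_robustness_function (H : ℝ) (hH : 1 < H) :
    let ρ : ℝ → ℝ := fun η =>
      1 / ((1 + 2 * Real.log (1 + Real.log H)) * (1 + Real.log η))
    AntitoneOn ρ (Set.Icc 1 H) ∧
    MonotoneOn (fun η => η * ρ η) (Set.Icc 1 H) ∧
    (∀ uhat ∈ Set.Icc (1:ℝ) H,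
      ρ (H / uhat) + (∫ z in (1:ℝ)..uhat, ρ z / z)
        + (∫ z in (1:ℝ)..(H / uhat), ρ z / z) ≤ 1) := by
  intro ρ
  have hlogH : 0 < Real.log H := Real.log_pos hH
  have hLLH : 0 < Real.log (1 + Real.log H) := Real.log_pos (by linarith)
  set C : ℝ := 1 + 2 * Real.log (1 + Real.log H) with hCdef
  have hC : 1 < C := by simp only [hCdef]; linarith
  have hC0 : 0 < C := by linarith
  refine ⟨?_, ?_, ?_⟩
  · -- AntitoneOn
    intro a ha b hb hab
    have hla : 0 ≤ Real.log a := Real.log_nonneg ha.1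
    have hlb : 0 ≤ Real.log b := Real.log_nonneg hb.1
    have hlab : Real.log a ≤ Real.log b :=
      Real.log_le_log (lt_of_lt_of_le one_pos ha.1) hab
    have h1 : 0 < C * (1 + Real.log a) := by positivity
    exact one_div_le_one_div_of_le h1 (by nlinarith)
  · -- MonotoneOn
    intro a ha b hb hab
    have ha0 : 0 < a := lt_of_lt_of_le one_pos ha.1
    have hb0 : 0 < b := lt_of_lt_of_le one_pos hb.1
    have hla : 0 ≤ Real.log a := Real.log_nonneg ha.1
    have hlb : 0 ≤ Real.log b := Real.log_nonneg hb.1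
    have hda : 0 < 1 + Real.log a := by linarith
    have hdb : 0 < 1 + Real.log b := by linarith
    -- key: a * (1 + log b) ≤ b * (1 + log a)
    have hlog : Real.log b = Real.log a + Real.log (b / a) := by
      rw [← Real.log_mul ha0.ne' (by positivity)]
      congr 1; field_simp
    have hsub : Real.log (b / a) ≤ b / a - 1 :=
      Real.log_le_sub_one_of_pos (by positivity)
    have key : a * (1 + Real.log b) ≤ b * (1 + Real.log a) := by
      have h1 : a * Real.log (b / a) ≤ b - a := by
        have := mul_le_mul_of_nonneg_left hsub ha0.le
        calc a * Real.log (b/a) ≤ a * (b/a - 1) := this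
          _ = b - a := by field_simp
      nlinarith [mul_le_mul_of_nonneg_right hab hla]
    show a * (1 / (C * (1 + Real.log a))) ≤ b * (1 / (C * (1 + Real.log b)))
    rw [mul_one_div, mul_one_div, div_le_div_iff₀ (by positivity) (by positivity)]
    nlinarith
  · -- robustness condition
    intro u hu
    have hu1 : (1:ℝ) ≤ u := hu.1
    have hu0 : 0 < u := lt_of_lt_of_le one_pos hu1
    have huH : u ≤ H := hu.2
    have hHu1 : (1:ℝ) ≤ H / u := (one_le_div hu0).mpr huH
    have hint1 : (∫ z in (1:ℝ)..u, ρ z / z)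
        = (1 / C) * Real.log (1 + Real.log u) := aux_integral C hC0 u hu1
    have hint2 : (∫ z in (1:ℝ)..(H/u), ρ z / z)
        = (1 / C) * Real.log (1 + Real.log (H/u)) := aux_integral C hC0 _ hHu1
    rw [hint1, hint2]
    set a := Real.log u with ha
    set b := Real.log (H / u) with hb
    have hab : a + b = Real.log H := by
      rw [ha, hb, ← Real.log_mul hu0.ne' (by positivity)]
      congr 1; field_simp
    have ha0 : 0 ≤ a := Real.log_nonneg hu1
    have hb0 : 0 ≤ b := Real.log_nonneg hHu1
    have hrho : ρ (H / u) ≤ 1 / C := by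
      show 1 / (C * (1 + b)) ≤ 1 / C
      apply one_div_le_one_div_of_le hC0
      nlinarith
    have hsum : Real.log (1 + a) + Real.log (1 + b)
        ≤ 2 * Real.log (1 + Real.log H) := by
      rw [← Real.log_mul (by positivity) (by positivity)]
      have h2 : (1 + a) * (1 + b) ≤ (1 + Real.log H) ^ 2 := by
        rw [← hab]; nlinarith
      calc Real.log ((1 + a) * (1 + b))
          ≤ Real.log ((1 + Real.log H) ^ 2) :=
            Real.log_le_log (by positivity) h2
        _ = 2 * Real.log (1 + Real.log H) := by
            rw [Real.log_pow]; push_cast; ring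
    have : ρ (H / u) + (1/C) * Real.log (1+a) + (1/C) * Real.log (1+b)
        ≤ 1/C + (1/C) * (2 * Real.log (1 + Real.log H)) := by
      have h3 : (1/C) * Real.log (1+a) + (1/C) * Real.log (1+b)
          ≤ (1/C) * (2 * Real.log (1 + Real.log H)) := by
        rw [← mul_add]
        exact mul_le_mul_of_nonneg_left hsum (by positivity)
      linarith [hrho]
    calc ρ (H / u) + (1/C) * Real.log (1+a) + (1/C) * Real.log (1+b)
        ≤ 1/C + (1/C) * (2 * Real.log (1 + Real.log H)) := this
      _ = C / C := by rw [hCdef]; ring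
      _ = 1 := div_self hC0.ne'
end
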